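/- arXiv:2508.10969 — 3 statements merged into one kernel-verified Lean document; each statement's English description precedes it below -/
import Mathlib

section
/- For any packed rectangular increasing tableau T of shape r × c on alphabet {1,…,q} for which the q-th power of K-promotion fixes T, every vertex of every promotion digraph prom_i(T) (1 ≤ i ≤ r−1) has indegree at least 1. -/
open Classical

/-- A cell `(row, col)` (0-indexed) of a Young diagram. -/
abbrev Cell : Type := ℕ × ℕ

/-- The cell `c` lies in the Young diagram of the shape `lam`. -/
def inShape (lam : List ℕ) (c : Cell) : Prop := c.2 < lam.getD c.1 0

/-- `lam` is an integer partition (weakly decreasing list of positive parts). -/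
def IsPartition (lam : List ℕ) : Prop :=
  lam.Pairwise (· ≥ ·) ∧ ∀ x ∈ lam, 0 < x

/-- An increasing tableau of shape `lam` with entries in `{1,…,q}`
(rows and columns strictly increase); cells outside the shape carry `0`. -/
structure IncTab (lam : List ℕ) (q : ℕ) where
  entry : Cell → ℕ
  entry_pos : ∀ c, inShape lam c → 1 ≤ entry c
  entry_le : ∀ c, inShape lam c → entry c ≤ q
  row_strict : ∀ i j : ℕ, inShape lam (i, j + 1) → entry (i, j) < entry (i, j + 1)
  col_strict : ∀ i j : ℕ, inShape lam (i + 1, j) → entry (i, j) < entry (i + 1, j)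
  zero_outside : ∀ c, ¬ inShape lam c → entry c = 0

/-- A standard Young tableau: a bijective filling by `1, …, n` where `n = |lam|`. -/
def IsStandard (lam : List ℕ) (n : ℕ) (T : IncTab lam n) : Prop :=
  n = lam.sum ∧ ∀ v, 1 ≤ v → v ≤ n → ∃! c, inShape lam c ∧ T.entry c = v

/-- Every value of `{1,…,q}` appears in the tableau. -/
def Packed (lam : List ℕ) (q : ℕ) (T : IncTab lam q) : Prop :=
  ∀ v, 1 ≤ v → v ≤ q → ∃ c : Cell, inShape lam c ∧ T.entry c = v

/-- During (K-)gromotion, a vacated box is recorded by the value `0` (a "bullet"). -/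
def isBullet (lam : List ℕ) (f : Cell → ℕ) (c : Cell) : Prop :=
  inShape lam c ∧ f c = 0

/-- `c` carries value `v` and is adjacent (on its left or above) to a bullet box. -/
def inC (lam : List ℕ) (f : Cell → ℕ) (v : ℕ) (c : Cell) : Prop :=
  inShape lam c ∧ f c = v ∧
    ((1 ≤ c.2 ∧ isBullet lam f (c.1, c.2 - 1)) ∨ (1 ≤ c.1 ∧ isBullet lam f (c.1 - 1, c.2)))

/-- One K-jeu-de-taquin substep: simultaneously all boxes with value `v` adjacent to a
bullet become bullets, and the bullets adjacent to them receive value `v`. -/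
noncomputable def substep (lam : List ℕ) (v : ℕ) (f : Cell → ℕ) : Cell → ℕ :=
  fun c =>
    if inC lam f v c then 0
    else if isBullet lam f c ∧ (inC lam f v (c.1, c.2 + 1) ∨ inC lam f v (c.1 + 1, c.2)) then v
    else f c

/-- The `j`-th value of the cyclically shifted alphabet `(α < α+1 < … < q < 1 < … < α-1)`. -/
def cyc (q α j : ℕ) : ℕ := (α - 1 + j) % q + 1

/-- State of the gromotion slide (at stage `α` of the alphabet cycle) after `j` substeps;
the base case deletes the minimal letter `α` from the upper-left corner. -/
noncomputable def iterSub (lam : List ℕ) (q α : ℕ) (f : Cell → ℕ) : ℕ → Cell → ℕ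
  | 0 => fun c => if c = ((0, 0) : Cell) ∧ f c = α then 0 else f c
  | j + 1 => substep lam (cyc q α (j + 1)) (iterSub lam q α f j)

/-- One application of (K-)gromotion at stage `α`: slide, then fill the vacated boxes
with the removed letter `α` (now maximal in the cycled alphabet). -/
noncomputable def gromote (lam : List ℕ) (q α : ℕ) (f : Cell → ℕ) : Cell → ℕ :=
  fun c =>
    if inShape lam c ∧ iterSub lam q α f (q - 1) c = 0 then α
    else iterSub lam q α f (q - 1) c

/-- The `k`-th iterate of (K-)gromotion (stages cycle through `1, …, q`). -/
noncomputable def gromIter (lam : List ℕ) (q : ℕ) (f : Cell → ℕ) : ℕ → Cell → ℕ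
  | 0 => f
  | k + 1 => gromote lam q (k % q + 1) (gromIter lam q f k)

/-- In state `f`, the value `v` is about to move from row `i+1` to row `i` (1-indexed):
a bullet in (1-indexed) row `i` has the box below it about to slide up with value `v`. -/
def moveAt (lam : List ℕ) (f : Cell → ℕ) (v i : ℕ) : Prop :=
  ∃ c : Cell, isBullet lam f c ∧ c.1 + 1 = i ∧ inC lam f v (c.1 + 1, c.2)

/-- Edge `α → β` of the `i`-th promotion digraph `prom_i(T)`:
during the `α`-th application of (K-)gromotion, value `β` moves from row `i+1` to row `i`. -/
def promEdge (lam : List ℕ) (q i : ℕ) (T : IncTab lam q) (α β : ℕ) : Prop :=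
  1 ≤ α ∧ α ≤ q ∧
  ∃ j : ℕ, j + 1 ≤ q - 1 ∧ cyc q α (j + 1) = β ∧
    moveAt lam (iterSub lam q α (gromIter lam q T.entry (α - 1)) j) β i

/-- (K-)promotion: gromotion at stage `1` followed by the relabeling `v ↦ v - 1`,
with the removed letter (temporarily `1`) becoming `q`. -/
noncomputable def kpromote (lam : List ℕ) (q : ℕ) (f : Cell → ℕ) : Cell → ℕ :=
  fun c =>
    if inShape lam c then
      (if gromote lam q 1 f c = 1 then q else gromote lam q 1 f c - 1)
    else 0

/-- Value `v` appears in (1-indexed) row `r` of the filling `f`. -/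
def appearsRow (lam : List ℕ) (f : Cell → ℕ) (r v : ℕ) : Prop :=
  1 ≤ r ∧ ∃ j : ℕ, inShape lam (r - 1, j) ∧ f (r - 1, j) = v

/-- The letter of the lattice word at position `v`: the set of (1-indexed) rows
containing value `v`. -/
def rowSetW (lam : List ℕ) (f : Cell → ℕ) (v : ℕ) : Set ℕ :=
  {r | appearsRow lam f r v}

/-- For a standard filling: the (1-indexed) row containing value `v`. -/
noncomputable def latticeRow (lam : List ℕ) (f : Cell → ℕ) (v : ℕ) : ℕ :=
  sInf {r | appearsRow lam f r v}

/-- Number of occurrences of letter `r` among the first `j` letters of the lattice word: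
the number of values `v ≤ j` appearing in row `r`. -/
noncomputable def cnt (lam : List ℕ) (f : Cell → ℕ) (r j : ℕ) : ℕ :=
  ((Finset.Icc 1 j).filter fun v => appearsRow lam f r v).card

/-- `j` is a (1-)balance point of the lattice word of a two-row filling. -/
def isBalance (lam : List ℕ) (f : Cell → ℕ) (j : ℕ) : Prop :=
  cnt lam f 1 j = cnt lam f 2 j

/-- `j` is a (1-)teetering point of the lattice word of a two-row filling. -/
def isTeeter (lam : List ℕ) (f : Cell → ℕ) (j : ℕ) : Prop :=
  appearsRow lam f 1 j ∧ appearsRow lam f 2 j ∧ cnt lam f 1 j = cnt lam f 2 j + 1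

/-- A noncrossing perfect matching of `{1,…,n}`, as a symmetric relation. -/
def IsNCMatching (n : ℕ) (M : ℕ → ℕ → Prop) : Prop :=
  (∀ a b, M a b → 1 ≤ a ∧ a ≤ n ∧ 1 ≤ b ∧ b ≤ n ∧ a ≠ b) ∧
  (∀ a b, M a b → M b a) ∧
  (∀ a, 1 ≤ a → a ≤ n → ∃! b, M a b) ∧
  (∀ a b x y, M a x → M b y → ¬ (a < b ∧ b < x ∧ x < y))

/-- Number of occurrences of letter `r` among positions `a, …, b` of the lattice word
of a standard two-row filling. -/
noncomputable def letterCnt (lam : List ℕ) (f : Cell → ℕ) (r a b : ℕ) : ℕ :=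
  ((Finset.Icc a b).filter fun p => latticeRow lam f p = r).card

/-- Positions `a < b` are matched in the noncrossing matching of the lattice word:
`w_a = 1`, `w_b = 2`, the interval `[a,b]` is balanced, and every proper prefix of it
has strictly more `1`s than `2`s (i.e. `b` is the nearest available `2` for `a`). -/
def matchRel (lam : List ℕ) (f : Cell → ℕ) (a b : ℕ) : Prop :=
  a < b ∧ latticeRow lam f a = 1 ∧ latticeRow lam f b = 2 ∧
  letterCnt lam f 1 a b = letterCnt lam f 2 a b ∧
  ∀ m, a ≤ m → m < b → letterCnt lam f 2 a m < letterCnt lam f 1 a m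

/-- The (symmetrized) noncrossing matching associated to a two-row standard filling. -/
def symMatch (lam : List ℕ) (f : Cell → ℕ) (a b : ℕ) : Prop :=
  matchRel lam f a b ∨ matchRel lam f b a

/-- A noncrossing set partition of `{1,…,q}`, encoded by its "same block" relation. -/
def IsNCPartition (q : ℕ) (R : ℕ → ℕ → Prop) : Prop :=
  (∀ a b, R a b → 1 ≤ a ∧ a ≤ q ∧ 1 ≤ b ∧ b ≤ q) ∧
  (∀ a, 1 ≤ a → a ≤ q → R a a) ∧
  (∀ a b, R a b → R b a) ∧
  (∀ a b c, R a b → R b c → R a c) ∧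
  (∀ a b x y, a < x → x < b → b < y → R a b → R x y → R a x)

/-- The defining compatibility between a two-row increasing tableau (given by its
filling `f`) and its noncrossing set partition `R` (Pechenik): singleton blocks are
the absent values; least elements of nontrivial blocks are the values appearing only
in the top row; greatest elements are the values appearing only in the bottom row;
middle elements are the values appearing in both rows. -/
def BlockCompat (lam : List ℕ) (q : ℕ) (f : Cell → ℕ) (R : ℕ → ℕ → Prop) : Prop :=
  ∀ v, 1 ≤ v → v ≤ q →
    ((∀ u, R v u → u = v) ↔ ¬ ∃ c : Cell, inShape lam c ∧ f c = v) ∧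
    (((∃ u, R v u ∧ v < u) ∧ ∀ u, R v u → v ≤ u) ↔
      (appearsRow lam f 1 v ∧ ¬ appearsRow lam f 2 v)) ∧
    (((∃ u, R v u ∧ u < v) ∧ ∀ u, R v u → u ≤ v) ↔
      (appearsRow lam f 2 v ∧ ¬ appearsRow lam f 1 v)) ∧
    (((∃ u, R v u ∧ u < v) ∧ (∃ u, R v u ∧ v < u)) ↔
      (appearsRow lam f 1 v ∧ appearsRow lam f 2 v))



namespace Aux12

/-- shorthand for rectangular shape list -/
abbrev L (r c : ℕ) : List ℕ := List.replicate r c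

lemma replicate_getD (r c a : ℕ) : (List.replicate r c).getD a 0 = if a < r then c else 0 := by
  induction r generalizing a with
  | zero => simp
  | succ n ih =>
    cases a with
    | zero => simp [List.replicate]
    | succ a => simpa [List.replicate, Nat.succ_lt_succ_iff] using ih a

lemma inShape_rect {r c : ℕ} (x : Cell) :
    inShape (L r c) x ↔ x.1 < r ∧ x.2 < c := by
  unfold inShape
  rw [replicate_getD]
  split_ifs with h <;> omega

/-- packed increasing rectangular filling -/
def Good (r c q : ℕ) (f : Cell → ℕ) : Prop :=
  (∀ x : Cell, ¬ inShape (L r c) x → f x = 0) ∧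
  (∀ x : Cell, inShape (L r c) x → 1 ≤ f x ∧ f x ≤ q) ∧
  (∀ x y : Cell, inShape (L r c) x → inShape (L r c) y → x.1 ≤ y.1 → x.2 ≤ y.2 →
      x ≠ y → f x < f y) ∧
  (∀ v, 1 ≤ v → v ≤ q → ∃ x : Cell, inShape (L r c) x ∧ f x = v)

lemma good_entry {r c q : ℕ} (T : IncTab (L r c) q) (hp : Packed (L r c) q T) :
    Good r c q T.entry := by
  refine ⟨T.zero_outside, fun x hx => ⟨T.entry_pos x hx, T.entry_le x hx⟩, ?_, hp⟩
  -- strict monotonicity along rows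
  have row : ∀ a b d : ℕ, inShape (L r c) (a, b + d + 1) →
      T.entry (a, b) < T.entry (a, b + d + 1) := by
    intro a b d
    induction d with
    | zero => intro h; exact T.row_strict a b h
    | succ d ih =>
      intro h
      have h' : inShape (L r c) (a, b + d + 1) := by
        rw [inShape_rect] at h ⊢; simp at h ⊢; omega
      exact lt_trans (ih h') (T.row_strict a (b + d + 1) h)
  have col : ∀ a b d : ℕ, inShape (L r c) (a + d + 1, b) →
      T.entry (a, b) < T.entry (a + d + 1, b) := by
    intro a b d
    induction d with
    | zero => intro h; exact T.col_strict a b h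
    | succ d ih =>
      intro h
      have h' : inShape (L r c) (a + d + 1, b) := by
        rw [inShape_rect] at h ⊢; simp at h ⊢; omega
      exact lt_trans (ih h') (T.col_strict (a + d + 1) b h)
  rintro ⟨a, b⟩ ⟨a', b'⟩ hx hy h1 h2 hne
  simp only at h1 h2
  rw [inShape_rect] at hx hy
  simp only at hx hy
  rcases Nat.lt_or_ge a a' with ha | ha
  · -- go right then down
    have hmid : inShape (L r c) (a, b') := by rw [inShape_rect]; exact ⟨hx.1, hy.2⟩
    have step2 : T.entry (a, b') < T.entry (a', b') := by
      obtain ⟨d, hd⟩ : ∃ d, a' = a + d + 1 := ⟨a' - a - 1, by omega⟩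
      subst hd
      exact col a b' d (by rw [inShape_rect]; exact ⟨hy.1, hy.2⟩)
    rcases Nat.lt_or_ge b b' with hb | hb
    · obtain ⟨d, hd⟩ : ∃ d, b' = b + d + 1 := ⟨b' - b - 1, by omega⟩
      subst hd
      exact lt_trans (row a b d hmid) step2
    · have : b = b' := le_antisymm h2 hb
      subst this
      exact step2
  · have haa : a = a' := le_antisymm h1 ha
    subst haa
    have hb : b < b' := by
      rcases Nat.lt_or_ge b b' with hb | hb
      · exact hb
      · exact absurd rfl (by have : b = b' := le_antisymm h2 hb; subst this; exact hne)
    obtain ⟨d, hd⟩ : ∃ d, b' = b + d + 1 := ⟨b' - b - 1, by omega⟩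
    subst hd
    exact row a b d (by rw [inShape_rect]; exact ⟨hy.1, hy.2⟩)

/-- value 1 sits at the origin -/
lemma good_one {r c q : ℕ} (hr : 1 ≤ r) (hc : 1 ≤ c) (hq : 1 ≤ q) {f : Cell → ℕ}
    (hg : Good r c q f) : f (0, 0) = 1 := by
  obtain ⟨x, hx, hx1⟩ := hg.2.2.2 1 le_rfl hq
  by_cases h : x = ((0,0) : Cell)
  · rw [h] at hx1; exact hx1
  · have h0 : inShape (L r c) ((0,0) : Cell) := by rw [inShape_rect]; exact ⟨hr, hc⟩
    have := hg.2.2.1 (0,0) x h0 hx (Nat.zero_le _) (Nat.zero_le _) (Ne.symm h)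
    have := (hg.2.1 (0,0) h0).1
    omega

/-- value q sits exactly at the bottom-right corner -/
lemma good_corner {r c q : ℕ} (hr : 1 ≤ r) (hc : 1 ≤ c) {f : Cell → ℕ}
    (hg : Good r c q f) (x : Cell) :
    (inShape (L r c) x ∧ f x = q) ↔ x = ((r-1, c-1) : Cell) := by
  obtain ⟨y, hy, hyq⟩ := hg.2.2.2 q (by
    have h0 : inShape (L r c) ((0,0) : Cell) := by rw [inShape_rect]; exact ⟨hr, hc⟩
    have := (hg.2.1 (0,0) h0)
    omega) le_rfl
  have hcorn : inShape (L r c) ((r-1, c-1) : Cell) := by rw [inShape_rect]; constructor <;> (simp; omega)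
  have hyc : y = ((r-1, c-1) : Cell) := by
    by_contra hne
    have h1 : y.1 ≤ r - 1 := by have := (inShape_rect y).1 hy; omega
    have h2 : y.2 ≤ c - 1 := by have := (inShape_rect y).1 hy; omega
    have := hg.2.2.1 y (r-1, c-1) hy hcorn h1 h2 hne
    have := (hg.2.1 (r-1,c-1) hcorn).2
    omega
  constructor
  · rintro ⟨hx, hxq⟩
    by_contra hne
    have h1 : x.1 ≤ r - 1 := by have := (inShape_rect x).1 hx; omega
    have h2 : x.2 ≤ c - 1 := by have := (inShape_rect x).1 hx; omega
    have := hg.2.2.1 x (r-1, c-1) hx hcorn h1 h2 hne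
    have := (hg.2.1 (r-1,c-1) hcorn).2
    omega
  · rintro rfl
    exact ⟨hcorn, by rw [hyc] at hyq; exact hyq⟩


/-! ### Substep case analysis -/

lemma substep_of_inC {lam : List ℕ} {w : ℕ} {g : Cell → ℕ} {x : Cell}
    (h : inC lam g w x) : substep lam w g x = 0 := by
  unfold substep; rw [if_pos h]

lemma substep_of_fill {lam : List ℕ} {w : ℕ} {g : Cell → ℕ} {x : Cell}
    (h1 : ¬ inC lam g w x)
    (h2 : isBullet lam g x ∧ (inC lam g w (x.1, x.2 + 1) ∨ inC lam g w (x.1 + 1, x.2))) :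
    substep lam w g x = w := by
  unfold substep; rw [if_neg h1, if_pos h2]

lemma substep_of_stay {lam : List ℕ} {w : ℕ} {g : Cell → ℕ} {x : Cell}
    (h1 : ¬ inC lam g w x)
    (h2 : ¬ (isBullet lam g x ∧ (inC lam g w (x.1, x.2 + 1) ∨ inC lam g w (x.1 + 1, x.2)))) :
    substep lam w g x = g x := by
  unfold substep; rw [if_neg h1, if_neg h2]

lemma substep_cases (lam : List ℕ) (w : ℕ) (g : Cell → ℕ) (x : Cell) :
    (inC lam g w x ∧ substep lam w g x = 0) ∨
    (¬ inC lam g w x ∧ isBullet lam g x ∧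
      (inC lam g w (x.1, x.2 + 1) ∨ inC lam g w (x.1 + 1, x.2)) ∧ substep lam w g x = w) ∨
    (¬ inC lam g w x ∧
      ¬ (isBullet lam g x ∧ (inC lam g w (x.1, x.2 + 1) ∨ inC lam g w (x.1 + 1, x.2))) ∧
      substep lam w g x = g x) := by
  by_cases h1 : inC lam g w x
  · exact Or.inl ⟨h1, substep_of_inC h1⟩
  · by_cases h2 : isBullet lam g x ∧
        (inC lam g w (x.1, x.2 + 1) ∨ inC lam g w (x.1 + 1, x.2))
    · exact Or.inr (Or.inl ⟨h1, h2.1, h2.2, substep_of_fill h1 h2⟩)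
    · exact Or.inr (Or.inr ⟨h1, h2, substep_of_stay h1 h2⟩)

/-! ### The slide invariant -/

structure Inv (r c q j : ℕ) (f g : Cell → ℕ) : Prop where
  outside : ∀ x : Cell, ¬ inShape (L r c) x → g x = 0
  bnd : ∀ x : Cell, inShape (L r c) x → g x ≤ q ∧ g x ≠ 1
  frozen : ∀ x : Cell, inShape (L r c) x → j + 2 ≤ f x → g x = f x
  anti : ∀ b b' : Cell, inShape (L r c) b → inShape (L r c) b' → g b = 0 → g b' = 0 →
    b.1 ≤ b'.1 → b.2 ≤ b'.2 → b = b'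
  dom : ∀ b x : Cell, inShape (L r c) b → inShape (L r c) x → g b = 0 → g x ≠ 0 →
    b.1 ≤ x.1 → b.2 ≤ x.2 → b ≠ x → j + 2 ≤ g x
  mono : ∀ x y : Cell, inShape (L r c) x → inShape (L r c) y → g x ≠ 0 → g y ≠ 0 →
    x.1 ≤ y.1 → x.2 ≤ y.2 → x ≠ y → g x < g y
  pack : ∀ w, 2 ≤ w → w ≤ j + 1 → ∃ x : Cell, inShape (L r c) x ∧ g x = w
  bull : ∃ b : Cell, inShape (L r c) b ∧ g b = 0
  front : ∀ x b : Cell, inShape (L r c) x → inShape (L r c) b → g b = 0 → g x ≠ 0 →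
    x.1 ≤ b.1 → x.2 ≤ b.2 → x ≠ b → g x ≤ j + 1

/-- Walk lemma: a cell with the current letter that weakly dominates a bullet must be
adjacent (below or right) to it. -/
lemma inv_adj {r c q j : ℕ} {f g : Cell → ℕ} (hI : Inv r c q j f g) {b x : Cell}
    (hb : inShape (L r c) b) (hx : inShape (L r c) x) (hgb : g b = 0) (hgx : g x = j + 2)
    (h1 : b.1 ≤ x.1) (h2 : b.2 ≤ x.2) (hne : b ≠ x) :
    (x.1 = b.1 + 1 ∧ x.2 = b.2) ∨ (x.1 = b.1 ∧ x.2 = b.2 + 1) := by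
  have hgx0 : g x ≠ 0 := by omega
  by_cases hb1 : b.1 < x.1
  · set y : Cell := (b.1 + 1, b.2) with hy
    have hyS : inShape (L r c) y := by
      rw [inShape_rect] at hx ⊢
      exact ⟨by simp [hy]; omega, by simp [hy]; omega⟩
    by_cases hxy : y = x
    · left; rw [← hxy]; exact ⟨rfl, rfl⟩
    · by_cases hy0 : g y = 0
      · have := hI.anti b y hb hyS hgb hy0 (by simp [hy]) (by simp [hy])
        exact absurd this (by simp only [hy, ne_eq, Prod.ext_iff]; omega)
      · have hd := hI.dom b y hb hyS hgb hy0 (by simp [hy]) (by simp [hy])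
          (by simp only [hy, ne_eq, Prod.ext_iff]; omega)
        have hm := hI.mono y x hyS hx hy0 hgx0 (by simp [hy]; omega) (by simp [hy]; omega) hxy
        omega
  · have hb1' : b.1 = x.1 := by omega
    have hb2 : b.2 < x.2 := by
      rcases Nat.lt_or_ge b.2 x.2 with h | h
      · exact h
      · exact absurd (Prod.ext hb1' (by omega)) hne
    set y : Cell := (b.1, b.2 + 1) with hy
    have hyS : inShape (L r c) y := by
      rw [inShape_rect] at hx ⊢
      exact ⟨by simp [hy]; omega, by simp [hy]; omega⟩
    by_cases hxy : y = x
    · right; rw [← hxy]; exact ⟨hb1'.symm ▸ rfl, rfl⟩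
    · by_cases hy0 : g y = 0
      · have := hI.anti b y hb hyS hgb hy0 (by simp [hy]) (by simp [hy])
        exact absurd this (by simp only [hy, ne_eq, Prod.ext_iff]; omega)
      · have hd := hI.dom b y hb hyS hgb hy0 (by simp [hy]) (by simp [hy])
          (by simp only [hy, ne_eq, Prod.ext_iff]; omega)
        have hm := hI.mono y x hyS hx hy0 hgx0 (by simp [hy]; omega) (by simp [hy]; omega) hxy
        omega

/-- Key dominance lemma: a non-bullet, non-active cell dominating a bullet carries a
value at least `j+3`. -/
lemma inv_dom' {r c q j : ℕ} {f g : Cell → ℕ} (hI : Inv r c q j f g) {b x : Cell}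
    (hb : inShape (L r c) b) (hx : inShape (L r c) x) (hgb : g b = 0) (hgx : g x ≠ 0)
    (h1 : b.1 ≤ x.1) (h2 : b.2 ≤ x.2) (hne : b ≠ x)
    (hnC : ¬ inC (L r c) g (j + 2) x) : j + 3 ≤ g x := by
  have hd := hI.dom b x hb hx hgb hgx h1 h2 hne
  by_contra hlt
  have hgx2 : g x = j + 2 := by omega
  rcases inv_adj hI hb hx hgb hgx2 h1 h2 hne with ⟨e1, e2⟩ | ⟨e1, e2⟩
  · exact hnC ⟨hx, hgx2, Or.inr ⟨by omega, by
      have : (x.1 - 1, x.2) = b := by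
        apply Prod.ext <;> simp <;> omega
      rw [this]; exact ⟨hb, hgb⟩⟩⟩
  · exact hnC ⟨hx, hgx2, Or.inl ⟨by omega, by
      have : (x.1, x.2 - 1) = b := by
        apply Prod.ext <;> simp <;> omega
      rw [this]; exact ⟨hb, hgb⟩⟩⟩


lemma inv_step {r c q j : ℕ} {f g : Cell → ℕ} (hq : 1 ≤ q) (hGf : Good r c q f)
    (hI : Inv r c q j f g) (hj : j + 1 ≤ q - 1) :
    Inv r c q (j + 1) f (substep (L r c) (j + 2) g) := by
  have hwq : j + 2 ≤ q := by omega
  set g' := substep (L r c) (j + 2) g with hg'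
  have bull' : ∀ x : Cell, inShape (L r c) x → g' x = 0 →
      inC (L r c) g (j + 2) x ∨ (g x = 0 ∧
        ¬ (inC (L r c) g (j + 2) (x.1, x.2 + 1) ∨ inC (L r c) g (j + 2) (x.1 + 1, x.2))) := by
    intro x hx h0
    rcases substep_cases (L r c) (j + 2) g x with ⟨h1, he⟩ | ⟨h1, h2, h3, he⟩ | ⟨h1, h2, he⟩ <;>
      rw [← hg'] at he
    · exact Or.inl h1
    · rw [h0] at he; omega
    · refine Or.inr ⟨he.symm.trans h0, fun hd => h2 ⟨⟨hx, he.symm.trans h0⟩, hd⟩⟩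
  have inCbull : ∀ x : Cell, inC (L r c) g (j + 2) x → ∃ p : Cell,
      inShape (L r c) p ∧ g p = 0 ∧ p.1 ≤ x.1 ∧ p.2 ≤ x.2 ∧ p.1 + p.2 + 1 = x.1 + x.2 := by
    rintro x ⟨hx, hgx, hadj⟩
    rcases hadj with ⟨h1, hb⟩ | ⟨h1, hb⟩
    · exact ⟨(x.1, x.2 - 1), hb.1, hb.2, by simp, by simp <;> omega, by simp <;> omega⟩
    · exact ⟨(x.1 - 1, x.2), hb.1, hb.2, by simp <;> omega, by simp, by simp <;> omega⟩
  constructor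
  -- outside
  · intro x hx
    have h1 : ¬ inC (L r c) g (j + 2) x := fun h => hx h.1
    have h2 : ¬ (isBullet (L r c) g x ∧
        (inC (L r c) g (j + 2) (x.1, x.2 + 1) ∨ inC (L r c) g (j + 2) (x.1 + 1, x.2))) :=
      fun h => hx h.1.1
    rw [hg', substep_of_stay h1 h2]
    exact hI.outside x hx
  -- bnd
  · intro x hx
    rcases substep_cases (L r c) (j + 2) g x with ⟨h1, he⟩ | ⟨h1, h2, h3, he⟩ | ⟨h1, h2, he⟩ <;>
      rw [hg', he]
    · omega
    · omega
    · exact hI.bnd x hx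
  -- frozen
  · intro x hx hfx
    have hgx := hI.frozen x hx (by omega)
    have h1 : ¬ inC (L r c) g (j + 2) x := by intro h; have := h.2.1; omega
    have h2 : ¬ (isBullet (L r c) g x ∧
        (inC (L r c) g (j + 2) (x.1, x.2 + 1) ∨ inC (L r c) g (j + 2) (x.1 + 1, x.2))) := by
      intro h; have := h.1.2; omega
    rw [hg', substep_of_stay h1 h2, hgx]
  -- anti
  · intro b b' hbS hb'S h0 h0' hle1 hle2
    rcases bull' b hbS h0 with hbC | ⟨hb0, hbNF⟩ <;>
      rcases bull' b' hb'S h0' with hbC' | ⟨hb0', hbNF'⟩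
    · have e1 := hbC.2.1
      have e2 := hbC'.2.1
      by_contra hne
      have := hI.mono b b' hbS hb'S (by omega) (by omega) hle1 hle2 hne
      omega
    · exfalso
      obtain ⟨p, hpS, hp0, hp1, hp2, hps⟩ := inCbull b hbC
      have heq := hI.anti p b' hpS hb'S hp0 hb0' (by omega) (by omega)
      have hco1 : p.1 = b'.1 := by rw [heq]
      have hco2 : p.2 = b'.2 := by rw [heq]
      omega
    · have e2 := hbC'.2.1
      by_cases hne : b = b'
      · exact hne
      · exfalso
        rcases inv_adj hI hbS hb'S hb0 e2 hle1 hle2 hne with ⟨a1, a2⟩ | ⟨a1, a2⟩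
        · apply hbNF; right
          have hpe : (b.1 + 1, b.2) = b' := by apply Prod.ext <;> simp <;> omega
          rw [hpe]; exact hbC'
        · apply hbNF; left
          have hpe : (b.1, b.2 + 1) = b' := by apply Prod.ext <;> simp <;> omega
          rw [hpe]; exact hbC'
    · exact hI.anti b b' hbS hb'S hb0 hb0' hle1 hle2
  -- dom
  · intro b x hbS hxS h0 hx0 hle1 hle2 hne
    rcases substep_cases (L r c) (j + 2) g x with ⟨hC, he⟩ | ⟨hnC, hbx, hfc, he⟩ |
        ⟨hnC, hst, he⟩ <;> rw [← hg'] at he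
    · exact absurd he hx0
    · exfalso
      have hxb : g x = 0 := hbx.2
      rcases bull' b hbS h0 with hbC | ⟨hb0, hbNF⟩
      · obtain ⟨p, hpS, hp0, hp1, hp2, hps⟩ := inCbull b hbC
        have heq := hI.anti p x hpS hxS hp0 hxb (by omega) (by omega)
        have hco1 : p.1 = x.1 := by rw [heq]
        have hco2 : p.2 = x.2 := by rw [heq]
        omega
      · exact hne (hI.anti b x hbS hxS hb0 hxb hle1 hle2)
    · rw [he] at hx0 ⊢
      rcases bull' b hbS h0 with hbC | ⟨hb0, hbNF⟩
      · obtain ⟨p, hpS, hp0, hp1, hp2, hps⟩ := inCbull b hbC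
        have hpx : p ≠ x := fun hpe => hx0 (by rw [← hpe]; exact hp0)
        have := inv_dom' hI hpS hxS hp0 hx0 (by omega) (by omega) hpx hnC
        omega
      · have := inv_dom' hI hbS hxS hb0 hx0 hle1 hle2 hne hnC
        omega
  -- mono
  · intro x y hxS hyS hx0 hy0 hle1 hle2 hne
    rcases substep_cases (L r c) (j + 2) g x with ⟨hCx, hex⟩ | ⟨hnCx, hbx, hfcx, hex⟩ |
        ⟨hnCx, hnFx, hex⟩ <;> rw [← hg'] at hex
    · exact absurd hex hx0
    · rcases substep_cases (L r c) (j + 2) g y with ⟨hCy, hey⟩ | ⟨hnCy, hby, hfcy, hey⟩ |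
          ⟨hnCy, hnFy, hey⟩ <;> rw [← hg'] at hey
      · exact absurd hey hy0
      · exact absurd (hI.anti x y hxS hyS hbx.2 hby.2 hle1 hle2) hne
      · rw [hex, hey]
        rw [hey] at hy0
        have := inv_dom' hI hxS hyS hbx.2 hy0 hle1 hle2 hne hnCy
        omega
    · rcases substep_cases (L r c) (j + 2) g y with ⟨hCy, hey⟩ | ⟨hnCy, hby, hfcy, hey⟩ |
          ⟨hnCy, hnFy, hey⟩ <;> rw [← hg'] at hey
      · exact absurd hey hy0
      · rw [hex, hey]
        rw [hex] at hx0
        have := hI.front x y hxS hyS hby.2 hx0 hle1 hle2 hne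
        omega
      · rw [hex, hey]
        rw [hex] at hx0
        rw [hey] at hy0
        exact hI.mono x y hxS hyS hx0 hy0 hle1 hle2 hne
  -- pack
  · intro w' h2w hlew
    by_cases hw' : w' ≤ j + 1
    · obtain ⟨x, hxS, hgx⟩ := hI.pack w' h2w hw'
      have hnC : ¬ inC (L r c) g (j + 2) x := by intro h; have := h.2.1; omega
      have hnF : ¬ (isBullet (L r c) g x ∧
          (inC (L r c) g (j + 2) (x.1, x.2 + 1) ∨ inC (L r c) g (j + 2) (x.1 + 1, x.2))) := by
        intro h; have := h.1.2; omega
      exact ⟨x, hxS, by rw [hg', substep_of_stay hnC hnF, hgx]⟩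
    · have hw'' : w' = j + 2 := by omega
      subst hw''
      obtain ⟨y, hyS, hfy⟩ := hGf.2.2.2 (j + 2) (by omega) hwq
      have hgy : g y = j + 2 := by rw [hI.frozen y hyS (by omega), hfy]
      by_cases hC : inC (L r c) g (j + 2) y
      · obtain ⟨hyS', hgy', hadj⟩ := hC
        rcases hadj with ⟨h1, hb⟩ | ⟨h1, hb⟩
        · refine ⟨(y.1, y.2 - 1), hb.1, ?_⟩
          rw [hg', substep_of_fill]
          · intro h; have := h.2.1; rw [hb.2] at this; omega
          · refine ⟨hb, Or.inl ?_⟩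
            have hpe : ((y.1, y.2 - 1).1, (y.1, y.2 - 1).2 + 1) = y := by
              apply Prod.ext <;> simp <;> omega
            rw [hpe]; exact ⟨hyS', hgy', Or.inl ⟨h1, hb⟩⟩
        · refine ⟨(y.1 - 1, y.2), hb.1, ?_⟩
          rw [hg', substep_of_fill]
          · intro h; have := h.2.1; rw [hb.2] at this; omega
          · refine ⟨hb, Or.inr ?_⟩
            have hpe : ((y.1 - 1, y.2).1 + 1, (y.1 - 1, y.2).2) = y := by
              apply Prod.ext <;> simp <;> omega
            rw [hpe]; exact ⟨hyS', hgy', Or.inr ⟨h1, hb⟩⟩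
      · refine ⟨y, hyS, ?_⟩
        rw [hg', substep_of_stay hC (by intro h; have := h.1.2; omega), hgy]
  -- bull
  · obtain ⟨b, hbS, hb0⟩ := hI.bull
    by_cases hF : inC (L r c) g (j + 2) (b.1, b.2 + 1) ∨ inC (L r c) g (j + 2) (b.1 + 1, b.2)
    · rcases hF with h | h
      · exact ⟨(b.1, b.2 + 1), h.1, by rw [hg', substep_of_inC h]⟩
      · exact ⟨(b.1 + 1, b.2), h.1, by rw [hg', substep_of_inC h]⟩
    · exact ⟨b, hbS, by
        rw [hg', substep_of_stay (by intro h; have := h.2.1; omega) (fun h => hF h.2), hb0]⟩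
  -- front
  · intro x b hxS hbS hb0' hx0' hle1 hle2 hne
    rcases substep_cases (L r c) (j + 2) g x with ⟨hCx, hex⟩ | ⟨hnCx, hbx, hfcx, hex⟩ |
        ⟨hnCx, hnFx, hex⟩ <;> rw [← hg'] at hex
    · exact absurd hex hx0'
    · rw [hex]
    · rw [hex]
      rw [hex] at hx0'
      rcases bull' b hbS hb0' with hbC | ⟨hb0, _⟩
      · have := hI.mono x b hxS hbS hx0' (by have := hbC.2.1; omega) hle1 hle2 hne
        have := hbC.2.1
        omega
      · have := hI.front x b hxS hbS hb0 hx0' hle1 hle2 hne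
        omega


lemma inv_base {r c q : ℕ} {f : Cell → ℕ} (hr : 1 ≤ r) (hc : 1 ≤ c) (hq : 1 ≤ q)
    (hGf : Good r c q f) : Inv r c q 0 f (iterSub (L r c) q 1 f 0) := by
  have h00 : inShape (L r c) ((0, 0) : Cell) := by rw [inShape_rect]; exact ⟨hr, hc⟩
  have hf0 : f (0, 0) = 1 := good_one hr hc hq hGf
  have hS : ∀ x : Cell, iterSub (L r c) q 1 f 0 x =
      if x = ((0, 0) : Cell) then 0 else f x := by
    intro x
    show (if x = ((0, 0) : Cell) ∧ f x = 1 then 0 else f x) = _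
    by_cases h : x = ((0, 0) : Cell)
    · rw [if_pos ⟨h, by rw [h]; exact hf0⟩, if_pos h]
    · rw [if_neg (fun hh => h hh.1), if_neg h]
  have hgt : ∀ x : Cell, inShape (L r c) x → x ≠ ((0, 0) : Cell) → 1 < f x := by
    intro x hx hne
    have := hGf.2.2.1 (0, 0) x h00 hx (Nat.zero_le _) (Nat.zero_le _) (Ne.symm hne)
    omega
  constructor
  · intro x hx
    rw [hS x]
    split_ifs with h
    · rfl
    · exact hGf.1 x hx
  · intro x hx
    rw [hS x]
    split_ifs with h
    · omega
    · have h1 := (hGf.2.1 x hx)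
      have h2 := hgt x hx h
      omega
  · intro x hx h2
    have hne : x ≠ ((0, 0) : Cell) := by
      intro hh; rw [hh, hf0] at h2; omega
    rw [hS x, if_neg hne]
  · intro b b' hb hb' h0 h0' _ _
    rw [hS b] at h0; rw [hS b'] at h0'
    by_cases h : b = ((0, 0) : Cell) <;> by_cases h' : b' = ((0, 0) : Cell)
    · rw [h, h']
    · rw [if_neg h'] at h0'; have := (hGf.2.1 b' hb').1; omega
    · rw [if_neg h] at h0; have := (hGf.2.1 b hb).1; omega
    · rw [if_neg h] at h0; have := (hGf.2.1 b hb).1; omega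
  · intro b x hb hx h0 hx0 _ _ hne
    rw [hS x] at hx0 ⊢
    by_cases hxx : x = ((0, 0) : Cell)
    · rw [if_pos hxx] at hx0; exact absurd rfl hx0
    · rw [if_neg hxx] at hx0 ⊢
      have := hgt x hx hxx
      omega
  · intro x y hx hy hx0 hy0 hle1 hle2 hne
    rw [hS x] at hx0 ⊢; rw [hS y] at hy0 ⊢
    by_cases hxx : x = ((0, 0) : Cell)
    · rw [if_pos hxx] at hx0; exact absurd rfl hx0
    · by_cases hyy : y = ((0, 0) : Cell)
      · rw [if_pos hyy] at hy0; exact absurd rfl hy0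
      · rw [if_neg hxx, if_neg hyy]
        exact hGf.2.2.1 x y hx hy hle1 hle2 hne
  · intro w h2 hle
    exact absurd (h2.trans hle) (by omega)
  · exact ⟨(0, 0), h00, by rw [hS (0, 0), if_pos rfl]⟩
  · intro x b hx hb hb0 hx0 hle1 hle2 hne
    exfalso
    rw [hS b] at hb0
    by_cases hbb : b = ((0, 0) : Cell)
    · have e1 : x.1 ≤ 0 := by rw [hbb] at hle1; exact hle1
      have e2 : x.2 ≤ 0 := by rw [hbb] at hle2; exact hle2
      apply hne
      rw [hbb]
      apply Prod.ext <;> simp <;> omega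
    · rw [if_neg hbb] at hb0
      have := (hGf.2.1 b hb).1
      omega

lemma inv_iter {r c q : ℕ} {f : Cell → ℕ} (hr : 1 ≤ r) (hc : 1 ≤ c) (hq : 1 ≤ q)
    (hGf : Good r c q f) :
    ∀ j, j ≤ q - 1 → Inv r c q j f (iterSub (L r c) q 1 f j) := by
  intro j
  induction j with
  | zero => intro _; exact inv_base hr hc hq hGf
  | succ j ih =>
    intro hj
    have hcyc : cyc q 1 (j + 1) = j + 2 := by
      unfold cyc
      have h1 : 1 - 1 + (j + 1) = j + 1 := by omega
      rw [h1, Nat.mod_eq_of_lt (by omega)]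
    have hun : iterSub (L r c) q 1 f (j + 1) =
        substep (L r c) (j + 2) (iterSub (L r c) q 1 f j) := by
      show substep (L r c) (cyc q 1 (j + 1)) (iterSub (L r c) q 1 f j) = _
      rw [hcyc]
    rw [hun]
    exact inv_step hq hGf (ih (by omega)) hj

lemma inv_final {r c q : ℕ} {f : Cell → ℕ} (hr : 1 ≤ r) (hc : 1 ≤ c) (hq : 1 ≤ q)
    (hGf : Good r c q f) :
    ∀ x : Cell, inShape (L r c) x →
      (iterSub (L r c) q 1 f (q - 1) x = 0 ↔ x = ((r - 1, c - 1) : Cell)) := by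
  have hI := inv_iter hr hc hq hGf (q - 1) le_rfl
  set g := iterSub (L r c) q 1 f (q - 1) with hg
  have hcor : ∀ b : Cell, inShape (L r c) b → g b = 0 → b = ((r - 1, c - 1) : Cell) := by
    intro b hb h0
    have hbr := (inShape_rect b).1 hb
    apply Prod.ext
    · by_contra hb1
      have hb1' : b.1 + 1 < r := by omega
      set y : Cell := (b.1 + 1, b.2) with hy
      have hyS : inShape (L r c) y := by
        rw [inShape_rect]; exact ⟨by simp [hy]; omega, by simp [hy]; omega⟩
      by_cases hy0 : g y = 0
      · have heq := hI.anti b y hb hyS h0 hy0 (by simp [hy]) (by simp [hy])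
        have hxx := congrArg Prod.fst heq
        simp [hy] at hxx
      · have h1 := hI.dom b y hb hyS h0 hy0 (by simp [hy]) (by simp [hy])
          (by simp only [hy, ne_eq, Prod.ext_iff]; omega)
        have h2 := (hI.bnd y hyS).1
        omega
    · by_contra hb2
      have hb2' : b.2 + 1 < c := by omega
      set y : Cell := (b.1, b.2 + 1) with hy
      have hyS : inShape (L r c) y := by
        rw [inShape_rect]; exact ⟨by simp [hy]; omega, by simp [hy]; omega⟩
      by_cases hy0 : g y = 0
      · have heq := hI.anti b y hb hyS h0 hy0 (by simp [hy]) (by simp [hy])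
        have hxx := congrArg Prod.snd heq
        simp [hy] at hxx
      · have h1 := hI.dom b y hb hyS h0 hy0 (by simp [hy]) (by simp [hy])
          (by simp only [hy, ne_eq, Prod.ext_iff]; omega)
        have h2 := (hI.bnd y hyS).1
        omega
  intro x hx
  constructor
  · exact hcor x hx
  · rintro rfl
    obtain ⟨b, hbS, hb0⟩ := hI.bull
    have := hcor b hbS hb0
    rw [← this]; exact hb0

lemma good_kpromote {r c q : ℕ} {f : Cell → ℕ} (hr : 1 ≤ r) (hc : 1 ≤ c) (hq : 1 ≤ q)
    (hGf : Good r c q f) : Good r c q (kpromote (L r c) q f) := by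
  have hI := inv_iter hr hc hq hGf (q - 1) le_rfl
  set g := iterSub (L r c) q 1 f (q - 1) with hg
  have hfin := inv_final hr hc hq hGf
  have hcorS : inShape (L r c) ((r - 1, c - 1) : Cell) := by
    rw [inShape_rect]; exact ⟨by simp; omega, by simp; omega⟩
  have hcor0 : g (r - 1, c - 1) = 0 := (hfin _ hcorS).2 rfl
  have hgrom : ∀ x : Cell, gromote (L r c) q 1 f x =
      if inShape (L r c) x ∧ g x = 0 then 1 else g x := fun x => rfl
  have hkp : ∀ x : Cell, inShape (L r c) x →
      kpromote (L r c) q f x = if x = ((r - 1, c - 1) : Cell) then q else g x - 1 := by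
    intro x hx
    unfold kpromote
    rw [if_pos hx]
    by_cases hxx : x = ((r - 1, c - 1) : Cell)
    · rw [if_pos hxx]
      have hh : gromote (L r c) q 1 f x = 1 := by
        rw [hgrom x, if_pos ⟨hx, by rw [hxx]; exact hcor0⟩]
      rw [hh, if_pos rfl]
    · have hgx0 : g x ≠ 0 := fun h => hxx ((hfin x hx).1 h)
      have hgx1 : g x ≠ 1 := (hI.bnd x hx).2
      have hh : gromote (L r c) q 1 f x = g x := by
        rw [hgrom x, if_neg (fun h => hgx0 h.2)]
      rw [hh, if_neg hgx1, if_neg hxx]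
  have hkpout : ∀ x : Cell, ¬ inShape (L r c) x → kpromote (L r c) q f x = 0 := by
    intro x hx
    unfold kpromote
    rw [if_neg hx]
  have hval : ∀ x : Cell, inShape (L r c) x → x ≠ ((r - 1, c - 1) : Cell) →
      2 ≤ g x ∧ g x ≤ q := by
    intro x hx hxx
    have hgx0 : g x ≠ 0 := fun h => hxx ((hfin x hx).1 h)
    have := hI.bnd x hx
    omega
  refine ⟨hkpout, ?_, ?_, ?_⟩
  · intro x hx
    rw [hkp x hx]
    split_ifs with h
    · omega
    · have := hval x hx h; omega
  · intro x y hx hy hle1 hle2 hne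
    rw [hkp x hx, hkp y hy]
    by_cases hyy : y = ((r - 1, c - 1) : Cell)
    · rw [if_pos hyy]
      have hxx : x ≠ ((r - 1, c - 1) : Cell) := by
        intro hxe
        have hyr := (inShape_rect y).1 hy
        have e1 : x.1 = r - 1 := by rw [hxe]
        have e2 : x.2 = c - 1 := by rw [hxe]
        exact hne (Prod.ext (by omega) (by omega))
      rw [if_neg hxx]
      have := hval x hx hxx
      omega
    · rw [if_neg hyy]
      have hxx : x ≠ ((r - 1, c - 1) : Cell) := by
        intro hxe
        have hyr := (inShape_rect y).1 hy
        have e1 : x.1 = r - 1 := by rw [hxe]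
        have e2 : x.2 = c - 1 := by rw [hxe]
        exact hyy (Prod.ext (by omega) (by omega))
      rw [if_neg hxx]
      have h2x := hval x hx hxx
      have h2y := hval y hy hyy
      have := hI.mono x y hx hy (by omega) (by omega) hle1 hle2 hne
      omega
  · intro v h1v hvq
    by_cases hv : v = q
    · exact ⟨(r - 1, c - 1), hcorS, by rw [hkp _ hcorS, if_pos rfl, hv]⟩
    · obtain ⟨y, hyS, hgy⟩ := hI.pack (v + 1) (by omega) (by omega)
      have hyy : y ≠ ((r - 1, c - 1) : Cell) := by
        intro h; rw [h, hcor0] at hgy; omega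
      refine ⟨y, hyS, ?_⟩
      rw [hkp y hyS, if_neg hyy, hgy]
      omega


/-! ### Cyclic relabeling equivariance -/

/-- the cyclic shift by `k` on the alphabet `{1,…,q}`, fixing `0` -/
def sig (q k x : ℕ) : ℕ := if x = 0 then 0 else (x - 1 + k) % q + 1

lemma sig_zero (q k : ℕ) : sig q k 0 = 0 := by unfold sig; rw [if_pos rfl]

lemma sig_eq_zero {q k x : ℕ} (h : sig q k x = 0) : x = 0 := by
  by_contra hx
  unfold sig at h
  rw [if_neg hx] at h
  omega

lemma sig_le {q k x : ℕ} (hq : 1 ≤ q) : sig q k x ≤ q := by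
  unfold sig
  split_ifs with h
  · omega
  · have := Nat.mod_lt (x - 1 + k) (show 0 < q by omega)
    omega

lemma sig_inj {q k x y : ℕ} (hq : 1 ≤ q) (hx : x ≤ q) (hy : y ≤ q)
    (h : sig q k x = sig q k y) : x = y := by
  unfold sig at h
  by_cases h1 : x = 0 <;> by_cases h2 : y = 0
  · omega
  · rw [if_pos h1, if_neg h2] at h; omega
  · rw [if_neg h1, if_pos h2] at h; omega
  · rw [if_neg h1, if_neg h2] at h
    have h3 : (x - 1 + k) % q = (y - 1 + k) % q := by omega
    have h4 : (x - 1) % q = (y - 1) % q :=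
      Nat.ModEq.add_right_cancel' k h3
    rw [Nat.mod_eq_of_lt (by omega), Nat.mod_eq_of_lt (by omega)] at h4
    omega

lemma sig_one (q k : ℕ) : sig q k 1 = k % q + 1 := by
  unfold sig
  rw [if_neg one_ne_zero]
  have h : 1 - 1 + k = k := by omega
  rw [h]

lemma sig_cyc (q k j : ℕ) : sig q k (cyc q 1 j) = cyc q (k % q + 1) j := by
  unfold sig cyc
  rw [if_neg (by omega : ¬((1 - 1 + j) % q + 1 = 0))]
  have e1 : 1 - 1 + j = j := by omega
  have e2 : k % q + 1 - 1 + j = k % q + j := by omega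
  rw [e1, e2]
  have e3 : j % q + 1 - 1 + k = j % q + k := by omega
  rw [e3, Nat.mod_add_mod, Nat.mod_add_mod, Nat.add_comm j k]

lemma sig_q_self {q x : ℕ} (hq : 1 ≤ q) (hx : x ≤ q) : sig q q x = x := by
  unfold sig
  split_ifs with h
  · omega
  · rw [Nat.add_mod_right, Nat.mod_eq_of_lt (by omega)]
    omega

lemma sig_zero_shift {q x : ℕ} (hq : 1 ≤ q) (hx : x ≤ q) : sig q 0 x = x := by
  unfold sig
  split_ifs with h
  · omega
  · rw [Nat.add_zero, Nat.mod_eq_of_lt (by omega)]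
    omega

lemma cyc_bound {q α j : ℕ} (hq : 1 ≤ q) : 1 ≤ cyc q α j ∧ cyc q α j ≤ q := by
  unfold cyc
  have := Nat.mod_lt (α - 1 + j) (show 0 < q by omega)
  omega

lemma isBullet_sig {lam : List ℕ} {q k : ℕ} {F : Cell → ℕ} {x : Cell} :
    isBullet lam (fun y => sig q k (F y)) x ↔ isBullet lam F x := by
  unfold isBullet
  constructor
  · rintro ⟨h1, h2⟩; exact ⟨h1, sig_eq_zero h2⟩
  · rintro ⟨h1, h2⟩
    exact ⟨h1, by show sig q k (F x) = 0; rw [h2]; exact sig_zero q k⟩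

lemma inC_sig {lam : List ℕ} {q k v : ℕ} {F : Cell → ℕ} {x : Cell} (hq : 1 ≤ q)
    (hF : ∀ y, F y ≤ q) (hv : v ≤ q) :
    inC lam (fun y => sig q k (F y)) (sig q k v) x ↔ inC lam F v x := by
  unfold inC
  constructor
  · rintro ⟨h1, h2, h3⟩
    refine ⟨h1, sig_inj hq (hF x) hv h2, ?_⟩
    rcases h3 with ⟨ha, hb⟩ | ⟨ha, hb⟩
    · exact Or.inl ⟨ha, isBullet_sig.1 hb⟩
    · exact Or.inr ⟨ha, isBullet_sig.1 hb⟩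
  · rintro ⟨h1, h2, h3⟩
    refine ⟨h1, by show sig q k (F x) = sig q k v; rw [h2], ?_⟩
    rcases h3 with ⟨ha, hb⟩ | ⟨ha, hb⟩
    · exact Or.inl ⟨ha, isBullet_sig.2 hb⟩
    · exact Or.inr ⟨ha, isBullet_sig.2 hb⟩

lemma substep_sig {lam : List ℕ} {q k v : ℕ} {F : Cell → ℕ} (hq : 1 ≤ q)
    (hF : ∀ y, F y ≤ q) (hv : v ≤ q) (x : Cell) :
    substep lam (sig q k v) (fun y => sig q k (F y)) x = sig q k (substep lam v F x) := by
  rcases substep_cases lam v F x with ⟨h1, he⟩ | ⟨h1, h2, h3, he⟩ | ⟨h1, h2, he⟩ <;> rw [he]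
  · rw [substep_of_inC ((inC_sig hq hF hv).2 h1), sig_zero]
  · rw [substep_of_fill]
    · intro h; exact h1 ((inC_sig hq hF hv).1 h)
    · refine ⟨isBullet_sig.2 h2, ?_⟩
      rcases h3 with h | h
      · exact Or.inl ((inC_sig hq hF hv).2 h)
      · exact Or.inr ((inC_sig hq hF hv).2 h)
  · rw [substep_of_stay]
    · intro h; exact h1 ((inC_sig hq hF hv).1 h)
    · intro h
      apply h2
      refine ⟨isBullet_sig.1 h.1, ?_⟩
      rcases h.2 with hh | hh
      · exact Or.inl ((inC_sig hq hF hv).1 hh)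
      · exact Or.inr ((inC_sig hq hF hv).1 hh)

lemma substep_le {lam : List ℕ} {q v : ℕ} {F : Cell → ℕ} (hv : v ≤ q)
    (hF : ∀ y, F y ≤ q) (x : Cell) : substep lam v F x ≤ q := by
  rcases substep_cases lam v F x with ⟨_, he⟩ | ⟨_, _, _, he⟩ | ⟨_, _, he⟩ <;> rw [he]
  · omega
  · omega
  · exact hF x

lemma iterSub_le {lam : List ℕ} {q α : ℕ} {F : Cell → ℕ} (hq : 1 ≤ q)
    (hF : ∀ y, F y ≤ q) : ∀ j y, iterSub lam q α F j y ≤ q := by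
  intro j
  induction j with
  | zero =>
    intro y
    show (if y = ((0,0) : Cell) ∧ F y = α then 0 else F y) ≤ q
    split_ifs
    · omega
    · exact hF y
  | succ j ih =>
    intro y
    show substep lam (cyc q α (j + 1)) (iterSub lam q α F j) y ≤ q
    exact substep_le (cyc_bound hq).2 ih y

lemma substep_out {lam : List ℕ} {v : ℕ} {F : Cell → ℕ} {x : Cell}
    (hx : ¬ inShape lam x) : substep lam v F x = F x :=
  substep_of_stay (fun h => hx h.1) (fun h => hx h.1.1)

lemma iterSub_out {lam : List ℕ} {q α : ℕ} {F : Cell → ℕ}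
    (hout : ∀ y, ¬ inShape lam y → F y = 0) :
    ∀ j y, ¬ inShape lam y → iterSub lam q α F j y = 0 := by
  intro j
  induction j with
  | zero =>
    intro y hy
    show (if y = ((0,0) : Cell) ∧ F y = α then 0 else F y) = 0
    split_ifs
    · rfl
    · exact hout y hy
  | succ j ih =>
    intro y hy
    show substep lam (cyc q α (j + 1)) (iterSub lam q α F j) y = 0
    rw [substep_out hy]
    exact ih y hy

lemma iterSub_sig {lam : List ℕ} {q k : ℕ} {F : Cell → ℕ} (hq : 1 ≤ q)
    (hF : ∀ y, F y ≤ q) :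
    ∀ j, iterSub lam q (k % q + 1) (fun y => sig q k (F y)) j =
      fun x => sig q k (iterSub lam q 1 F j x) := by
  intro j
  induction j with
  | zero =>
    funext x
    show (if x = ((0,0) : Cell) ∧ sig q k (F x) = k % q + 1 then 0 else sig q k (F x)) =
      sig q k (if x = ((0,0) : Cell) ∧ F x = 1 then 0 else F x)
    by_cases h : x = ((0,0) : Cell) ∧ F x = 1
    · rw [if_pos h, if_pos ⟨h.1, by rw [h.2, sig_one]⟩, sig_zero]
    · rw [if_neg h, if_neg]
      intro hh
      apply h
      refine ⟨hh.1, ?_⟩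
      have := hh.2
      rw [← sig_one q k] at this
      exact sig_inj hq (hF x) (by omega) this
  | succ j ih =>
    funext x
    show substep lam (cyc q (k % q + 1) (j + 1))
        (iterSub lam q (k % q + 1) (fun y => sig q k (F y)) j) x =
      sig q k (substep lam (cyc q 1 (j + 1)) (iterSub lam q 1 F j) x)
    rw [ih, ← sig_cyc q k (j + 1)]
    exact substep_sig hq (iterSub_le hq hF j) (cyc_bound hq).2 x

lemma gromote_bound {lam : List ℕ} {q : ℕ} {F : Cell → ℕ} (hq : 1 ≤ q)
    (hF : ∀ y, F y ≤ q) {x : Cell} (hx : inShape lam x) :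
    1 ≤ gromote lam q 1 F x ∧ gromote lam q 1 F x ≤ q := by
  have hgeq : gromote lam q 1 F x =
      if inShape lam x ∧ iterSub lam q 1 F (q-1) x = 0 then 1
      else iterSub lam q 1 F (q-1) x := rfl
  rw [hgeq]
  split_ifs with h
  · omega
  · have h1 : iterSub lam q 1 F (q-1) x ≠ 0 := fun hh => h ⟨hx, hh⟩
    have h2 := @iterSub_le lam q 1 F hq hF (q-1) x
    omega

lemma kpromote_sig {lam : List ℕ} {q k : ℕ} {F : Cell → ℕ} (hq : 1 ≤ q)
    (hF : ∀ y, F y ≤ q) (hout : ∀ y, ¬ inShape lam y → F y = 0) :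
    (fun x => sig q (k + 1) (kpromote lam q F x)) =
      gromote lam q (k % q + 1) (fun y => sig q k (F y)) := by
  funext x
  have hstep : gromote lam q (k % q + 1) (fun y => sig q k (F y)) x =
      if inShape lam x ∧ sig q k (iterSub lam q 1 F (q - 1) x) = 0 then k % q + 1
      else sig q k (iterSub lam q 1 F (q - 1) x) := by
    show (if inShape lam x ∧
        iterSub lam q (k % q + 1) (fun y => sig q k (F y)) (q - 1) x = 0 then k % q + 1
      else iterSub lam q (k % q + 1) (fun y => sig q k (F y)) (q - 1) x) = _
    rw [iterSub_sig hq hF (q - 1)]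
  rw [hstep]
  have hsigq : sig q (k + 1) q = k % q + 1 := by
    unfold sig
    rw [if_neg (by omega)]
    have e : q - 1 + (k + 1) = k + q := by omega
    rw [e, Nat.add_mod_right]
  by_cases hx : inShape lam x
  · have hkp : kpromote lam q F x =
        if gromote lam q 1 F x = 1 then q else gromote lam q 1 F x - 1 := by
      unfold kpromote
      rw [if_pos hx]
    by_cases h0 : iterSub lam q 1 F (q - 1) x = 0
    · have hg1 : gromote lam q 1 F x = 1 := by
        show (if inShape lam x ∧ iterSub lam q 1 F (q - 1) x = 0 then 1
          else iterSub lam q 1 F (q - 1) x) = 1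
        rw [if_pos ⟨hx, h0⟩]
      have hkpv : kpromote lam q F x = q := by rw [hkp, if_pos hg1]
      have hcond : inShape lam x ∧ sig q k (iterSub lam q 1 F (q - 1) x) = 0 :=
        ⟨hx, by rw [h0]; exact sig_zero q k⟩
      rw [hkpv, if_pos hcond, hsigq]
    · have hcond : ¬ (inShape lam x ∧ sig q k (iterSub lam q 1 F (q - 1) x) = 0) :=
        fun h => h0 (sig_eq_zero h.2)
      rw [if_neg hcond]
      have hg : gromote lam q 1 F x = iterSub lam q 1 F (q - 1) x := by
        show (if inShape lam x ∧ iterSub lam q 1 F (q - 1) x = 0 then 1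
          else iterSub lam q 1 F (q - 1) x) = _
        rw [if_neg (fun h => h0 h.2)]
      by_cases hg1 : gromote lam q 1 F x = 1
      · have hkpv : kpromote lam q F x = q := by rw [hkp, if_pos hg1]
        have h1' : iterSub lam q 1 F (q - 1) x = 1 := by rw [← hg]; exact hg1
        rw [hkpv, h1', sig_one, hsigq]
      · have hkpv : kpromote lam q F x = gromote lam q 1 F x - 1 := by
          rw [hkp, if_neg hg1]
        have hb := gromote_bound hq hF hx
        have h2 : 2 ≤ gromote lam q 1 F x := by omega
        have h2' : 2 ≤ iterSub lam q 1 F (q - 1) x := by rw [← hg]; exact h2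
        have hle' : iterSub lam q 1 F (q - 1) x ≤ q := by
          rw [← hg]; exact hb.2
        rw [hkpv, hg]
        unfold sig
        rw [if_neg (by omega), if_neg (by omega)]
        have e : iterSub lam q 1 F (q - 1) x - 1 - 1 + (k + 1) =
            iterSub lam q 1 F (q - 1) x - 1 + k := by omega
        rw [e]
  · have hkp : kpromote lam q F x = 0 := by
      unfold kpromote
      rw [if_neg hx]
    have hcond : ¬ (inShape lam x ∧ sig q k (iterSub lam q 1 F (q - 1) x) = 0) :=
      fun h => hx h.1
    rw [hkp, if_neg hcond, iterSub_out hout (q - 1) x hx, sig_zero, sig_zero]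


lemma good_le {r c q : ℕ} {f : Cell → ℕ} (hGf : Good r c q f) : ∀ x, f x ≤ q := by
  intro x
  by_cases hx : inShape (L r c) x
  · exact (hGf.2.1 x hx).2
  · rw [hGf.1 x hx]; omega

lemma good_iterate {r c q : ℕ} {f : Cell → ℕ} (hr : 1 ≤ r) (hc : 1 ≤ c) (hq : 1 ≤ q)
    (hGf : Good r c q f) : ∀ k, Good r c q ((kpromote (L r c) q)^[k] f) := by
  intro k
  induction k with
  | zero => exact hGf
  | succ k ih =>
    rw [Function.iterate_succ_apply']
    exact good_kpromote hr hc hq ih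

lemma gromIter_eq_sig {r c q : ℕ} {f : Cell → ℕ} (hr : 1 ≤ r) (hc : 1 ≤ c) (hq : 1 ≤ q)
    (hGf : Good r c q f) :
    ∀ k, gromIter (L r c) q f k = fun x => sig q k ((kpromote (L r c) q)^[k] f x) := by
  intro k
  induction k with
  | zero =>
    funext x
    show f x = sig q 0 (f x)
    rw [sig_zero_shift hq (good_le hGf x)]
  | succ k ih =>
    have hGk := good_iterate hr hc hq hGf k
    show gromote (L r c) q (k % q + 1) (gromIter (L r c) q f k) = _
    rw [ih, ← kpromote_sig hq (good_le hGk) hGk.1]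
    funext x
    rw [Function.iterate_succ_apply']

lemma gromIter_q {r c q : ℕ} {f : Cell → ℕ} (hr : 1 ≤ r) (hc : 1 ≤ c) (hq : 1 ≤ q)
    (hGf : Good r c q f) (hfix : (kpromote (L r c) q)^[q] f = f) :
    gromIter (L r c) q f q = f := by
  rw [gromIter_eq_sig hr hc hq hGf q, hfix]
  funext x
  exact sig_q_self hq (good_le hGf x)

lemma gromIter_add_q {r c q : ℕ} {f : Cell → ℕ} (hr : 1 ≤ r) (hc : 1 ≤ c) (hq : 1 ≤ q)
    (hGf : Good r c q f) (hfix : (kpromote (L r c) q)^[q] f = f) :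
    ∀ k, gromIter (L r c) q f (k + q) = gromIter (L r c) q f k := by
  intro k
  induction k with
  | zero =>
    rw [Nat.zero_add]
    exact gromIter_q hr hc hq hGf hfix
  | succ k ih =>
    have e : k + 1 + q = (k + q) + 1 := by omega
    rw [e]
    show gromote (L r c) q ((k + q) % q + 1) (gromIter (L r c) q f (k + q)) =
      gromote (L r c) q (k % q + 1) (gromIter (L r c) q f k)
    rw [Nat.add_mod_right, ih]

lemma gromIter_mod {r c q : ℕ} {f : Cell → ℕ} (hr : 1 ≤ r) (hc : 1 ≤ c) (hq : 1 ≤ q)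
    (hGf : Good r c q f) (hfix : (kpromote (L r c) q)^[q] f = f) :
    ∀ k, gromIter (L r c) q f k = gromIter (L r c) q f (k % q) := by
  intro k
  induction k using Nat.strong_induction_on with
  | _ k ih =>
    by_cases hk : k < q
    · rw [Nat.mod_eq_of_lt hk]
    · have e : k = (k - q) + q := by omega
      have e2 : (k - q + q) % q = (k - q) % q := Nat.add_mod_right _ _
      rw [e, e2, gromIter_add_q hr hc hq hGf hfix]
      exact ih (k - q) (by omega)

/-! ### Tracking the positions of a fixed value -/

/-- the value `v` appears in some (0-indexed) row `≤ i` -/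
def Ap (r c v i : ℕ) (g : Cell → ℕ) : Prop :=
  ∃ a b : ℕ, a ≤ i ∧ inShape (L r c) ((a, b) : Cell) ∧ g (a, b) = v

lemma substep_val_eq {lam : List ℕ} {u v : ℕ} {g : Cell → ℕ} (hv : 1 ≤ v) (hu : u ≠ v)
    (x : Cell) : substep lam u g x = v ↔ g x = v := by
  rcases substep_cases lam u g x with ⟨h1, he⟩ | ⟨h1, h2, h3, he⟩ | ⟨h1, h2, he⟩ <;> rw [he]
  · constructor
    · intro h; omega
    · intro h; exfalso; have := h1.2.1; exact hu (by omega)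
  · constructor
    · intro h; exact absurd h hu
    · intro h; exfalso; have := h2.2; omega

lemma Ap_substep_ne {r c u v i : ℕ} {g : Cell → ℕ} (hv : 1 ≤ v) (hu : u ≠ v) :
    Ap r c v i (substep (L r c) u g) ↔ Ap r c v i g := by
  constructor
  · rintro ⟨a, b, h1, h2, h3⟩
    exact ⟨a, b, h1, h2, (substep_val_eq hv hu _).1 h3⟩
  · rintro ⟨a, b, h1, h2, h3⟩
    exact ⟨a, b, h1, h2, (substep_val_eq hv hu _).2 h3⟩

lemma Ap_substep_self {r c v i : ℕ} {g : Cell → ℕ} (hv : 1 ≤ v)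
    (h : Ap r c v i g) : Ap r c v i (substep (L r c) v g) := by
  obtain ⟨a, b, hai, hS, hg⟩ := h
  by_cases hC : inC (L r c) g v ((a, b) : Cell)
  · rcases hC.2.2 with ⟨h1, hb⟩ | ⟨h1, hb⟩
    · have h1' : 1 ≤ b := h1
      refine ⟨a, b - 1, hai, hb.1, ?_⟩
      rw [substep_of_fill]
      · intro h; have := h.2.1; rw [hb.2] at this; omega
      · refine ⟨hb, Or.inl ?_⟩
        have hpe : (((a, b - 1) : Cell).1, ((a, b - 1) : Cell).2 + 1) = ((a, b) : Cell) := by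
          apply Prod.ext <;> simp <;> omega
        rw [hpe]; exact hC
    · have h1' : 1 ≤ a := h1
      refine ⟨a - 1, b, by omega, hb.1, ?_⟩
      rw [substep_of_fill]
      · intro h; have := h.2.1; rw [hb.2] at this; omega
      · refine ⟨hb, Or.inr ?_⟩
        have hpe : (((a - 1, b) : Cell).1 + 1, ((a - 1, b) : Cell).2) = ((a, b) : Cell) := by
          apply Prod.ext <;> simp <;> omega
        rw [hpe]; exact hC
  · refine ⟨a, b, hai, hS, ?_⟩
    rw [substep_of_stay hC (fun h => by have := h.1.2; omega), hg]

lemma moveAt_of_flip {r c v m : ℕ} {g : Cell → ℕ} (hv : 1 ≤ v) (hm : 1 ≤ m)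
    (h1 : ¬ Ap r c v (m - 1) g) (h2 : Ap r c v (m - 1) (substep (L r c) v g)) :
    moveAt (L r c) g v m := by
  obtain ⟨a, b, hai, hS, hval⟩ := h2
  rcases substep_cases (L r c) v g ((a, b) : Cell) with ⟨hC, he⟩ | ⟨hnC, hbul, hfc, he⟩ |
      ⟨hnC, hnF, he⟩
  · rw [he] at hval; omega
  · rcases hfc with hR | hD
    · exact absurd ⟨a, b + 1, hai, hR.1, hR.2.1⟩ h1
    · have hnot : ¬ (a + 1 ≤ m - 1) := fun hh => h1 ⟨a + 1, b, hh, hD.1, hD.2.1⟩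
      have ham : a + 1 = m := by omega
      exact ⟨(a, b), hbul, ham, hD⟩
  · rw [he] at hval
    exact absurd ⟨a, b, hai, hS, hval⟩ h1

lemma Ap_iterSub_zero {r c q α v i : ℕ} {g : Cell → ℕ} (hv : 1 ≤ v) (hα : α ≠ v) :
    Ap r c v i (iterSub (L r c) q α g 0) ↔ Ap r c v i g := by
  have hiff : ∀ x : Cell, iterSub (L r c) q α g 0 x = v ↔ g x = v := by
    intro x
    show (if x = ((0, 0) : Cell) ∧ g x = α then 0 else g x) = v ↔ _
    split_ifs with h
    · constructor
      · intro hh; omega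
      · intro hh; exfalso; have := h.2; exact hα (by omega)
    · exact Iff.rfl
  constructor
  · rintro ⟨a, b, h1, h2, h3⟩; exact ⟨a, b, h1, h2, (hiff _).1 h3⟩
  · rintro ⟨a, b, h1, h2, h3⟩; exact ⟨a, b, h1, h2, (hiff _).2 h3⟩

lemma Ap_gromote {r c q α v i : ℕ} {g : Cell → ℕ} (hv : 1 ≤ v) (hα : α ≠ v) :
    Ap r c v i (gromote (L r c) q α g) ↔ Ap r c v i (iterSub (L r c) q α g (q - 1)) := by
  have hiff : ∀ x : Cell, gromote (L r c) q α g x = v ↔ iterSub (L r c) q α g (q - 1) x = v := by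
    intro x
    show (if inShape (L r c) x ∧ iterSub (L r c) q α g (q - 1) x = 0 then α
      else iterSub (L r c) q α g (q - 1) x) = v ↔ _
    split_ifs with h
    · constructor
      · intro hh; exact absurd hh hα
      · intro hh; exfalso; have := h.2; omega
    · exact Iff.rfl
  constructor
  · rintro ⟨a, b, h1, h2, h3⟩; exact ⟨a, b, h1, h2, (hiff _).1 h3⟩
  · rintro ⟨a, b, h1, h2, h3⟩; exact ⟨a, b, h1, h2, (hiff _).2 h3⟩

lemma exists_flip {P : ℕ → Prop} : ∀ n, ¬ P 0 → P n → ∃ k, k < n ∧ ¬ P k ∧ P (k + 1) := by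
  intro n
  induction n with
  | zero => intro h0 hn; exact absurd hn h0
  | succ n ih =>
    intro h0 hn
    by_cases hPn : P n
    · obtain ⟨k, hk, h⟩ := ih h0 hPn; exact ⟨k, by omega, h⟩
    · exact ⟨n, by omega, hPn, hn⟩

lemma stage_lemma {r c q α v m : ℕ} {g : Cell → ℕ} (hv1 : 1 ≤ v) (hαv : α ≠ v) (hm : 1 ≤ m)
    (h1 : ¬ Ap r c v (m - 1) g) (h2 : Ap r c v (m - 1) (gromote (L r c) q α g)) :
    ∃ j, j + 1 ≤ q - 1 ∧ cyc q α (j + 1) = v ∧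
      moveAt (L r c) (iterSub (L r c) q α g j) v m := by
  have h2' : Ap r c v (m - 1) (iterSub (L r c) q α g (q - 1)) := (Ap_gromote hv1 hαv).1 h2
  have h0' : ¬ Ap r c v (m - 1) (iterSub (L r c) q α g 0) :=
    fun h => h1 ((Ap_iterSub_zero hv1 hαv).1 h)
  obtain ⟨j, hj, hnPj, hPj1⟩ := exists_flip
    (P := fun j => Ap r c v (m - 1) (iterSub (L r c) q α g j)) (q - 1) h0' h2'
  have hun : iterSub (L r c) q α g (j + 1) =
      substep (L r c) (cyc q α (j + 1)) (iterSub (L r c) q α g j) := rfl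
  by_cases hcv : cyc q α (j + 1) = v
  · refine ⟨j, by omega, hcv, ?_⟩
    apply moveAt_of_flip hv1 hm hnPj
    rw [hun, hcv] at hPj1
    exact hPj1
  · exfalso
    apply hnPj
    rw [hun] at hPj1
    exact (Ap_substep_ne hv1 hcv).1 hPj1

end Aux12











/-- if the `q`-th power of K-promotion fixes a packed rectangular
increasing tableau `T`, then every vertex of every `prom_i(T)` (`1 ≤ i ≤ r - 1`) has
indegree at least `1`. -/
theorem indegree_positive_of_small_order
    (r c q : ℕ) (T : IncTab (List.replicate r c) q)
    (hp : Packed (List.replicate r c) q T)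
    (hfix : (kpromote (List.replicate r c) q)^[q] T.entry = T.entry) :
    ∀ i, 1 ≤ i → i ≤ r - 1 → ∀ v, 1 ≤ v → v ≤ q →
      ∃ α, promEdge (List.replicate r c) q i T α v := by
  intro i hi1 hi2 v hv1 hvq
  have hq1 : 1 ≤ q := le_trans hv1 hvq
  have hGf : Aux12.Good r c q T.entry := Aux12.good_entry T hp
  obtain ⟨x0, hx0S, _⟩ := hp 1 le_rfl hq1
  have hc1 : 1 ≤ c := by
    have := (Aux12.inShape_rect x0).1 hx0S; omega
  have hr2 : 2 ≤ r := by omega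
  have hr1 : 1 ≤ r := by omega
  set f := T.entry with hf
  have hGv := Aux12.good_iterate hr1 hc1 hq1 hGf v
  -- at gromIter v, the value v sits only at the bottom-right corner
  have hstart : ¬ Aux12.Ap r c v (i - 1) (gromIter (Aux12.L r c) q f v) := by
    rintro ⟨a, b, hai, hS, hval⟩
    have hh : gromIter (Aux12.L r c) q f v ((a, b) : Cell) =
        Aux12.sig q v ((kpromote (Aux12.L r c) q)^[v] f (a, b)) :=
      congrFun (Aux12.gromIter_eq_sig hr1 hc1 hq1 hGf v) _
    rw [hh] at hval
    have hPq : (kpromote (Aux12.L r c) q)^[v] f (a, b) = q := by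
      have hsq : Aux12.sig q v q = v := by
        unfold Aux12.sig
        rw [if_neg (by omega)]
        have e : q - 1 + v = v - 1 + q := by omega
        rw [e, Nat.add_mod_right, Nat.mod_eq_of_lt (by omega)]
        omega
      exact Aux12.sig_inj hq1 (Aux12.good_le hGv _) le_rfl (hval.trans hsq.symm)
    have hcor := (Aux12.good_corner hr1 hc1 hGv ((a, b) : Cell)).1 ⟨hS, hPq⟩
    have ha : a = r - 1 := congrArg Prod.fst hcor
    omega
  -- at gromIter (v - 1 + q) = gromIter (v - 1), the value v sits at the origin
  have hGv1 := Aux12.good_iterate hr1 hc1 hq1 hGf (v - 1)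
  have hend : Aux12.Ap r c v (i - 1) (gromIter (Aux12.L r c) q f (v - 1 + q)) := by
    rw [Aux12.gromIter_add_q hr1 hc1 hq1 hGf hfix (v - 1)]
    have h00 : inShape (Aux12.L r c) ((0, 0) : Cell) := by
      rw [Aux12.inShape_rect]; exact ⟨hr1, hc1⟩
    refine ⟨0, 0, Nat.zero_le _, h00, ?_⟩
    have hh : gromIter (Aux12.L r c) q f (v - 1) ((0, 0) : Cell) =
        Aux12.sig q (v - 1) ((kpromote (Aux12.L r c) q)^[v - 1] f (0, 0)) :=
      congrFun (Aux12.gromIter_eq_sig hr1 hc1 hq1 hGf (v - 1)) _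
    rw [hh, Aux12.good_one hr1 hc1 hq1 hGv1, Aux12.sig_one, Nat.mod_eq_of_lt (by omega)]
    omega
  -- find the gromotion during which the value v first enters rows ≤ i
  obtain ⟨j0, hj0, hnP, hP1⟩ := Aux12.exists_flip
    (P := fun j => Aux12.Ap r c v (i - 1) (gromIter (Aux12.L r c) q f (v + j))) (q - 1)
    (by
      show ¬ Aux12.Ap r c v (i - 1) (gromIter (Aux12.L r c) q f (v + 0))
      rw [show v + 0 = v from by omega]
      exact hstart)
    (by
      show Aux12.Ap r c v (i - 1) (gromIter (Aux12.L r c) q f (v + (q - 1)))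
      rw [show v + (q - 1) = v - 1 + q from by omega]
      exact hend)
  have hnP' : ¬ Aux12.Ap r c v (i - 1) (gromIter (Aux12.L r c) q f (v + j0)) := hnP
  have hP1' : Aux12.Ap r c v (i - 1) (gromIter (Aux12.L r c) q f (v + (j0 + 1))) := hP1
  set k := v + j0 with hk
  have hde : gromIter (Aux12.L r c) q f (v + (j0 + 1)) =
      gromote (Aux12.L r c) q (k % q + 1) (gromIter (Aux12.L r c) q f k) := by
    rw [show v + (j0 + 1) = k + 1 from by omega]
    rfl
  rw [hde] at hP1'
  have hmod : k % q = k ∨ (q ≤ k ∧ k % q = k - q) := by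
    rcases Nat.lt_or_ge k q with h | h
    · exact Or.inl (Nat.mod_eq_of_lt h)
    · exact Or.inr ⟨h, by rw [Nat.mod_eq_sub_mod h, Nat.mod_eq_of_lt (by omega)]⟩
  have hαv : k % q + 1 ≠ v := by
    rcases hmod with h | ⟨h1, h2⟩ <;> omega
  obtain ⟨j, hjle, hcyc, hmove⟩ := Aux12.stage_lemma hv1 hαv hi1 hnP' hP1'
  refine ⟨k % q + 1, by omega,
    by have := Nat.mod_lt k (show 0 < q by omega); omega, j, hjle, hcyc, ?_⟩
  have e1 : k % q + 1 - 1 = k % q := by omega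
  rw [e1, ← Aux12.gromIter_mod hr1 hc1 hq1 hGf hfix k]
  exact hmove
end

section
/- Let T be a two-row increasing tableau of shape (λ1, λ2) with entries in {1,…,q} and lattice word w = w_1…w_q (letters are subsets of {1,2}). Suppose w_1 ≠ ∅, w has a balance point with first balance point j_b, and there is no teetering point before j_b. Then the lattice word of the K-promotion of T is obtained from w by changing w_{j_b} from {2} to {1}, deleting the first letter, and appending {2} at the end. -/
open Classical

section Helpers

lemma inShape_pair (l1 l2 r j : ℕ) :
    inShape [l1, l2] (r, j) ↔ (r = 0 ∧ j < l1) ∨ (r = 1 ∧ j < l2) := by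
  unfold inShape
  match r with
  | 0 => simp [List.getD]
  | 1 => simp [List.getD]
  | (n+2) => simp [List.getD]

lemma inShape_left {lam : List ℕ} {r j j' : ℕ} (h : inShape lam (r, j)) (hj : j' ≤ j) :
    inShape lam (r, j') := lt_of_le_of_lt hj h

lemma row_mono {lam : List ℕ} {q : ℕ} (T : IncTab lam q) (r : ℕ) :
    ∀ {i j : ℕ}, i < j → inShape lam (r, j) → T.entry (r, i) < T.entry (r, j) := by
  intro i j
  induction j generalizing i with
  | zero => omega
  | succ j ih =>
    intro hij hs
    rcases Nat.lt_or_ge i j with h | h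
    · exact lt_trans (ih h (inShape_left hs (Nat.le_succ j))) (T.row_strict r j hs)
    · have hji : i = j := by omega
      rw [hji]
      exact T.row_strict r j hs

/-- a downward-closed finset of `ℕ` is an initial segment. -/
lemma lowerset_mem_iff {S : Finset ℕ} (h : ∀ a ∈ S, ∀ b, b < a → b ∈ S) :
    ∀ i, i ∈ S ↔ i < S.card := by
  intro i
  constructor
  · intro hi
    by_contra hc
    push_neg at hc
    have hsub : Finset.range (i+1) ⊆ S := by
      intro b hb
      simp only [Finset.mem_range] at hb
      rcases Nat.lt_or_ge b i with h' | h'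
      · exact h i hi b h'
      · have : b = i := by omega
        subst this; exact hi
    have := Finset.card_le_card hsub
    simp at this; omega
  · intro hi
    by_contra hc
    have hsub : S ⊆ Finset.range i := by
      intro a ha
      simp only [Finset.mem_range]
      by_contra h2
      push_neg at h2
      rcases Nat.lt_or_ge i a with h3 | h3
      · exact hc (h a ha i h3)
      · have : a = i := by omega
        subst this; exact hc ha
    have := Finset.card_le_card hsub
    simp at this; omega

end Helpers
section Helpers2

lemma appearsRow_one_iff (l1 l2 : ℕ) (f : Cell → ℕ) (v : ℕ) :
    appearsRow [l1, l2] f 1 v ↔ ∃ i, i < l1 ∧ f (0, i) = v := by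
  unfold appearsRow
  constructor
  · rintro ⟨-, j, hs, hv⟩
    rw [show (1:ℕ) - 1 = 0 from rfl] at hs hv
    rw [inShape_pair] at hs
    exact ⟨j, by omega, hv⟩
  · rintro ⟨i, hi, hv⟩
    exact ⟨le_refl 1, i, by rw [inShape_pair]; omega, hv⟩

lemma appearsRow_two_iff (l1 l2 : ℕ) (f : Cell → ℕ) (v : ℕ) :
    appearsRow [l1, l2] f 2 v ↔ ∃ i, i < l2 ∧ f (1, i) = v := by
  unfold appearsRow
  constructor
  · rintro ⟨-, j, hs, hv⟩
    rw [show (2:ℕ) - 1 = 1 from rfl] at hs hv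
    rw [inShape_pair] at hs
    exact ⟨j, by omega, hv⟩
  · rintro ⟨i, hi, hv⟩
    exact ⟨by omega, i, by rw [inShape_pair]; omega, hv⟩

lemma appearsRow_only12 {l1 l2 r v : ℕ} {f : Cell → ℕ}
    (h : appearsRow [l1, l2] f r v) : r = 1 ∨ r = 2 := by
  obtain ⟨hr, j, hs, -⟩ := h
  rw [inShape_pair] at hs
  omega

lemma cnt_eq_card (l1 l2 q : ℕ) (T : IncTab [l1, l2] q) (r len : ℕ)
    (hr : 1 ≤ r) (hshape : ∀ i : ℕ, inShape [l1, l2] ((r-1 : ℕ), i) ↔ i < len) (j : ℕ) :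
    cnt [l1, l2] T.entry r j
      = ((Finset.range len).filter (fun i => T.entry (r-1, i) ≤ j)).card := by
  unfold cnt
  have hset : ((Finset.Icc 1 j).filter (fun v => appearsRow [l1, l2] T.entry r v))
      = (((Finset.range len).filter (fun i => T.entry (r-1, i) ≤ j)).image
          (fun i => T.entry (r-1, i))) := by
    ext v
    simp only [Finset.mem_filter, Finset.mem_Icc, Finset.mem_image, Finset.mem_range]
    constructor
    · rintro ⟨⟨h1, h2⟩, -, i, hs, hv⟩
      exact ⟨i, ⟨(hshape i).1 hs, by omega⟩, hv⟩
    · rintro ⟨i, ⟨hi, hle⟩, hv⟩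
      have hs := (hshape i).2 hi
      have hpos := T.entry_pos _ hs
      exact ⟨⟨by omega, by omega⟩, hr, i, hs, hv⟩
  rw [hset, Finset.card_image_of_injOn]
  intro a ha b hb hab
  simp only [Finset.mem_coe, Finset.mem_filter, Finset.mem_range] at ha hb
  by_contra hne
  rcases Nat.lt_or_ge a b with h | h
  · exact absurd hab (Nat.ne_of_lt (row_mono T (r-1) h ((hshape b).2 hb.1)))
  · have h' : b < a := by omega
    exact absurd hab.symm (Nat.ne_of_lt (row_mono T (r-1) h' ((hshape a).2 ha.1)))

lemma cnt1_eq (l1 l2 q : ℕ) (T : IncTab [l1, l2] q) (j : ℕ) :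
    cnt [l1, l2] T.entry 1 j
      = ((Finset.range l1).filter (fun i => T.entry (0, i) ≤ j)).card :=
  cnt_eq_card l1 l2 q T 1 l1 (le_refl 1)
    (fun i => by rw [show (1:ℕ)-1 = 0 from rfl, inShape_pair]; omega) j

lemma cnt2_eq (l1 l2 q : ℕ) (T : IncTab [l1, l2] q) (j : ℕ) :
    cnt [l1, l2] T.entry 2 j
      = ((Finset.range l2).filter (fun i => T.entry (1, i) ≤ j)).card :=
  cnt_eq_card l1 l2 q T 2 l2 (by omega)
    (fun i => by rw [show (2:ℕ)-1 = 1 from rfl, inShape_pair]; omega) j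

lemma cnt2_le_cnt1 (l1 l2 q : ℕ) (hll : l2 ≤ l1) (T : IncTab [l1, l2] q) (j : ℕ) :
    cnt [l1, l2] T.entry 2 j ≤ cnt [l1, l2] T.entry 1 j := by
  rw [cnt1_eq, cnt2_eq]
  apply Finset.card_le_card
  intro i hi
  simp only [Finset.mem_filter, Finset.mem_range] at hi ⊢
  have hs : inShape [l1, l2] (1, i) := by rw [inShape_pair]; omega
  have h01 := T.col_strict 0 i hs
  norm_num at h01
  exact ⟨by omega, by omega⟩

lemma cnt_succ (lam : List ℕ) (f : Cell → ℕ) (r j : ℕ) :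
    cnt lam f r (j+1) = cnt lam f r j + (if appearsRow lam f r (j+1) then 1 else 0) := by
  unfold cnt
  have : Finset.Icc 1 (j+1) = insert (j+1) (Finset.Icc 1 j) := by
    ext a; simp only [Finset.mem_Icc, Finset.mem_insert]; omega
  rw [this, Finset.filter_insert]
  split
  · rw [Finset.card_insert_of_notMem (by simp)]
  · simp

end Helpers2
section Substep

lemma neighbor_of_bullet {lam : List ℕ} {g : Cell → ℕ} {v : ℕ} {p c : Cell}
    (hb : ∀ c, isBullet lam g c ↔ c = p) (hc : inC lam g v c) :
    c = (p.1, p.2 + 1) ∨ c = (p.1 + 1, p.2) := by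
  obtain ⟨c1, c2⟩ := c
  obtain ⟨p1, p2⟩ := p
  rcases hc.2.2 with ⟨h1, hB⟩ | ⟨h1, hB⟩
  · left
    have hp := (hb _).1 hB
    simp only [Prod.mk.injEq] at hp ⊢
    omega
  · right
    have hp := (hb _).1 hB
    simp only [Prod.mk.injEq] at hp ⊢
    omega

lemma substep_id (lam : List ℕ) (v : ℕ) (g : Cell → ℕ) (p : Cell)
    (hb : ∀ c, isBullet lam g c ↔ c = p)
    (hr : ¬ inC lam g v (p.1, p.2 + 1)) (hd : ¬ inC lam g v (p.1 + 1, p.2)) :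
    substep lam v g = g := by
  funext c
  unfold substep
  have hnc : ¬ inC lam g v c := by
    intro hc
    rcases neighbor_of_bullet hb hc with h | h
    · exact hr (h ▸ hc)
    · exact hd (h ▸ hc)
  rw [if_neg hnc, if_neg]
  rintro ⟨hB, h⟩
  have hcp := (hb c).1 hB
  subst hcp
  rcases h with h | h
  · exact hr h
  · exact hd h

lemma substep_move (lam : List ℕ) (v : ℕ) (g : Cell → ℕ) (p d e : Cell)
    (hv : v ≠ 0)
    (hb : ∀ c, isBullet lam g c ↔ c = p)
    (hde : (d = (p.1, p.2 + 1) ∧ e = (p.1 + 1, p.2)) ∨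
           (d = (p.1 + 1, p.2) ∧ e = (p.1, p.2 + 1)))
    (hd : inC lam g v d) (he : ¬ inC lam g v e) :
    substep lam v g = fun c => if c = d then 0 else if c = p then v else g c := by
  have honly : ∀ c, inC lam g v c → c = d := by
    intro c hc
    rcases neighbor_of_bullet hb hc with h | h <;> rcases hde with ⟨hd1, he1⟩ | ⟨hd1, he1⟩
    · rw [h, ← hd1]
    · exact absurd (h ▸ hc) (he1 ▸ he)
    · exact absurd (h ▸ hc) (he1 ▸ he)
    · rw [h, ← hd1]
  have hpd : p ≠ d := by
    intro h
    have h0 : g p = 0 := ((hb p).2 rfl).2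
    have hv' : g d = v := hd.2.1
    rw [← h] at hv'
    exact hv (hv'.symm.trans h0 ▸ rfl)
  funext c
  unfold substep
  by_cases hcd : c = d
  · subst hcd
    rw [if_pos hd, if_pos rfl]
  · rw [if_neg (fun hc => hcd (honly c hc))]
    by_cases hcp : c = p
    · subst hcp
      have hadj : inC lam g v (c.1, c.2 + 1) ∨ inC lam g v (c.1 + 1, c.2) := by
        rcases hde with ⟨hd1, -⟩ | ⟨hd1, -⟩
        · left; rw [← hd1]; exact hd
        · right; rw [← hd1]; exact hd
      rw [if_pos ⟨(hb c).2 rfl, hadj⟩, if_neg hcd, if_pos rfl]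
    · rw [if_neg, if_neg hcd, if_neg hcp]
      rintro ⟨hB, -⟩
      exact hcp ((hb c).1 hB)

end Substep
section States

/-- phase-1 state: bullet at `(0,x)`, row-1 entries left of it shifted. -/
def Pone (f : Cell → ℕ) (x : ℕ) : Cell → ℕ := fun c =>
  if c.1 = 0 ∧ c.2 ≤ x then (if c.2 = x then 0 else f (0, c.2 + 1)) else f c

/-- phase-2 state: jump happened at column `x` with value `jb`, bullet at `(1,y)`. -/
def Ptwo (f : Cell → ℕ) (x jb y : ℕ) : Cell → ℕ := fun c =>
  if c.1 = 0 ∧ c.2 ≤ x then (if c.2 = x then jb else f (0, c.2 + 1))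
  else if c.1 = 1 ∧ x ≤ c.2 ∧ c.2 ≤ y then (if c.2 = y then 0 else f (1, c.2 + 1))
  else f c

variable {l1 l2 q : ℕ} (T : IncTab [l1, l2] q)

lemma entry0_pos {i : ℕ} (hi : i < l1) : 1 ≤ T.entry (0, i) :=
  T.entry_pos _ (by rw [inShape_pair]; omega)

lemma entry1_pos {i : ℕ} (hi : i < l2) : 1 ≤ T.entry (1, i) :=
  T.entry_pos _ (by rw [inShape_pair]; omega)

lemma bullet_Pone {x : ℕ} (hx : x < l1) :
    ∀ c, isBullet [l1, l2] (Pone T.entry x) c ↔ c = ((0 : ℕ), x) := by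
  rintro ⟨c1, c2⟩
  unfold isBullet Pone
  rw [inShape_pair]
  constructor
  · rintro ⟨hs, h0⟩
    dsimp only at h0
    rcases hs with ⟨h1, h2⟩ | ⟨h1, h2⟩
    · subst h1
      by_cases hc : c2 ≤ x
      · rw [if_pos ⟨rfl, hc⟩] at h0
        by_cases hcx : c2 = x
        · simp [hcx]
        · rw [if_neg hcx] at h0
          have := entry0_pos T (show c2 + 1 < l1 by omega)
          omega
      · rw [if_neg (by simp; omega)] at h0
        have := entry0_pos T h2
        omega
    · subst h1
      rw [if_neg (by simp)] at h0
      have := entry1_pos T h2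
      omega
  · rintro h
    rw [Prod.mk.injEq] at h
    obtain ⟨rfl, rfl⟩ := h
    refine ⟨Or.inl ⟨rfl, hx⟩, ?_⟩
    simp

lemma bullet_Ptwo {x jb y : ℕ} (hll : l2 ≤ l1) (hxy : x ≤ y) (hy : y < l2) (hjb : jb ≠ 0) :
    ∀ c, isBullet [l1, l2] (Ptwo T.entry x jb y) c ↔ c = ((1 : ℕ), y) := by
  rintro ⟨c1, c2⟩
  unfold isBullet Ptwo
  rw [inShape_pair]
  constructor
  · rintro ⟨hs, h0⟩
    dsimp only at h0
    rcases hs with ⟨h1, h2⟩ | ⟨h1, h2⟩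
    · subst h1
      exfalso
      by_cases hc : c2 ≤ x
      · rw [if_pos ⟨rfl, hc⟩] at h0
        by_cases hcx : c2 = x
        · rw [if_pos hcx] at h0; exact hjb h0
        · rw [if_neg hcx] at h0
          have := entry0_pos T (show c2 + 1 < l1 by omega)
          omega
      · rw [if_neg (by simp; omega)] at h0
        rw [if_neg (by simp)] at h0
        have := entry0_pos T h2
        omega
    · subst h1
      rw [if_neg (by simp)] at h0
      by_cases hc : x ≤ c2 ∧ c2 ≤ y
      · rw [if_pos ⟨rfl, hc.1, hc.2⟩] at h0
        by_cases hcy : c2 = y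
        · simp [hcy]
        · rw [if_neg hcy] at h0
          exfalso
          have := entry1_pos T (show c2 + 1 < l2 by omega)
          omega
      · exfalso
        rw [if_neg (by simp; omega)] at h0
        have := entry1_pos T h2
        omega
  · rintro h
    rw [Prod.mk.injEq] at h
    refine ⟨Or.inr ⟨h.1, by omega⟩, ?_⟩
    simp [h.1, h.2, hxy]

end States
section StateSteps

lemma Pone_base (lam : List ℕ) (q : ℕ) (f : Cell → ℕ) (h : f (0, 0) = 1) :
    iterSub lam q 1 f 0 = Pone f 0 := by
  funext c
  obtain ⟨c1, c2⟩ := c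
  simp only [iterSub, Pone, Prod.mk.injEq]
  split_ifs <;> simp_all <;> omega

lemma Pone_step (f : Cell → ℕ) (x : ℕ) :
    (fun c : Cell => if c = ((0:ℕ), x+1) then 0
      else if c = ((0:ℕ), x) then f (0, x+1) else Pone f x c) = Pone f (x+1) := by
  funext c
  obtain ⟨c1, c2⟩ := c
  simp only [Pone, Prod.mk.injEq]
  split_ifs <;> simp_all <;> omega

lemma Ptwo_init (f : Cell → ℕ) (x jb : ℕ) :
    (fun c : Cell => if c = ((1:ℕ), x) then 0
      else if c = ((0:ℕ), x) then jb else Pone f x c) = Ptwo f x jb x := by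
  funext c
  obtain ⟨c1, c2⟩ := c
  simp only [Pone, Ptwo, Prod.mk.injEq]
  split_ifs <;> simp_all <;> omega

lemma Ptwo_step (f : Cell → ℕ) (x jb y : ℕ) (hxy : x ≤ y) :
    (fun c : Cell => if c = ((1:ℕ), y+1) then 0
      else if c = ((1:ℕ), y) then f (1, y+1) else Ptwo f x jb y c) = Ptwo f x jb (y+1) := by
  funext c
  obtain ⟨c1, c2⟩ := c
  simp only [Ptwo, Prod.mk.injEq]
  split_ifs <;> simp_all <;> omega

end StateSteps

section Evals

lemma Pone_eval0 (f : Cell → ℕ) (x j : ℕ) :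
    Pone f x (0, j) = if j ≤ x then (if j = x then 0 else f (0, j+1)) else f (0, j) := by
  simp [Pone]

lemma Pone_eval1 (f : Cell → ℕ) (x j : ℕ) : Pone f x (1, j) = f (1, j) := by
  simp [Pone]

lemma Ptwo_eval0 (f : Cell → ℕ) (x jb y j : ℕ) :
    Ptwo f x jb y (0, j) = if j ≤ x then (if j = x then jb else f (0, j+1)) else f (0, j) := by
  simp [Ptwo]

lemma Ptwo_eval1 (f : Cell → ℕ) (x jb y j : ℕ) :
    Ptwo f x jb y (1, j)
      = if x ≤ j ∧ j ≤ y then (if j = y then 0 else f (1, j+1)) else f (1, j) := by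
  simp [Ptwo]

end Evals
/-- two-row K-promotion, case of a first balance point `j_b` with no
earlier teetering point: the new lattice word changes `w_{j_b}` from `{2}` to `{1}`,
deletes the first letter, and appends `{2}`. -/
theorem two_row_Kpromotion_balance_no_teeter
    (l1 l2 q : ℕ) (hll : l2 ≤ l1) (T : IncTab [l1, l2] q)
    (hw1 : rowSetW [l1, l2] T.entry 1 ≠ (∅ : Set ℕ))
    (jb : ℕ) (hjb1 : 1 ≤ jb) (hjbq : jb ≤ q)
    (hbal : isBalance [l1, l2] T.entry jb)
    (hfirst : ∀ m, 1 ≤ m → m < jb → ¬ isBalance [l1, l2] T.entry m)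
    (hnoteet : ∀ m, 1 ≤ m → m < jb → ¬ isTeeter [l1, l2] T.entry m) :
    rowSetW [l1, l2] T.entry jb = ({2} : Set ℕ) ∧
    (∀ m, 1 ≤ m → m < q →
      rowSetW [l1, l2] (kpromote [l1, l2] q T.entry) m =
        (if m + 1 = jb then ({1} : Set ℕ) else rowSetW [l1, l2] T.entry (m + 1))) ∧
    rowSetW [l1, l2] (kpromote [l1, l2] q T.entry) q = ({2} : Set ℕ) := by
  -- basic monotonicity facts
  have hA_mono : ∀ i j : ℕ, i < j → j < l1 → T.entry (0, i) < T.entry (0, j) := by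
    intro i j hij hj
    exact row_mono T 0 hij (by rw [inShape_pair]; omega)
  have hB_mono : ∀ i j : ℕ, i < j → j < l2 → T.entry (1, i) < T.entry (1, j) := by
    intro i j hij hj
    exact row_mono T 1 hij (by rw [inShape_pair]; omega)
  have hAB : ∀ i : ℕ, i < l2 → T.entry (0, i) < T.entry (1, i) := by
    intro i hi
    have h := T.col_strict 0 i (by rw [inShape_pair]; omega)
    norm_num at h
    exact h
  have hAle : ∀ i : ℕ, i < l1 → T.entry (0, i) ≤ q := fun i hi =>
    T.entry_le _ (by rw [inShape_pair]; omega)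
  have hBle : ∀ i : ℕ, i < l2 → T.entry (1, i) ≤ q := fun i hi =>
    T.entry_le _ (by rw [inShape_pair]; omega)
  -- value 1 sits at the corner
  have hcorner : 0 < l1 ∧ T.entry (0, 0) = 1 := by
    rw [← Set.nonempty_iff_ne_empty] at hw1
    obtain ⟨r, hr⟩ := hw1
    have hr' : appearsRow [l1, l2] T.entry r 1 := hr
    rcases appearsRow_only12 hr' with h1 | h2
    · subst h1
      obtain ⟨i, hi, hv⟩ := (appearsRow_one_iff l1 l2 T.entry 1).1 hr'
      rcases Nat.eq_zero_or_pos i with h | h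
      · subst h; exact ⟨hi, hv⟩
      · have := hA_mono 0 i h hi
        have := entry0_pos T (show 0 < l1 by omega)
        omega
    · subst h2
      obtain ⟨i, hi, hv⟩ := (appearsRow_two_iff l1 l2 T.entry 1).1 hr'
      have := hAB i hi
      have := entry0_pos T (show i < l1 by omega)
      omega
  obtain ⟨hl1, hA0⟩ := hcorner
  -- jb is at least 2
  have hjb2 : 2 ≤ jb := by
    rcases Nat.lt_or_ge jb 2 with h | h
    · exfalso
      have hjb1' : jb = 1 := by omega
      subst hjb1'
      have h1 : cnt [l1, l2] T.entry 1 1 ≠ cnt [l1, l2] T.entry 2 1 := by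
        rw [cnt1_eq, cnt2_eq]
        have he : (Finset.range l2).filter (fun i => T.entry (1, i) ≤ 1) = ∅ := by
          apply Finset.filter_eq_empty_iff.2
          intro i hi
          simp only [Finset.mem_range] at hi
          have := hAB i hi
          have := entry0_pos T (show i < l1 by omega)
          omega
        have hne : 0 ∈ (Finset.range l1).filter (fun i => T.entry (0, i) ≤ 1) := by
          simp only [Finset.mem_filter, Finset.mem_range]
          exact ⟨hl1, by omega⟩
        rw [he]
        simp only [Finset.card_empty]
        exact Finset.card_ne_zero_of_mem hne
      exact h1 hbal
    · exact h
  have hq2 : 2 ≤ q := le_trans hjb2 hjbq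
  -- Part 1: the letter at jb is {2}
  have hlat : cnt [l1, l2] T.entry 2 (jb - 1) ≤ cnt [l1, l2] T.entry 1 (jb - 1) := cnt2_le_cnt1 l1 l2 q hll T _
  have hsucc1 := cnt_succ [l1, l2] T.entry 1 (jb - 1)
  have hsucc2 := cnt_succ [l1, l2] T.entry 2 (jb - 1)
  rw [show jb - 1 + 1 = jb by omega] at hsucc1 hsucc2
  have hnb : ¬ isBalance [l1, l2] T.entry (jb - 1) := hfirst (jb - 1) (by omega) (by omega)
  unfold isBalance at hnb hbal
  have h2jb : appearsRow [l1, l2] T.entry 2 jb ∧ ¬ appearsRow [l1, l2] T.entry 1 jb := by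
    by_cases ha1 : appearsRow [l1, l2] T.entry 1 jb <;>
      by_cases ha2 : appearsRow [l1, l2] T.entry 2 jb
    · rw [if_pos ha1] at hsucc1; rw [if_pos ha2] at hsucc2; exfalso; omega
    · rw [if_pos ha1] at hsucc1; rw [if_neg ha2] at hsucc2; exfalso; omega
    · exact ⟨ha2, ha1⟩
    · rw [if_neg ha1] at hsucc1; rw [if_neg ha2] at hsucc2; exfalso; omega
  have part1 : rowSetW [l1, l2] T.entry jb = ({2} : Set ℕ) := by
    ext r
    simp only [rowSetW, Set.mem_setOf_eq, Set.mem_singleton_iff]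
    constructor
    · intro hr
      rcases appearsRow_only12 hr with h | h
      · exact absurd (h ▸ hr) h2jb.2
      · exact h
    · intro hr
      subst hr
      exact h2jb.1
  -- the column x of jb in row 2
  obtain ⟨x, hxl2, hBx⟩ := (appearsRow_two_iff l1 l2 T.entry jb).1 h2jb.1
  have hxl1 : x < l1 := lt_of_lt_of_le hxl2 hll
  have hAjb : ∀ i, i < l1 → T.entry (0, i) ≠ jb := by
    intro i hi hv
    exact h2jb.2 ((appearsRow_one_iff l1 l2 T.entry jb).2 ⟨i, hi, hv⟩)
  -- count formulas from a column characterization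
  have hcntA : ∀ v z : ℕ, z < l1 → (∀ i, i < l1 → (T.entry (0, i) ≤ v ↔ i ≤ z)) →
      cnt [l1, l2] T.entry 1 v = z + 1 := by
    intro v z hz hch
    rw [cnt1_eq]
    have : (Finset.range l1).filter (fun i => T.entry (0, i) ≤ v) = Finset.range (z + 1) := by
      ext i
      simp only [Finset.mem_filter, Finset.mem_range]
      constructor
      · rintro ⟨h1, h2⟩; have := (hch i h1).1 h2; omega
      · intro h1; exact ⟨by omega, (hch i (by omega)).2 (by omega)⟩
    rw [this, Finset.card_range]
  have hcntB : ∀ v z : ℕ, z < l2 → (∀ i, i < l2 → (T.entry (1, i) ≤ v ↔ i ≤ z)) →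
      cnt [l1, l2] T.entry 2 v = z + 1 := by
    intro v z hz hch
    rw [cnt2_eq]
    have : (Finset.range l2).filter (fun i => T.entry (1, i) ≤ v) = Finset.range (z + 1) := by
      ext i
      simp only [Finset.mem_filter, Finset.mem_range]
      constructor
      · rintro ⟨h1, h2⟩; have := (hch i h1).1 h2; omega
      · intro h1; exact ⟨by omega, (hch i (by omega)).2 (by omega)⟩
    rw [this, Finset.card_range]
  -- characterization of row 1 at jb
  have hcnt2jb : cnt [l1, l2] T.entry 2 jb = x + 1 := by
    apply hcntB jb x hxl2
    intro i hi
    constructor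
    · intro h
      by_contra hc
      have := hB_mono x i (by omega) hi
      omega
    · intro h
      rcases Nat.eq_or_lt_of_le h with h' | h'
      · subst h'; omega
      · have := hB_mono i x (by omega) hxl2; omega
  have hAx_iff : ∀ i, i < l1 → (T.entry (0, i) ≤ jb ↔ i ≤ x) := by
    have hcard : ((Finset.range l1).filter (fun i => T.entry (0, i) ≤ jb)).card = x + 1 := by
      rw [← cnt1_eq]
      omega
    have hlow : ∀ a ∈ (Finset.range l1).filter (fun i => T.entry (0, i) ≤ jb),
        ∀ b, b < a → b ∈ (Finset.range l1).filter (fun i => T.entry (0, i) ≤ jb) := by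
      intro a ha b hba
      simp only [Finset.mem_filter, Finset.mem_range] at ha ⊢
      have := hA_mono b a hba ha.1
      exact ⟨by omega, by omega⟩
    intro i hi
    have := lowerset_mem_iff hlow i
    rw [hcard] at this
    simp only [Finset.mem_filter, Finset.mem_range] at this
    constructor
    · intro h; have := this.1 ⟨hi, h⟩; omega
    · intro h; exact (this.2 (by omega)).2
  -- no jump strictly before jb
  have hnojump : ∀ v x' : ℕ, v + 1 < jb → x' < l1 → x' < l2 →
      (∀ i, i < l1 → (T.entry (0, i) ≤ v ↔ i ≤ x')) → T.entry (1, x') ≠ v + 1 := by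
    intro v x' hv hx'1 hx'2 hch hBx'
    have hBch : ∀ i, i < l2 → (T.entry (1, i) ≤ v + 1 ↔ i ≤ x') := by
      intro i hi
      constructor
      · intro h
        by_contra hc
        have := hB_mono x' i (by omega) hi
        omega
      · intro h
        rcases Nat.eq_or_lt_of_le h with h' | h'
        · subst h'; omega
        · have := hB_mono i x' (by omega) hx'2; omega
    have hcnt2 : cnt [l1, l2] T.entry 2 (v + 1) = x' + 1 := hcntB (v + 1) x' hx'2 hBch
    have honeup : ∀ i, i < l1 → T.entry (0, i) = v + 1 → i = x' + 1 := by
      intro i hi hv'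
      have hgt : x' < i := by
        by_contra hc
        have := (hch i hi).2 (by omega)
        omega
      by_contra hne
      have hx1l : x' + 1 < l1 := by omega
      have h1 := hA_mono (x' + 1) i (by omega) hi
      have h2 : ¬ T.entry (0, x' + 1) ≤ v := by
        intro hc
        have := (hch (x' + 1) hx1l).1 hc
        omega
      omega
    by_cases hup : x' + 1 < l1 ∧ T.entry (0, x' + 1) = v + 1
    · -- teetering point at v+1
      have hch' : ∀ i, i < l1 → (T.entry (0, i) ≤ v + 1 ↔ i ≤ x' + 1) := by
        intro i hi
        constructor
        · intro h
          rcases Nat.lt_or_ge v (T.entry (0, i)) with h' | h'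
          · have := honeup i hi (by omega); omega
          · have := (hch i hi).1 h'; omega
        · intro h
          rcases Nat.lt_or_ge i (x' + 1) with h' | h'
          · have := (hch i hi).2 (by omega); omega
          · have : i = x' + 1 := by omega
            subst this; omega
      have hcnt1 : cnt [l1, l2] T.entry 1 (v + 1) = x' + 2 := hcntA (v + 1) (x' + 1) hup.1 hch'
      apply hnoteet (v + 1) (by omega) (by omega)
      refine ⟨(appearsRow_one_iff l1 l2 T.entry (v + 1)).2 ⟨x' + 1, hup.1, hup.2⟩,
        (appearsRow_two_iff l1 l2 T.entry (v + 1)).2 ⟨x', hx'2, hBx'⟩, by omega⟩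
    · -- balance point at v+1
      have hch' : ∀ i, i < l1 → (T.entry (0, i) ≤ v + 1 ↔ i ≤ x') := by
        intro i hi
        constructor
        · intro h
          rcases Nat.lt_or_ge v (T.entry (0, i)) with h' | h'
          · have hi' := honeup i hi (by omega)
            subst hi'
            exact absurd ⟨by omega, by omega⟩ hup
          · exact (hch i hi).1 h'
        · intro h
          have := (hch i hi).2 h; omega
      have hcnt1 : cnt [l1, l2] T.entry 1 (v + 1) = x' + 1 := hcntA (v + 1) x' hx'1 hch'
      exact hfirst (v + 1) (by omega) (by omega) (by unfold isBalance; omega)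
  -- phase 1 of the slide
  have key1 : ∀ j : ℕ, j + 1 < jb →
      ∃ x' : ℕ, x' < l1 ∧ (∀ i, i < l1 → (T.entry (0, i) ≤ j + 1 ↔ i ≤ x')) ∧
        (∀ i, x' ≤ i → i < l2 → j + 1 < T.entry (1, i)) ∧
        iterSub [l1, l2] q 1 T.entry j = Pone T.entry x' := by
    intro j
    induction j with
    | zero =>
      intro hj
      refine ⟨0, hl1, ?_, ?_, Pone_base [l1, l2] q T.entry hA0⟩
      · intro i hi
        constructor
        · intro h
          by_contra hc
          have := hA_mono 0 i (by omega) hi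
          omega
        · intro h
          have : i = 0 := by omega
          subst this; omega
      · intro i _ hi
        have h1 := hAB i hi
        have h2 := entry0_pos T (show i < l1 by omega)
        omega
    | succ j ih =>
      intro hj
      obtain ⟨x', hx'1, hch, hBinv, hiter⟩ := ih (by omega)
      have hiter1 : iterSub [l1, l2] q 1 T.entry (j + 1)
          = substep [l1, l2] (cyc q 1 (j + 1)) (iterSub [l1, l2] q 1 T.entry j) := rfl
      have hcyc : cyc q 1 (j + 1) = j + 2 := by
        unfold cyc
        rw [show 1 - 1 + (j + 1) = j + 1 by omega, Nat.mod_eq_of_lt (by omega)]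
      have hb := bullet_Pone T hx'1 (l2 := l2)
      have hBne : T.entry (1, x') ≠ j + 2 := by
        intro hc
        have hx'2 : x' < l2 := by
          by_contra hc2
          have : T.entry (1, x') = 0 := T.zero_outside _ (by rw [inShape_pair]; omega)
          omega
        exact hnojump (j + 1) x' (by omega) hx'1 hx'2 hch hc
      have hinC_d : ¬ inC [l1, l2] (Pone T.entry x') (j + 2) ((1 : ℕ), x') := by
        rintro ⟨hs, hv, -⟩
        rw [inShape_pair] at hs
        have hx'2 : x' < l2 := by omega
        have : Pone T.entry x' (1, x') = T.entry (1, x') := by simp [Pone]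
        rw [this] at hv
        exact hBne hv
      by_cases hup : x' + 1 < l1 ∧ T.entry (0, x' + 1) = j + 2
      · -- slide right in row 1
        refine ⟨x' + 1, hup.1, ?_, ?_, ?_⟩
        · intro i hi
          constructor
          · intro h
            by_contra hc
            have h1 := hA_mono (x' + 1) i (by omega) hi
            omega
          · intro h
            rcases Nat.lt_or_ge i (x' + 1) with h' | h'
            · have := (hch i hi).2 (by omega); omega
            · have : i = x' + 1 := by omega
              subst this; omega
        · intro i hi1 hi2
          have h1 := hBinv i (by omega) hi2
          have h2 : T.entry (1, i) ≠ j + 2 := by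
            intro hc
            have hx'2 : x' < l2 := by omega
            have h3 := hBinv x' (le_refl x') hx'2
            rcases Nat.eq_or_lt_of_le hi1 with h' | h'
            · subst h'
              have := hAB (x' + 1) hi2
              omega
            · have := hB_mono x' i (by omega) hi2; omega
          omega
        · rw [hiter1, hcyc, hiter]
          have hmove : inC [l1, l2] (Pone T.entry x') (j + 2) ((0 : ℕ), x' + 1) := by
            refine ⟨by rw [inShape_pair]; omega, ?_, Or.inl ⟨by omega, ?_⟩⟩
            · have : Pone T.entry x' (0, x' + 1) = T.entry (0, x' + 1) := by
                simp [Pone]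
              rw [this]; exact hup.2
            · show isBullet [l1, l2] (Pone T.entry x') (0, x' + 1 - 1)
              rw [show x' + 1 - 1 = x' by omega]
              exact (hb ((0 : ℕ), x')).2 rfl
          rw [substep_move [l1, l2] (j + 2) (Pone T.entry x') ((0 : ℕ), x')
            ((0 : ℕ), x' + 1) ((1 : ℕ), x') (by omega) hb (Or.inl ⟨rfl, rfl⟩) hmove hinC_d]
          rw [← hup.2]
          exact Pone_step T.entry x'
      · -- nothing moves
        refine ⟨x', hx'1, ?_, ?_, ?_⟩
        · intro i hi
          constructor
          · intro h
            by_contra hc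
            rcases Nat.lt_or_ge (j + 1) (T.entry (0, i)) with h' | h'
            · have h2 : T.entry (0, i) = j + 2 := by omega
              have h3 : x' < i := by
                by_contra hc2
                have := (hch i hi).2 (by omega)
                omega
              by_cases h4 : i = x' + 1
              · subst h4; exact hup ⟨hi, h2⟩
              · have h5 : x' + 1 < l1 := by omega
                have h6 := hA_mono (x' + 1) i (by omega) hi
                have h7 : ¬ T.entry (0, x' + 1) ≤ j + 1 := by
                  intro hc3
                  have := (hch (x' + 1) h5).1 hc3
                  omega
                omega
            · have := (hch i hi).1 h'; omega
          · intro h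
            have := (hch i hi).2 h; omega
        · intro i hi1 hi2
          have h1 := hBinv i hi1 hi2
          have h2 : T.entry (1, i) ≠ j + 2 := by
            intro hc
            rcases Nat.eq_or_lt_of_le hi1 with h' | h'
            · subst h'; exact hBne hc
            · have hx'2 : x' < l2 := by omega
              have h3 := hBinv x' (le_refl x') hx'2
              have := hB_mono x' i (by omega) hi2
              omega
          omega
        · rw [hiter1, hcyc, hiter]
          rw [substep_id [l1, l2] (j + 2) (Pone T.entry x') ((0 : ℕ), x') hb ?hr hinC_d]
          rintro ⟨hs, hv, -⟩
          rw [inShape_pair] at hs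
          have hx1l : x' + 1 < l1 := by omega
          have : Pone T.entry x' (0, x' + 1) = T.entry (0, x' + 1) := by simp [Pone]
          rw [this] at hv
          exact hup ⟨hx1l, hv⟩
  -- the jump at value jb
  have hAx_iff' : ∀ i, i < l1 → (T.entry (0, i) ≤ jb - 1 ↔ i ≤ x) := by
    intro i hi
    have h1 := hAx_iff i hi
    have h2 := hAjb i hi
    omega
  obtain ⟨x', hx'1, hch0, hBinv0, hiter0⟩ := key1 (jb - 2) (by omega)
  have hre : jb - 2 + 1 = jb - 1 := by omega
  simp only [hre] at hch0 hBinv0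
  have hxx : x' = x := by
    have h1 : x ≤ x' := (hch0 x hxl1).1 ((hAx_iff' x hxl1).2 (le_refl x))
    have h2 : x' ≤ x := (hAx_iff' x' hx'1).1 ((hch0 x' hx'1).2 (le_refl x'))
    omega
  rw [hxx] at hiter0 hBinv0
  have hBinvx : ∀ i, x ≤ i → i < l2 → jb - 1 < T.entry (1, i) := hBinv0
  have hiterjump : iterSub [l1, l2] q 1 T.entry (jb - 1) = Ptwo T.entry x jb x := by
    have h1 : jb - 1 = (jb - 2) + 1 := by omega
    rw [h1]
    have hstep : iterSub [l1, l2] q 1 T.entry (jb - 2 + 1)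
        = substep [l1, l2] (cyc q 1 (jb - 2 + 1)) (iterSub [l1, l2] q 1 T.entry (jb - 2)) := rfl
    have hcyc : cyc q 1 (jb - 2 + 1) = jb := by
      unfold cyc
      rw [show 1 - 1 + (jb - 2 + 1) = jb - 1 by omega, Nat.mod_eq_of_lt (by omega)]
      omega
    rw [hstep, hcyc, hiter0]
    have hb := bullet_Pone T hxl1 (l2 := l2)
    have hmove : inC [l1, l2] (Pone T.entry x) jb ((1 : ℕ), x) := by
      refine ⟨by rw [inShape_pair]; omega, ?_, Or.inr ⟨by omega, ?_⟩⟩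
      · rw [Pone_eval1]; exact hBx
      · show isBullet [l1, l2] (Pone T.entry x) (1 - 1, x)
        exact (hb ((0 : ℕ), x)).2 rfl
    have hnot : ¬ inC [l1, l2] (Pone T.entry x) jb ((0 : ℕ), x + 1) := by
      rintro ⟨hs, hv, -⟩
      rw [inShape_pair] at hs
      have hx1l : x + 1 < l1 := by omega
      rw [Pone_eval0, if_neg (by omega)] at hv
      exact hAjb (x + 1) hx1l hv
    rw [substep_move [l1, l2] jb (Pone T.entry x) ((0 : ℕ), x) ((1 : ℕ), x) ((0 : ℕ), x + 1)
      (by omega) hb (Or.inr ⟨rfl, rfl⟩) hmove hnot]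
    exact Ptwo_init T.entry x jb
  -- phase 2 of the slide
  have key2 : ∀ j : ℕ, jb - 1 ≤ j → j < q →
      ∃ y : ℕ, x ≤ y ∧ y < l2 ∧ T.entry (1, y) ≤ j + 1 ∧
        (∀ i, y < i → i < l2 → j + 1 < T.entry (1, i)) ∧
        iterSub [l1, l2] q 1 T.entry j = Ptwo T.entry x jb y := by
    intro j hj1
    induction j, hj1 using Nat.le_induction with
    | base =>
      intro hq'
      refine ⟨x, le_refl x, hxl2, by omega, ?_, hiterjump⟩
      intro i hi1 hi2
      have h1 := hBinvx i (by omega) hi2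
      have h2 := hB_mono x i hi1 hi2
      omega
    | succ j hj ih =>
      intro hjq
      obtain ⟨y, hxy, hyl2, hBy, hBinv, hiter⟩ := ih (by omega)
      have hiter1 : iterSub [l1, l2] q 1 T.entry (j + 1)
          = substep [l1, l2] (cyc q 1 (j + 1)) (iterSub [l1, l2] q 1 T.entry j) := rfl
      have hcyc : cyc q 1 (j + 1) = j + 2 := by
        unfold cyc
        rw [show 1 - 1 + (j + 1) = j + 1 by omega, Nat.mod_eq_of_lt (by omega)]
      have hb := bullet_Ptwo T hll hxy hyl2 (show jb ≠ 0 by omega)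
      have hinCd : ¬ inC [l1, l2] (Ptwo T.entry x jb y) (j + 2) ((1 : ℕ) + 1, y) := by
        rintro ⟨hs, -, -⟩
        rw [show ((1 : ℕ) + 1, y) = ((2 : ℕ), y) by norm_num, inShape_pair] at hs
        omega
      by_cases hup : y + 1 < l2 ∧ T.entry (1, y + 1) = j + 2
      · -- slide left in row 2
        refine ⟨y + 1, by omega, hup.1, by omega, ?_, ?_⟩
        · intro i hi1 hi2
          have h1 := hBinv i (by omega) hi2
          have h2 := hB_mono (y + 1) i hi1 hi2
          omega
        · rw [hiter1, hcyc, hiter]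
          have hmove : inC [l1, l2] (Ptwo T.entry x jb y) (j + 2) ((1 : ℕ), y + 1) := by
            refine ⟨by rw [inShape_pair]; omega, ?_, Or.inl ⟨by omega, ?_⟩⟩
            · rw [Ptwo_eval1, if_neg (by omega)]; exact hup.2
            · show isBullet [l1, l2] (Ptwo T.entry x jb y) (1, y + 1 - 1)
              rw [show y + 1 - 1 = y by omega]
              exact (hb ((1 : ℕ), y)).2 rfl
          rw [substep_move [l1, l2] (j + 2) (Ptwo T.entry x jb y) ((1 : ℕ), y)
            ((1 : ℕ), y + 1) ((1 : ℕ) + 1, y) (by omega) hb (Or.inl ⟨rfl, rfl⟩) hmove hinCd]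
          rw [← hup.2]
          exact Ptwo_step T.entry x jb y hxy
      · -- nothing moves
        refine ⟨y, hxy, hyl2, by omega, ?_, ?_⟩
        · intro i hi1 hi2
          have h1 := hBinv i hi1 hi2
          have h2 : T.entry (1, i) ≠ j + 2 := by
            intro hc
            rcases Nat.eq_or_lt_of_le hi1 with h' | h'
            · have h'' : i = y + 1 := by omega
              rw [h''] at hc
              exact hup ⟨by omega, hc⟩
            · have h3 := hBinv (y + 1) (by omega) (by omega)
              have h4 := hB_mono (y + 1) i (by omega) hi2
              omega
          omega
        · rw [hiter1, hcyc, hiter]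
          apply substep_id [l1, l2] (j + 2) (Ptwo T.entry x jb y) ((1 : ℕ), y) hb ?_ hinCd
          rintro ⟨hs, hv, -⟩
          rw [inShape_pair] at hs
          have hy1 : y + 1 < l2 := by omega
          rw [Ptwo_eval1, if_neg (by omega)] at hv
          exact hup ⟨hy1, hv⟩
  -- the final state of the slide
  obtain ⟨Y, hxY, hYl2, hBY, hBinvQ, hiterQ⟩ := key2 (q - 1) (by omega) (by omega)
  have hre2 : q - 1 + 1 = q := by omega
  simp only [hre2] at hBinvQ
  have hYe : Y = l2 - 1 := by
    by_contra hc
    have h1 := hBinvQ (Y + 1) (by omega) (by omega)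
    have h2 := hBle (Y + 1) (by omega)
    omega
  subst hYe
  have hl2 : 0 < l2 := by omega
  have hG : ∀ c, gromote [l1, l2] q 1 T.entry c
      = if inShape [l1, l2] c ∧ Ptwo T.entry x jb (l2 - 1) c = 0 then 1
        else Ptwo T.entry x jb (l2 - 1) c := by
    intro c
    unfold gromote
    rw [hiterQ]
  -- evaluation of the final state
  have hG0 : ∀ i, i < l1 → Ptwo T.entry x jb (l2 - 1) (0, i)
      = if i ≤ x then (if i = x then jb else T.entry (0, i + 1)) else T.entry (0, i) := by
    intro i _
    exact Ptwo_eval0 T.entry x jb (l2 - 1) i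
  have hG1 : ∀ i, i < l2 → Ptwo T.entry x jb (l2 - 1) (1, i)
      = if x ≤ i then (if i = l2 - 1 then 0 else T.entry (1, i + 1)) else T.entry (1, i) := by
    intro i hi
    rw [Ptwo_eval1]
    by_cases h : x ≤ i
    · rw [if_pos ⟨h, by omega⟩, if_pos h]
    · rw [if_neg (by omega), if_neg h]
  have hG0ge : ∀ i, i < l1 → 2 ≤ Ptwo T.entry x jb (l2 - 1) (0, i) := by
    intro i hi
    rw [hG0 i hi]
    split_ifs with h1 h2
    · omega
    · have := hA_mono 0 (i + 1) (by omega) (by omega)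
      omega
    · have := hA_mono 0 i (by omega) hi
      omega
  have hG0le : ∀ i, i < l1 → Ptwo T.entry x jb (l2 - 1) (0, i) ≤ q := by
    intro i hi
    rw [hG0 i hi]
    split_ifs with h1 h2
    · omega
    · exact hAle (i + 1) (by omega)
    · exact hAle i hi
  have hG1ge : ∀ i, i < l2 → i ≠ l2 - 1 → 2 ≤ Ptwo T.entry x jb (l2 - 1) (1, i) := by
    intro i hi hne
    by_cases h1 : x ≤ i
    · rw [hG1 i hi, if_pos h1, if_neg hne]
      have h3 := hAB (i + 1) (by omega)
      have h4 := entry0_pos T (show i + 1 < l1 by omega)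
      omega
    · rw [hG1 i hi, if_neg h1]
      have h3 := hAB i hi
      have h4 := entry0_pos T (show i < l1 by omega)
      omega
  -- values of the promoted tableau
  have hK0 : ∀ i, i < l1 → kpromote [l1, l2] q T.entry (0, i)
      = Ptwo T.entry x jb (l2 - 1) (0, i) - 1 := by
    intro i hi
    have hge := hG0ge i hi
    have hsh : inShape [l1, l2] ((0 : ℕ), i) := by rw [inShape_pair]; omega
    have hnotz : ¬ (inShape [l1, l2] ((0 : ℕ), i) ∧ Ptwo T.entry x jb (l2 - 1) (0, i) = 0) := by
      rintro ⟨-, h0⟩; omega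
    have hnot1 : ¬ Ptwo T.entry x jb (l2 - 1) (0, i) = 1 := by omega
    unfold kpromote
    rw [if_pos hsh, hG ((0 : ℕ), i), if_neg hnotz, if_neg hnot1]
  have hK1 : ∀ i, i < l2 → i ≠ l2 - 1 → kpromote [l1, l2] q T.entry (1, i)
      = Ptwo T.entry x jb (l2 - 1) (1, i) - 1 := by
    intro i hi hne
    have hge := hG1ge i hi hne
    have hsh : inShape [l1, l2] ((1 : ℕ), i) := by rw [inShape_pair]; omega
    have hnotz : ¬ (inShape [l1, l2] ((1 : ℕ), i) ∧ Ptwo T.entry x jb (l2 - 1) (1, i) = 0) := by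
      rintro ⟨-, h0⟩; omega
    have hnot1 : ¬ Ptwo T.entry x jb (l2 - 1) (1, i) = 1 := by omega
    unfold kpromote
    rw [if_pos hsh, hG ((1 : ℕ), i), if_neg hnotz, if_neg hnot1]
  have hKend : kpromote [l1, l2] q T.entry (1, l2 - 1) = q := by
    have hsh : inShape [l1, l2] ((1 : ℕ), l2 - 1) := by rw [inShape_pair]; omega
    have h0 : Ptwo T.entry x jb (l2 - 1) (1, l2 - 1) = 0 := by
      rw [hG1 (l2 - 1) (by omega), if_pos (by omega), if_pos rfl]
    have hz : inShape [l1, l2] ((1 : ℕ), l2 - 1) ∧ Ptwo T.entry x jb (l2 - 1) (1, l2 - 1) = 0 :=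
      ⟨hsh, h0⟩
    unfold kpromote
    rw [if_pos hsh, hG ((1 : ℕ), l2 - 1), if_pos hz, if_pos rfl]
  refine ⟨part1, ?_, ?_⟩
  · -- middle letters
    intro m hm1 hmq
    by_cases hmx : m + 1 = jb
    · rw [if_pos hmx]
      ext r
      simp only [rowSetW, Set.mem_setOf_eq, Set.mem_singleton_iff]
      constructor
      · intro hr
        rcases appearsRow_only12 hr with h | h
        · exact h
        · exfalso
          subst h
          obtain ⟨i, hi, hKi⟩ := (appearsRow_two_iff l1 l2 _ m).1 hr
          by_cases hie : i = l2 - 1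
          · rw [hie, hKend] at hKi
            omega
          · rw [hK1 i hi hie] at hKi
            have hge := hG1ge i hi hie
            have hPt : Ptwo T.entry x jb (l2 - 1) (1, i) = jb := by omega
            rw [hG1 i hi] at hPt
            by_cases h1 : x ≤ i
            · rw [if_pos h1, if_neg hie] at hPt
              have := hB_mono x (i + 1) (by omega) (by omega)
              omega
            · rw [if_neg h1] at hPt
              have := hB_mono i x (by omega) hxl2
              omega
      · intro hr
        subst hr
        apply (appearsRow_one_iff l1 l2 _ m).2
        refine ⟨x, hxl1, ?_⟩
        rw [hK0 x hxl1, hG0 x hxl1, if_pos (le_refl x), if_pos rfl]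
        omega
    · rw [if_neg hmx]
      have hiff1 : appearsRow [l1, l2] (kpromote [l1, l2] q T.entry) 1 m ↔
          appearsRow [l1, l2] T.entry 1 (m + 1) := by
        rw [appearsRow_one_iff, appearsRow_one_iff]
        constructor
        · rintro ⟨i, hi, hKi⟩
          rw [hK0 i hi] at hKi
          have hge := hG0ge i hi
          have hPt : Ptwo T.entry x jb (l2 - 1) (0, i) = m + 1 := by omega
          rw [hG0 i hi] at hPt
          by_cases h1 : i ≤ x
          · by_cases h2 : i = x
            · rw [if_pos h1, if_pos h2] at hPt
              exact absurd hPt.symm hmx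
            · rw [if_pos h1, if_neg h2] at hPt
              exact ⟨i + 1, by omega, hPt⟩
          · rw [if_neg h1] at hPt
            exact ⟨i, hi, hPt⟩
        · rintro ⟨i, hi, hAi⟩
          have hi1 : 1 ≤ i := by
            by_contra hc
            have : i = 0 := by omega
            rw [this, hA0] at hAi
            omega
          by_cases hix : i ≤ x
          · refine ⟨i - 1, by omega, ?_⟩
            rw [hK0 (i - 1) (by omega), hG0 (i - 1) (by omega),
              if_pos (by omega : i - 1 ≤ x), if_neg (by omega : ¬ i - 1 = x),
              show i - 1 + 1 = i by omega, hAi]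
            omega
          · refine ⟨i, hi, ?_⟩
            rw [hK0 i hi, hG0 i hi, if_neg hix, hAi]
            omega
      have hiff2 : appearsRow [l1, l2] (kpromote [l1, l2] q T.entry) 2 m ↔
          appearsRow [l1, l2] T.entry 2 (m + 1) := by
        rw [appearsRow_two_iff, appearsRow_two_iff]
        constructor
        · rintro ⟨i, hi, hKi⟩
          by_cases hie : i = l2 - 1
          · rw [hie, hKend] at hKi
            omega
          · rw [hK1 i hi hie] at hKi
            have hge := hG1ge i hi hie
            have hPt : Ptwo T.entry x jb (l2 - 1) (1, i) = m + 1 := by omega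
            rw [hG1 i hi] at hPt
            by_cases h1 : x ≤ i
            · rw [if_pos h1, if_neg hie] at hPt
              exact ⟨i + 1, by omega, hPt⟩
            · rw [if_neg h1] at hPt
              exact ⟨i, hi, hPt⟩
        · rintro ⟨i, hi, hBi⟩
          have hix : i ≠ x := by
            intro hc
            rw [hc, hBx] at hBi
            omega
          rcases Nat.lt_or_ge i x with h | h
          · refine ⟨i, hi, ?_⟩
            rw [hK1 i hi (by omega), hG1 i hi, if_neg (by omega), hBi]
            omega
          · have hix' : x < i := by omega
            refine ⟨i - 1, by omega, ?_⟩
            rw [hK1 (i - 1) (by omega) (by omega), hG1 (i - 1) (by omega),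
              if_pos (by omega), if_neg (by omega), show i - 1 + 1 = i by omega, hBi]
            omega
      ext r
      simp only [rowSetW, Set.mem_setOf_eq]
      constructor
      · intro hr
        rcases appearsRow_only12 hr with h | h
        · subst h; exact hiff1.1 hr
        · subst h; exact hiff2.1 hr
      · intro hr
        rcases appearsRow_only12 hr with h | h
        · subst h; exact hiff1.2 hr
        · subst h; exact hiff2.2 hr
  · -- the last letter is {2}
    ext r
    simp only [rowSetW, Set.mem_setOf_eq, Set.mem_singleton_iff]
    constructor
    · intro hr
      rcases appearsRow_only12 hr with h | h
      · exfalso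
        subst h
        obtain ⟨i, hi, hKi⟩ := (appearsRow_one_iff l1 l2 _ q).1 hr
        rw [hK0 i hi] at hKi
        have := hG0le i hi
        have := hG0ge i hi
        omega
      · exact h
    · intro hr
      subst hr
      apply (appearsRow_two_iff l1 l2 _ q).2
      exact ⟨l2 - 1, by omega, hKend⟩
end

section
/- Let T be a two-row increasing tableau with lattice word w = w_1…w_q over subsets of {1,2}, with w_1 ≠ ∅, having first balance point j_b preceded by a teetering point, with j_t the first teetering point. Then the lattice word of the K-promotion of T is obtained from w by changing w_{j_t} from {1,2} to {1}, changing w_{j_b} from {2} to {1,2}, deleting the first letter, and appending {2} at the end. -/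
open Classical

namespace TwoRowAux

variable {l1 l2 q : ℕ} {T : IncTab [l1, l2] q}

lemma shape_iff (l1 l2 i j : ℕ) :
    inShape [l1, l2] (i, j) ↔ (i = 0 ∧ j < l1) ∨ (i = 1 ∧ j < l2) := by
  unfold inShape
  match i with
  | 0 => simp
  | 1 => simp
  | n + 2 => simp [List.getD]

lemma shape_of {i L : ℕ} (hL : [l1, l2].getD i 0 = L) {j : ℕ} (h : j < L) :
    inShape [l1, l2] (i, j) := by
  show j < [l1, l2].getD i 0
  rw [hL]; exact h

lemma lt_of_shape {i L : ℕ} (hL : [l1, l2].getD i 0 = L) {j : ℕ}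
    (h : inShape [l1, l2] (i, j)) : j < L := by
  rw [← hL]; exact h

lemma shape_mono {i j k : ℕ} (h : j ≤ k) (hk : inShape [l1, l2] (i, k)) :
    inShape [l1, l2] (i, j) := by
  rw [shape_iff] at *; omega

lemma row_lt (i : ℕ) {j k : ℕ} (h : j < k) (hk : inShape [l1, l2] (i, k)) :
    T.entry (i, j) < T.entry (i, k) := by
  induction k with
  | zero => omega
  | succ n ih =>
    rcases Nat.lt_succ_iff_lt_or_eq.mp h with h' | h'
    · exact lt_trans (ih h' (shape_mono (Nat.le_succ n) hk)) (T.row_strict i n hk)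
    · subst h'; exact T.row_strict i j hk

lemma cnt_eq_card (i L : ℕ) (hL : [l1, l2].getD i 0 = L) (v : ℕ) :
    cnt [l1, l2] T.entry (i + 1) v
      = ((Finset.range L).filter (fun j => T.entry (i, j) ≤ v)).card := by
  unfold cnt
  refine (Finset.card_bij (fun j _ => T.entry (i, j)) ?_ ?_ ?_).symm
  · intro j hj
    simp only [Finset.mem_filter, Finset.mem_range] at hj
    have hsh : inShape [l1, l2] (i, j) := shape_of hL hj.1
    simp only [Finset.mem_filter, Finset.mem_Icc]
    refine ⟨⟨T.entry_pos _ hsh, hj.2⟩, ?_⟩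
    exact ⟨Nat.le_add_left 1 i, j, by simpa using hsh, rfl⟩
  · intro j hj k hk hjk
    simp only [Finset.mem_filter, Finset.mem_range] at hj hk
    by_contra hne
    rcases Nat.lt_or_ge j k with h | h
    · have := row_lt (T := T) i h (shape_of hL hk.1); omega
    · have h' : k < j := by omega
      have := row_lt (T := T) i h' (shape_of hL hj.1); omega
  · intro u hu
    simp only [Finset.mem_filter, Finset.mem_Icc] at hu
    obtain ⟨⟨hu1, huv⟩, _, j, hsh, hval⟩ := hu
    have hsh' : inShape [l1, l2] (i, j) := by simpa using hsh
    have hval' : T.entry (i, j) = u := by simpa using hval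
    refine ⟨j, ?_, hval'⟩
    simp only [Finset.mem_filter, Finset.mem_range]
    exact ⟨lt_of_shape hL hsh', by omega⟩

lemma entry_le_iff (i L : ℕ) (hL : [l1, l2].getD i 0 = L) {v j : ℕ} (hj : j < L) :
    T.entry (i, j) ≤ v ↔ j < cnt [l1, l2] T.entry (i + 1) v := by
  rw [cnt_eq_card i L hL]
  constructor
  · intro h
    have hsub : Finset.range (j + 1) ⊆
        (Finset.range L).filter (fun j' => T.entry (i, j') ≤ v) := by
      intro j' hj'
      simp only [Finset.mem_range] at hj'
      simp only [Finset.mem_filter, Finset.mem_range]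
      refine ⟨by omega, ?_⟩
      rcases Nat.lt_or_ge j' j with h' | h'
      · exact le_of_lt (lt_of_lt_of_le (row_lt (T := T) i h' (shape_of hL hj)) h)
      · have hje : j' = j := by omega
        rw [hje]; exact h
    have := Finset.card_le_card hsub
    simpa using this
  · intro h
    by_contra hc
    push_neg at hc
    have hsub : (Finset.range L).filter (fun j' => T.entry (i, j') ≤ v) ⊆
        Finset.range j := by
      intro j' hj'
      simp only [Finset.mem_filter, Finset.mem_range] at hj'
      simp only [Finset.mem_range]
      by_contra hge
      push_neg at hge
      rcases Nat.lt_or_ge j j' with h' | h'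
      · have := row_lt (T := T) i h' (shape_of hL hj'.1); omega
      · have hje : j' = j := by omega
        rw [hje] at hj'; omega
    have := Finset.card_le_card hsub
    simp only [Finset.card_range] at this
    omega

lemma cnt_zero (lam : List ℕ) (f : Cell → ℕ) (r : ℕ) : cnt lam f r 0 = 0 := by
  unfold cnt; simp

lemma cnt_succ (lam : List ℕ) (f : Cell → ℕ) (r v : ℕ) :
    cnt lam f r (v + 1)
      = cnt lam f r v + (if appearsRow lam f r (v + 1) then 1 else 0) := by
  unfold cnt
  have h : Finset.Icc 1 (v + 1) = insert (v + 1) (Finset.Icc 1 v) := by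
    ext x; simp only [Finset.mem_Icc, Finset.mem_insert]; omega
  rw [h, Finset.filter_insert]
  split
  · rw [Finset.card_insert_of_notMem (by simp)]
  · simp

lemma cnt_mono (lam : List ℕ) (f : Cell → ℕ) (r : ℕ) {v w : ℕ} (h : v ≤ w) :
    cnt lam f r v ≤ cnt lam f r w :=
  Finset.card_le_card (Finset.filter_subset_filter _ (Finset.Icc_subset_Icc_right h))

lemma cnt_le_len (i L : ℕ) (hL : [l1, l2].getD i 0 = L) (v : ℕ) :
    cnt [l1, l2] T.entry (i + 1) v ≤ L := by
  rw [cnt_eq_card i L hL]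
  exact (Finset.card_filter_le _ _).trans (by simp)

lemma appears_succ_iff (i L : ℕ) (hL : [l1, l2].getD i 0 = L) (v : ℕ) :
    appearsRow [l1, l2] T.entry (i + 1) (v + 1)
      ↔ cnt [l1, l2] T.entry (i + 1) v < cnt [l1, l2] T.entry (i + 1) (v + 1) := by
  constructor
  · rintro ⟨-, j, hsh, hval⟩
    have hsh' : inShape [l1, l2] (i, j) := by simpa using hsh
    have hval' : T.entry (i, j) = v + 1 := by simpa using hval
    have hj : j < L := lt_of_shape hL hsh'
    have h1 := entry_le_iff (T := T) i L hL (v := v + 1) hj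
    have h2 := entry_le_iff (T := T) i L hL (v := v) hj
    omega
  · intro h
    have hle := cnt_le_len (T := T) i L hL (v + 1)
    set k := cnt [l1, l2] T.entry (i + 1) (v + 1) with hk
    have hj : k - 1 < L := by omega
    have h1 := entry_le_iff (T := T) i L hL (v := v + 1) hj
    have h2 := entry_le_iff (T := T) i L hL (v := v) hj
    have hval : T.entry (i, k - 1) = v + 1 := by omega
    exact ⟨by omega, k - 1, by simpa using shape_of hL hj, by simpa using hval⟩

lemma entry_eq_iff (i L : ℕ) (hL : [l1, l2].getD i 0 = L) {v j : ℕ}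
    (hv : 1 ≤ v) (hj : j < L) :
    T.entry (i, j) = v
      ↔ cnt [l1, l2] T.entry (i + 1) (v - 1) ≤ j ∧ j < cnt [l1, l2] T.entry (i + 1) v := by
  have h1 := entry_le_iff (T := T) i L hL (v := v) hj
  have h2 := entry_le_iff (T := T) i L hL (v := v - 1) hj
  omega

lemma appears_iff (i L : ℕ) (hL : [l1, l2].getD i 0 = L) {v : ℕ} (hv : 1 ≤ v) :
    appearsRow [l1, l2] T.entry (i + 1) v
      ↔ cnt [l1, l2] T.entry (i + 1) (v - 1) < cnt [l1, l2] T.entry (i + 1) v := by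
  obtain ⟨w, rfl⟩ : ∃ w, v = w + 1 := ⟨v - 1, by omega⟩
  simpa using appears_succ_iff (T := T) i L hL w

lemma b_le_a (hll : l2 ≤ l1) (v : ℕ) :
    cnt [l1, l2] T.entry 2 v ≤ cnt [l1, l2] T.entry 1 v := by
  have h2 : cnt [l1, l2] T.entry (1 + 1) v
      = ((Finset.range l2).filter (fun j => T.entry (1, j) ≤ v)).card :=
    cnt_eq_card 1 l2 rfl v
  have h1 : cnt [l1, l2] T.entry (0 + 1) v
      = ((Finset.range l1).filter (fun j => T.entry (0, j) ≤ v)).card :=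
    cnt_eq_card 0 l1 rfl v
  rw [h1, h2]
  apply Finset.card_le_card
  intro j hj
  simp only [Finset.mem_filter, Finset.mem_range] at *
  have hsh : inShape [l1, l2] (1, j) := shape_of rfl hj.1
  have hcol : T.entry (0, j) < T.entry (1, j) := by simpa using T.col_strict 0 j (by simpa using hsh)
  exact ⟨by omega, by omega⟩

lemma entry00 (hll : l2 ≤ l1) (hw1 : rowSetW [l1, l2] T.entry 1 ≠ (∅ : Set ℕ)) :
    T.entry (0, 0) = 1 := by
  have : ∃ r, appearsRow [l1, l2] T.entry r 1 := by
    by_contra hc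
    push_neg at hc
    exact hw1 (Set.eq_empty_iff_forall_notMem.mpr hc)
  obtain ⟨r, hr1, j, hsh, hval⟩ := this
  rw [shape_iff] at hsh
  rcases hsh with ⟨h0, hj⟩ | ⟨h1, hj⟩
  · rw [h0] at hval
    rcases Nat.eq_zero_or_pos j with rfl | hjp
    · exact hval
    · have := row_lt (T := T) 0 hjp (shape_of (l2 := l2) rfl hj)
      have := T.entry_pos (0, 0) (shape_of (l2 := l2) rfl (by omega : (0:ℕ) < l1))
      omega
  · rw [h1] at hval
    have hsh2 : inShape [l1, l2] (1, j) := shape_of rfl hj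
    have hcol : T.entry (0, j) < T.entry (1, j) := by
      simpa using T.col_strict 0 j (by simpa using hsh2)
    have := T.entry_pos (0, j) (shape_of (l2 := l2) rfl (by omega : j < l1))
    omega
noncomputable def CA {l1 l2 q : ℕ} (T : IncTab [l1, l2] q) : ℕ → ℕ :=
  cnt [l1, l2] T.entry 1

noncomputable def CB {l1 l2 q : ℕ} (T : IncTab [l1, l2] q) : ℕ → ℕ :=
  cnt [l1, l2] T.entry 2

lemma aLe {v j : ℕ} (hj : j < l1) : T.entry (0, j) ≤ v ↔ j < CA T v :=
  entry_le_iff 0 l1 rfl hj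

lemma bLe {v j : ℕ} (hj : j < l2) : T.entry (1, j) ≤ v ↔ j < CB T v :=
  entry_le_iff 1 l2 rfl hj

lemma aEq {v j : ℕ} (hv : 1 ≤ v) (hj : j < l1) :
    T.entry (0, j) = v ↔ CA T (v - 1) ≤ j ∧ j < CA T v :=
  entry_eq_iff 0 l1 rfl hv hj

lemma bEq {v j : ℕ} (hv : 1 ≤ v) (hj : j < l2) :
    T.entry (1, j) = v ↔ CB T (v - 1) ≤ j ∧ j < CB T v :=
  entry_eq_iff 1 l2 rfl hv hj

lemma aApp {v : ℕ} (hv : 1 ≤ v) :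
    appearsRow [l1, l2] T.entry 1 v ↔ CA T (v - 1) < CA T v :=
  appears_iff 0 l1 rfl hv

lemma bApp {v : ℕ} (hv : 1 ≤ v) :
    appearsRow [l1, l2] T.entry 2 v ↔ CB T (v - 1) < CB T v :=
  appears_iff 1 l2 rfl hv

lemma aLen (v : ℕ) : CA T v ≤ l1 := cnt_le_len 0 l1 rfl v
lemma bLen (v : ℕ) : CB T v ≤ l2 := cnt_le_len 1 l2 rfl v

lemma aMono {v w : ℕ} (h : v ≤ w) : CA T v ≤ CA T w := cnt_mono _ _ _ h
lemma bMono {v w : ℕ} (h : v ≤ w) : CB T v ≤ CB T w := cnt_mono _ _ _ h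

lemma aSucc (v : ℕ) : CA T (v + 1) ≤ CA T v + 1 := by
  have := cnt_succ [l1, l2] T.entry 1 v
  unfold CA; split at this <;> omega

lemma bSucc (v : ℕ) : CB T (v + 1) ≤ CB T v + 1 := by
  have := cnt_succ [l1, l2] T.entry 2 v
  unfold CB; split at this <;> omega

lemma aSucc_not {v : ℕ} (h : ¬ appearsRow [l1, l2] T.entry 1 (v + 1)) :
    CA T (v + 1) = CA T v := by
  have := cnt_succ [l1, l2] T.entry 1 v
  unfold CA; split at this
  · exact absurd (by assumption) h
  · omega

lemma bSucc_not {v : ℕ} (h : ¬ appearsRow [l1, l2] T.entry 2 (v + 1)) :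
    CB T (v + 1) = CB T v := by
  have := cnt_succ [l1, l2] T.entry 2 v
  unfold CB; split at this
  · exact absurd (by assumption) h
  · omega

lemma aSucc_app {v : ℕ} (h : appearsRow [l1, l2] T.entry 1 (v + 1)) :
    CA T (v + 1) = CA T v + 1 := by
  have h' := (aApp (T := T) (v := v + 1) (by omega)).mp h
  have := aSucc (T := T) v
  simp only [Nat.add_sub_cancel] at h'
  omega

lemma bSucc_app {v : ℕ} (h : appearsRow [l1, l2] T.entry 2 (v + 1)) :
    CB T (v + 1) = CB T v + 1 := by
  have h' := (bApp (T := T) (v := v + 1) (by omega)).mp h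
  have := bSucc (T := T) v
  simp only [Nat.add_sub_cancel] at h'
  omega

lemma mkApp1 {u k : ℕ} (hk : k < l1) (hval : T.entry (0, k) = u) :
    appearsRow [l1, l2] T.entry 1 u :=
  ⟨by omega, k, by simpa using shape_of (l2 := l2) (i := 0) rfl hk, by simpa using hval⟩

lemma mkApp2 {u k : ℕ} (hk : k < l2) (hval : T.entry (1, k) = u) :
    appearsRow [l1, l2] T.entry 2 u :=
  ⟨by omega, k, by simpa using shape_of (l1 := l1) (i := 1) rfl hk, by simpa using hval⟩

/-- The explicit state of the slide after processing values `2,…,v`. -/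
noncomputable def Sfun (f : Cell → ℕ) (jt jb : ℕ) (A B : ℕ → ℕ) (v : ℕ) : Cell → ℕ
  | (0, j) =>
      if j + 1 < A (min v (jb - 1)) then f (0, j + 1)
      else if j + 1 = A (min v (jb - 1)) then (if v < jb then 0 else jb)
      else f (0, j)
  | (1, j) =>
      if v < jt ∨ j + 1 < B jt then f (1, j)
      else if j + 1 < B v then f (1, j + 1)
      else if j + 1 = B v then 0
      else f (1, j)
  | c => f c

lemma Sfun_row0 (f : Cell → ℕ) (jt jb : ℕ) (A B : ℕ → ℕ) (v j : ℕ) :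
    Sfun f jt jb A B v (0, j) =
      if j + 1 < A (min v (jb - 1)) then f (0, j + 1)
      else if j + 1 = A (min v (jb - 1)) then (if v < jb then 0 else jb)
      else f (0, j) := rfl

lemma Sfun_row1 (f : Cell → ℕ) (jt jb : ℕ) (A B : ℕ → ℕ) (v j : ℕ) :
    Sfun f jt jb A B v (1, j) =
      if v < jt ∨ j + 1 < B jt then f (1, j)
      else if j + 1 < B v then f (1, j + 1)
      else if j + 1 = B v then 0
      else f (1, j) := rfl

lemma Sfun_hi (f : Cell → ℕ) (jt jb : ℕ) (A B : ℕ → ℕ) (v i j : ℕ) :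
    Sfun f jt jb A B v (i + 2, j) = f (i + 2, j) := rfl

lemma bullet_iff {v jt jb : ℕ} (hv1 : 1 ≤ v)
    (ha1 : 1 ≤ CA T 1) (hbjt : 1 ≤ CB T jt) (hjb2 : 2 ≤ jb) (hjtb : jt < jb)
    (c : Cell) :
    isBullet [l1, l2] (Sfun T.entry jt jb (CA T) (CB T) v) c ↔
      ((v < jb ∧ c = (0, CA T v - 1)) ∨ (jt ≤ v ∧ c = (1, CB T v - 1))) := by
  obtain ⟨i, j⟩ := c
  have hKmin : 1 ≤ min v (jb - 1) := by omega
  have hK1 : 1 ≤ CA T (min v (jb - 1)) := le_trans ha1 (aMono (by omega))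
  have hKl : CA T (min v (jb - 1)) ≤ l1 := aLen _
  match i with
  | 0 =>
    unfold isBullet
    rw [Sfun_row0]
    have hsh : inShape [l1, l2] ((0 : ℕ), j) ↔ j < l1 := by rw [shape_iff]; omega
    constructor
    · rintro ⟨hshj, hval⟩
      split_ifs at hval with h1 h2 h3
      · have : inShape [l1, l2] ((0 : ℕ), j + 1) := by rw [shape_iff]; omega
        have := T.entry_pos _ this; omega
      · have hmin : min v (jb - 1) = v := by omega
        rw [hmin] at h2
        exact Or.inl ⟨h3, by simp; omega⟩
      · omega
      · have := T.entry_pos _ hshj; omega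
    · rintro (⟨hvjb, hc⟩ | ⟨hjtv, hc⟩)
      · have hmin : min v (jb - 1) = v := by omega
        have hK1' : 1 ≤ CA T v := le_trans ha1 (aMono hv1)
        have hKl' : CA T v ≤ l1 := aLen _
        simp only [Prod.mk.injEq] at hc
        obtain ⟨-, rfl⟩ := hc
        rw [hmin]
        rw [if_neg (by omega), if_pos (by omega), if_pos hvjb]
        exact ⟨hsh.mpr (by omega), rfl⟩
      · simp only [Prod.mk.injEq] at hc
        omega
  | 1 =>
    unfold isBullet
    rw [Sfun_row1]
    have hsh : inShape [l1, l2] ((1 : ℕ), j) ↔ j < l2 := by rw [shape_iff]; omega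
    have hBv : jt ≤ v → 1 ≤ CB T v := fun h => le_trans hbjt (bMono h)
    have hBl : CB T v ≤ l2 := bLen _
    constructor
    · rintro ⟨hshj, hval⟩
      split_ifs at hval with h1 h2 h3
      · have := T.entry_pos _ hshj; omega
      · have : inShape [l1, l2] ((1 : ℕ), j + 1) := by
          rw [shape_iff]; right; exact ⟨rfl, by omega⟩
        have := T.entry_pos _ this; omega
      · push_neg at h1
        refine Or.inr ⟨by omega, by simp; omega⟩
      · have := T.entry_pos _ hshj; omega
    · rintro (⟨hvjb, hc⟩ | ⟨hjtv, hc⟩)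
      · simp only [Prod.mk.injEq] at hc; omega
      · simp only [Prod.mk.injEq] at hc
        obtain ⟨-, rfl⟩ := hc
        have h1 : ¬ (v < jt ∨ CB T v - 1 + 1 < CB T jt) := by
          have := bMono (T := T) hjtv; omega
        rw [if_neg h1, if_neg (by omega), if_pos (by omega)]
        exact ⟨hsh.mpr (by omega), rfl⟩
  | n + 2 =>
    unfold isBullet
    rw [Sfun_hi]
    have hsh : ¬ inShape [l1, l2] ((n + 2 : ℕ), j) := by rw [shape_iff]; omega
    constructor
    · rintro ⟨hshj, -⟩; exact absurd hshj hsh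
    · rintro (⟨-, hc⟩ | ⟨-, hc⟩) <;> simp only [Prod.mk.injEq] at hc <;> omega
lemma inC_iff {v jt jb : ℕ} (hv1 : 1 ≤ v)
    (ha1 : 1 ≤ CA T 1) (hbjt : 1 ≤ CB T jt) (hjb2 : 2 ≤ jb) (hjtb : jt < jb)
    (hjt2 : 2 ≤ jt)
    (hdom : ∀ m, 1 ≤ m → m < jb → CB T m < CA T m)
    (hnoteet : ∀ m, 1 ≤ m → m < jt →
      ¬ (appearsRow [l1, l2] T.entry 1 m ∧ appearsRow [l1, l2] T.entry 2 m ∧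
          CA T m = CB T m + 1))
    (hjt_r1 : appearsRow [l1, l2] T.entry 1 jt)
    (hjt_cnt : CA T jt = CB T jt + 1)
    (c : Cell) :
    inC [l1, l2] (Sfun T.entry jt jb (CA T) (CB T) v) (v + 1) c ↔
      ((appearsRow [l1, l2] T.entry 1 (v + 1) ∧ v < jb ∧ c = ((0 : ℕ), CA T v))
       ∨ (appearsRow [l1, l2] T.entry 2 (v + 1) ∧ jt ≤ v + 1 ∧ c = ((1 : ℕ), CB T v))) := by
  obtain ⟨i, j⟩ := c
  have hA1v : 1 ≤ CA T v := le_trans ha1 (aMono hv1)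
  have hblem := bullet_iff (T := T) hv1 ha1 hbjt hjb2 hjtb
  match i with
  | 0 =>
    unfold inC
    have hsh : inShape [l1, l2] ((0 : ℕ), j) ↔ j < l1 := by rw [shape_iff]; omega
    have hnb : ¬ ((1 : ℕ) ≤ (0 : ℕ) ∧
        isBullet [l1, l2] (Sfun T.entry jt jb (CA T) (CB T) v) ((0 : ℕ) - 1, j)) := by
      rintro ⟨h, -⟩; omega
    constructor
    · rintro ⟨hshj, hval, hadj | hadj⟩
      · obtain ⟨hj1, hbul⟩ := hadj
        rw [hblem] at hbul
        simp only [Prod.mk.injEq] at hbul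
        rcases hbul with ⟨hvjb, -, hje⟩ | ⟨-, h01, -⟩
        · -- j - 1 = CA T v - 1, j ≥ 1 so j = CA T v
          have hje' : j = CA T v := by omega
          subst hje'
          have hmin : min v (jb - 1) = v := by omega
          rw [Sfun_row0, hmin, if_neg (by omega), if_neg (by omega)] at hval
          refine Or.inl ⟨⟨by omega, CA T v, ?_, ?_⟩, hvjb, rfl⟩
          · simpa using shape_of (l2 := l2) (i := 0) rfl (hsh.mp hshj)
          · simpa using hval
        · omega
      · exact absurd hadj hnb
    · rintro (⟨happ, hvjb, hc⟩ | ⟨-, -, hc⟩)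
      · simp only [Prod.mk.injEq] at hc
        obtain ⟨-, rfl⟩ := hc
        have hstep : CA T (v + 1) = CA T v + 1 := aSucc_app happ
        have hjl : CA T v < l1 := by have := aLen (T := T) (v + 1); omega
        have hmin : min v (jb - 1) = v := by omega
        have hval : T.entry (0, CA T v) = v + 1 := by
          rw [aEq (by omega) hjl]; simp only [Nat.add_sub_cancel]; omega
        refine ⟨hsh.mpr hjl, ?_, Or.inl ⟨by omega, ?_⟩⟩
        · rw [Sfun_row0, hmin, if_neg (by omega), if_neg (by omega)]; exact hval
        · rw [hblem]
          exact Or.inl ⟨hvjb, by simp⟩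
      · simp only [Prod.mk.injEq] at hc; omega
  | 1 =>
    unfold inC
    have hsh : inShape [l1, l2] ((1 : ℕ), j) ↔ j < l2 := by rw [shape_iff]; omega
    constructor
    · rintro ⟨hshj, hval, hadj | hadj⟩
      · -- left neighbour bullet: jt ≤ v ∧ j = CB T v
        obtain ⟨hj1, hbul⟩ := hadj
        rw [hblem] at hbul
        simp only [Prod.mk.injEq] at hbul
        rcases hbul with ⟨-, h10, -⟩ | ⟨hjtv, -, hje⟩
        · omega
        · have hBv : 1 ≤ CB T v := le_trans hbjt (bMono hjtv)
          have hje' : j = CB T v := by omega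
          subst hje'
          have hBjtv : CB T jt ≤ CB T v := bMono hjtv
          rw [Sfun_row1, if_neg (by omega), if_neg (by omega), if_neg (by omega)] at hval
          refine Or.inr ⟨⟨by omega, CB T v, shape_of rfl (hsh.mp hshj), hval⟩,
            by omega, rfl⟩
      · obtain ⟨-, hbul⟩ := hadj
        rw [hblem] at hbul
        simp only [Prod.mk.injEq] at hbul
        rcases hbul with ⟨hvjb, -, hje⟩ | ⟨-, h01, -⟩
        · have hje' : j = CA T v - 1 := by omega
          have hj2 : j < l2 := hsh.mp hshj
          by_cases hvt : v < jt
          · rw [Sfun_row1, if_pos (Or.inl hvt)] at hval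
            have happ2 : appearsRow [l1, l2] T.entry 2 (v + 1) :=
              ⟨by omega, j, shape_of rfl hj2, hval⟩
            have hbe := (bEq (T := T) (v := v + 1) (by omega) hj2).mp hval
            simp only [Nat.add_sub_cancel] at hbe
            have hbs := bSucc (T := T) v
            have hjCB : j = CB T v := by omega
            by_cases hvt1 : v + 1 < jt
            · exfalso
              by_cases happ1 : appearsRow [l1, l2] T.entry 1 (v + 1)
              · have h1 := aSucc_app happ1
                exact hnoteet (v + 1) (by omega) hvt1 ⟨happ1, happ2, by omega⟩
              · have h1 := aSucc_not happ1
                have := hdom (v + 1) (by omega) (by omega)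
                omega
            · exact Or.inr ⟨happ2, by omega, by simp [hjCB]⟩
          · have hd := hdom v hv1 hvjb
            have hBjtv : CB T jt ≤ CB T v := bMono (by omega)
            rw [Sfun_row1, if_neg (by omega), if_neg (by omega), if_neg (by omega)] at hval
            rw [hje'] at hval
            have hjl : CA T v - 1 < l2 := by omega
            have hbe := (bEq (T := T) (v := v + 1) (by omega) hjl).mp hval
            simp only [Nat.add_sub_cancel] at hbe
            have hbs := bSucc (T := T) v
            have happ2 : appearsRow [l1, l2] T.entry 2 (v + 1) :=
              ⟨by omega, CA T v - 1, shape_of rfl hjl, hval⟩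
            exact Or.inr ⟨happ2, by omega, by simp; omega⟩
        · omega
    · rintro (⟨-, -, hc⟩ | ⟨happ2, hjtv1, hc⟩)
      · simp only [Prod.mk.injEq] at hc; omega
      · simp only [Prod.mk.injEq] at hc
        obtain ⟨-, rfl⟩ := hc
        have hstep : CB T (v + 1) = CB T v + 1 := bSucc_app happ2
        have hjl : CB T v < l2 := by have := bLen (T := T) (v + 1); omega
        have hval : T.entry (1, CB T v) = v + 1 := by
          rw [bEq (by omega) hjl]; simp only [Nat.add_sub_cancel]; omega
        refine ⟨hsh.mpr hjl, ?_, ?_⟩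
        · by_cases hvt : jt ≤ v
          · have hBjtv : CB T jt ≤ CB T v := bMono hvt
            rw [Sfun_row1, if_neg (by omega), if_neg (by omega), if_neg (by omega)]
            exact hval
          · rw [Sfun_row1, if_pos (Or.inl (by omega))]
            exact hval
        · by_cases hvt : jt ≤ v
          · refine Or.inl ⟨le_trans hbjt (bMono hvt), ?_⟩
            rw [hblem]
            exact Or.inr ⟨hvt, by simp⟩
          · have hjteq : jt = v + 1 := by omega
            have ha' : CA T (v + 1) = CA T v + 1 := by
              apply aSucc_app; rw [← hjteq]; exact hjt_r1
            have hcnt' : CA T (v + 1) = CB T (v + 1) + 1 := by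
              rw [← hjteq]; exact hjt_cnt
            refine Or.inr ⟨by omega, ?_⟩
            rw [hblem]
            refine Or.inl ⟨by omega, ?_⟩
            simp only [Prod.mk.injEq]
            exact ⟨trivial, by omega⟩
  | n + 2 =>
    unfold inC
    have hsh : ¬ inShape [l1, l2] ((n + 2 : ℕ), j) := by rw [shape_iff]; omega
    constructor
    · rintro ⟨hshj, -⟩; exact absurd hshj hsh
    · rintro (⟨-, -, hc⟩ | ⟨-, -, hc⟩) <;> simp only [Prod.mk.injEq] at hc <;> omega
lemma step_eq {v jt jb : ℕ} (hv1 : 1 ≤ v)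
    (ha1 : 1 ≤ CA T 1) (hbjt : 1 ≤ CB T jt) (hjb2 : 2 ≤ jb) (hjtb : jt < jb)
    (hjt2 : 2 ≤ jt)
    (hdom : ∀ m, 1 ≤ m → m < jb → CB T m < CA T m)
    (hnoteet : ∀ m, 1 ≤ m → m < jt →
      ¬ (appearsRow [l1, l2] T.entry 1 m ∧ appearsRow [l1, l2] T.entry 2 m ∧
          CA T m = CB T m + 1))
    (hjt_r1 : appearsRow [l1, l2] T.entry 1 jt)
    (hjt_r2 : appearsRow [l1, l2] T.entry 2 jt)
    (hjt_cnt : CA T jt = CB T jt + 1)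
    (hjb_row1 : ¬ appearsRow [l1, l2] T.entry 1 jb)
    (hjb_row2 : appearsRow [l1, l2] T.entry 2 jb)
    (hbal : CA T jb = CB T jb) :
    substep [l1, l2] (v + 1) (Sfun T.entry jt jb (CA T) (CB T) v)
      = Sfun T.entry jt jb (CA T) (CB T) (v + 1) := by
  have hin := inC_iff (T := T) hv1 ha1 hbjt hjb2 hjtb hjt2 hdom hnoteet hjt_r1 hjt_cnt
  have hbul := bullet_iff (T := T) hv1 ha1 hbjt hjb2 hjtb
  have hAv1 : 1 ≤ CA T v := le_trans ha1 (aMono hv1)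
  have hjbe : jb - 1 + 1 = jb := by omega
  have hAjb : CA T jb = CA T (jb - 1) := by
    have := aSucc_not (T := T) (v := jb - 1) (by rw [hjbe]; exact hjb_row1)
    rw [hjbe] at this; exact this
  have hBjb : CB T jb = CB T (jb - 1) + 1 := by
    have := bSucc_app (T := T) (v := jb - 1) (by rw [hjbe]; exact hjb_row2)
    rw [hjbe] at this; exact this
  have hin0 : ∀ k : ℕ, inC [l1, l2] (Sfun T.entry jt jb (CA T) (CB T) v) (v + 1) ((0 : ℕ), k)
      ↔ (appearsRow [l1, l2] T.entry 1 (v + 1) ∧ v < jb ∧ k = CA T v) := by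
    intro k
    rw [hin]
    constructor
    · rintro (⟨h1, h2, h3⟩ | ⟨-, -, h3⟩)
      · exact ⟨h1, h2, by simpa using h3⟩
      · simp at h3
    · rintro ⟨h1, h2, rfl⟩
      exact Or.inl ⟨h1, h2, rfl⟩
  have hin1 : ∀ k : ℕ, inC [l1, l2] (Sfun T.entry jt jb (CA T) (CB T) v) (v + 1) ((1 : ℕ), k)
      ↔ (appearsRow [l1, l2] T.entry 2 (v + 1) ∧ jt ≤ v + 1 ∧ k = CB T v) := by
    intro k
    rw [hin]
    constructor
    · rintro (⟨-, -, h3⟩ | ⟨h1, h2, h3⟩)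
      · simp at h3
      · exact ⟨h1, h2, by simpa using h3⟩
    · rintro ⟨h1, h2, rfl⟩
      exact Or.inr ⟨h1, h2, rfl⟩
  have hin2 : ∀ n k : ℕ,
      ¬ inC [l1, l2] (Sfun T.entry jt jb (CA T) (CB T) v) (v + 1) ((n + 2 : ℕ), k) := by
    intro n k h
    rw [hin] at h
    rcases h with ⟨-, -, h3⟩ | ⟨-, -, h3⟩ <;> simp at h3
  have hbul0 : ∀ k : ℕ, isBullet [l1, l2] (Sfun T.entry jt jb (CA T) (CB T) v) ((0 : ℕ), k)
      ↔ (v < jb ∧ k = CA T v - 1) := by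
    intro k
    rw [hbul]
    constructor
    · rintro (⟨h1, h2⟩ | ⟨-, h2⟩)
      · exact ⟨h1, by simpa using h2⟩
      · simp at h2
    · rintro ⟨h1, rfl⟩
      exact Or.inl ⟨h1, rfl⟩
  have hbul1 : ∀ k : ℕ, isBullet [l1, l2] (Sfun T.entry jt jb (CA T) (CB T) v) ((1 : ℕ), k)
      ↔ (jt ≤ v ∧ k = CB T v - 1) := by
    intro k
    rw [hbul]
    constructor
    · rintro (⟨-, h2⟩ | ⟨h1, h2⟩)
      · simp at h2
      · exact ⟨h1, by simpa using h2⟩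
    · rintro ⟨h1, rfl⟩
      exact Or.inr ⟨h1, rfl⟩
  have hbul2 : ∀ n k : ℕ,
      ¬ isBullet [l1, l2] (Sfun T.entry jt jb (CA T) (CB T) v) ((n + 2 : ℕ), k) := by
    intro n k h
    rw [hbul] at h
    rcases h with ⟨-, h2⟩ | ⟨-, h2⟩ <;> simp at h2
  funext c
  obtain ⟨i, j⟩ := c
  have hsub : substep [l1, l2] (v + 1) (Sfun T.entry jt jb (CA T) (CB T) v) (i, j)
      = if inC [l1, l2] (Sfun T.entry jt jb (CA T) (CB T) v) (v + 1) (i, j) then 0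
        else if isBullet [l1, l2] (Sfun T.entry jt jb (CA T) (CB T) v) (i, j) ∧
            (inC [l1, l2] (Sfun T.entry jt jb (CA T) (CB T) v) (v + 1) (i, j + 1) ∨
             inC [l1, l2] (Sfun T.entry jt jb (CA T) (CB T) v) (v + 1) (i + 1, j)) then v + 1
        else Sfun T.entry jt jb (CA T) (CB T) v (i, j) := rfl
  rw [hsub]
  match i with
  | 0 =>
    by_cases hvb : v < jb
    · have hminv : min v (jb - 1) = v := by omega
      have hK1 : CA T (min (v + 1) (jb - 1)) = CA T (v + 1) := by
        by_cases h : v + 1 ≤ jb - 1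
        · rw [min_eq_left h]
        · have hveq : v + 1 = jb := by omega
          rw [min_eq_right (by omega), hveq]
          exact hAjb.symm
      have hA'le : CA T (v + 1) ≤ CA T v + 1 := aSucc (T := T) v
      have hA'ge : CA T v ≤ CA T (v + 1) := aMono (by omega)
      rcases Nat.lt_trichotomy (j + 1) (CA T v) with hj | hj | hj
      · -- (i) j+1 < CA T v
        rw [if_neg (by rw [hin0]; rintro ⟨-, -, h⟩; omega),
          if_neg (by rintro ⟨hb, -⟩; rw [hbul0] at hb; omega),
          Sfun_row0, Sfun_row0, hminv, hK1, if_pos hj, if_pos (by omega)]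
      · -- (ii) the bullet cell j = CA T v - 1
        have hbj : isBullet [l1, l2] (Sfun T.entry jt jb (CA T) (CB T) v) (0, j) := by
          rw [hbul0]; exact ⟨hvb, by omega⟩
        rw [if_neg (by rw [hin0]; rintro ⟨-, -, h⟩; omega)]
        by_cases hR : appearsRow [l1, l2] T.entry 1 (v + 1)
        · have hA' : CA T (v + 1) = CA T v + 1 := aSucc_app hR
          rw [if_pos ⟨hbj, Or.inl (by rw [hin0]; exact ⟨hR, hvb, by omega⟩)⟩]
          have hjl : CA T v < l1 := by have := aLen (T := T) (v + 1); omega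
          rw [Sfun_row0, hK1, if_pos (by omega)]
          have hE : T.entry (0, j + 1) = v + 1 := by
            rw [aEq (by omega) (by omega)]
            simp only [Nat.add_sub_cancel]
            omega
          omega
        · by_cases hD : appearsRow [l1, l2] T.entry 2 (v + 1) ∧ jt ≤ v + 1 ∧
              CA T v - 1 = CB T v
          · -- merge step, v + 1 = jb
            have hB' : CB T (v + 1) = CB T v + 1 := bSucc_app hD.1
            have hA' : CA T (v + 1) = CA T v := aSucc_not hR
            have hveq : v + 1 = jb := by
              by_contra hne
              have := hdom (v + 1) (by omega) (by omega)
              omega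
            rw [if_pos ⟨hbj, Or.inr (by rw [hin1]; exact ⟨hD.1, hD.2.1, by omega⟩)⟩]
            rw [Sfun_row0, hK1, if_neg (by omega), if_pos (by omega), if_neg (by omega)]
            omega
          · have hA' : CA T (v + 1) = CA T v := aSucc_not hR
            have hvnb : v + 1 < jb := by
              by_contra hne
              have hveq : v + 1 = jb := by omega
              apply hD
              have hjbr2' : appearsRow [l1, l2] T.entry 2 (v + 1) := by
                rw [hveq]; exact hjb_row2
              have hBv : CB T (v + 1) = CB T v + 1 := bSucc_app hjbr2'
              refine ⟨hjbr2', by omega, ?_⟩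
              rw [hveq] at hBv hA'
              omega
            rw [if_neg]
            · rw [Sfun_row0, Sfun_row0, hminv, hK1, if_neg (by omega), if_pos (by omega),
                if_pos hvb, if_neg (by omega), if_pos (by omega), if_pos hvnb]
            · rintro ⟨-, hadj | hadj⟩
              · rw [hin0] at hadj
                exact hR hadj.1
              · rw [hin1] at hadj
                exact hD ⟨hadj.1, hadj.2.1, by omega⟩
      · -- (iii)+(iv) j ≥ CA T v
        have hnb : ¬ isBullet [l1, l2] (Sfun T.entry jt jb (CA T) (CB T) v) (0, j) := by
          rw [hbul0]; rintro ⟨-, h⟩; omega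
        rcases Nat.eq_or_lt_of_le (by omega : CA T v ≤ j) with hj' | hj'
        · by_cases hR : appearsRow [l1, l2] T.entry 1 (v + 1)
          · have hA' : CA T (v + 1) = CA T v + 1 := aSucc_app hR
            have hvnb : v + 1 ≠ jb := by rintro rfl; exact hjb_row1 hR
            rw [if_pos (by rw [hin0]; exact ⟨hR, hvb, by omega⟩)]
            rw [Sfun_row0, hK1, if_neg (by omega), if_pos (by omega), if_pos (by omega)]
          · have hA' : CA T (v + 1) = CA T v := aSucc_not hR
            rw [if_neg (by rw [hin0]; rintro ⟨h1, -, -⟩; exact hR h1),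
              if_neg (by rintro ⟨hb, -⟩; exact hnb hb),
              Sfun_row0, Sfun_row0, hminv, hK1,
              if_neg (by omega), if_neg (by omega), if_neg (by omega), if_neg (by omega)]
        · rw [if_neg (by rw [hin0]; rintro ⟨-, -, h⟩; omega),
            if_neg (by rintro ⟨hb, -⟩; exact hnb hb),
            Sfun_row0, Sfun_row0, hminv, hK1,
            if_neg (by omega), if_neg (by omega), if_neg (by omega), if_neg (by omega)]
    · -- frozen row-0 phase : jb ≤ v
      have hmins : min (v + 1) (jb - 1) = jb - 1 := by omega
      have hminv : min v (jb - 1) = jb - 1 := by omega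
      rw [if_neg (by rw [hin0]; rintro ⟨-, h, -⟩; omega),
        if_neg (by rintro ⟨hb, -⟩; rw [hbul0] at hb; omega),
        Sfun_row0, Sfun_row0, hminv, hmins]
      split_ifs with h1 h2 h3 h4 <;> first | rfl | omega
  | 1 =>
    rcases Nat.lt_trichotomy (v + 1) jt with hvt1 | hvt2 | hvt3
    · -- v + 1 < jt : row 1 untouched
      rw [if_neg (by rw [hin1]; rintro ⟨-, h, -⟩; omega),
        if_neg (by rintro ⟨hb, -⟩; rw [hbul1] at hb; omega),
        Sfun_row1, Sfun_row1, if_pos (Or.inl (by omega : v < jt)),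
        if_pos (Or.inl (by omega : v + 1 < jt))]
    · -- v + 1 = jt : the teetering step
      have happ2' : appearsRow [l1, l2] T.entry 2 (v + 1) := by rw [hvt2]; exact hjt_r2
      have hB'v1 : CB T (v + 1) = CB T v + 1 := bSucc_app happ2'
      have hBjt2 : CB T jt = CB T v + 1 := by rw [← hvt2]; exact hB'v1
      by_cases hjB : j = CB T v
      · rw [if_pos (by rw [hin1]; exact ⟨happ2', by omega, hjB⟩), Sfun_row1,
          if_neg (by omega), if_neg (by omega), if_pos (by omega)]
      · rw [if_neg (by rw [hin1]; rintro ⟨-, -, h⟩; exact hjB h),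
          if_neg (by rintro ⟨hb, -⟩; rw [hbul1] at hb; omega),
          Sfun_row1, Sfun_row1, if_pos (Or.inl (by omega : v < jt))]
        rcases Nat.lt_or_ge j (CB T v) with h | h
        · rw [if_pos (Or.inr (by omega : j + 1 < CB T jt))]
        · rw [if_neg (by omega), if_neg (by omega), if_neg (by omega)]
    · -- jt ≤ v : active row-1 phase
      have hvt3' : jt ≤ v := by omega
      have hBjtv : CB T jt ≤ CB T v := bMono hvt3'
      have hBv1 : 1 ≤ CB T v := le_trans hbjt hBjtv
      by_cases happ2 : appearsRow [l1, l2] T.entry 2 (v + 1)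
      · have hB' : CB T (v + 1) = CB T v + 1 := bSucc_app happ2
        by_cases hjB : j = CB T v
        · rw [if_pos (by rw [hin1]; exact ⟨happ2, by omega, hjB⟩), Sfun_row1,
            if_neg (by omega), if_neg (by omega), if_pos (by omega)]
        · by_cases hjBm : j = CB T v - 1
          · rw [if_neg (by rw [hin1]; rintro ⟨-, -, h⟩; exact hjB h),
              if_pos ⟨by rw [hbul1]; exact ⟨hvt3', hjBm⟩,
                Or.inl (by rw [hin1]; exact ⟨happ2, by omega, by omega⟩)⟩,
              Sfun_row1, if_neg (by omega), if_pos (by omega)]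
            have hjl : CB T v < l2 := by have := bLen (T := T) (v + 1); omega
            have hE : T.entry (1, j + 1) = v + 1 := by
              rw [(show j + 1 = CB T v by omega), bEq (by omega) hjl]
              simp only [Nat.add_sub_cancel]
              omega
            omega
          · rw [if_neg (by rw [hin1]; rintro ⟨-, -, h⟩; exact hjB h),
              if_neg (by rintro ⟨hb, -⟩; rw [hbul1] at hb; exact hjBm hb.2),
              Sfun_row1, Sfun_row1]
            rcases Nat.lt_or_ge (j + 1) (CB T jt) with h | h
            · rw [if_pos (Or.inr h), if_pos (Or.inr h)]
            · have hnc : ¬ (v < jt ∨ j + 1 < CB T jt) := by omega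
              have hnc1 : ¬ (v + 1 < jt ∨ j + 1 < CB T jt) := by omega
              rcases Nat.lt_or_ge (j + 1) (CB T v) with h2 | h2
              · rw [if_neg hnc, if_pos h2, if_neg hnc1, if_pos (by omega)]
              · rw [if_neg hnc, if_neg (by omega), if_neg (by omega), if_neg hnc1,
                  if_neg (by omega), if_neg (by omega)]
      · have hB' : CB T (v + 1) = CB T v := bSucc_not happ2
        by_cases hjBm : j = CB T v - 1
        · rw [if_neg (by rw [hin1]; rintro ⟨h, -, -⟩; exact happ2 h), if_neg,
            Sfun_row1, Sfun_row1, if_neg (by omega), if_neg (by omega), if_pos (by omega),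
            if_neg (by omega), if_neg (by omega), if_pos (by omega)]
          rintro ⟨-, hadj | hadj⟩
          · rw [hin1] at hadj; exact happ2 hadj.1
          · exact hin2 0 j hadj
        · rw [if_neg (by rw [hin1]; rintro ⟨h, -, -⟩; exact happ2 h),
            if_neg (by rintro ⟨hb, -⟩; rw [hbul1] at hb; exact hjBm hb.2),
            Sfun_row1, Sfun_row1]
          rcases Nat.lt_or_ge (j + 1) (CB T jt) with h | h
          · rw [if_pos (Or.inr h), if_pos (Or.inr h)]
          · have hnc : ¬ (v < jt ∨ j + 1 < CB T jt) := by omega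
            have hnc1 : ¬ (v + 1 < jt ∨ j + 1 < CB T jt) := by omega
            rcases Nat.lt_or_ge (j + 1) (CB T v) with h2 | h2
            · rw [if_neg hnc, if_pos h2, if_neg hnc1, if_pos (by omega)]
            · by_cases h3 : j + 1 = CB T v
              · rw [if_neg hnc, if_neg (by omega), if_pos h3, if_neg hnc1,
                  if_neg (by omega), if_pos (by omega)]
              · rw [if_neg hnc, if_neg (by omega), if_neg h3, if_neg hnc1,
                  if_neg (by omega), if_neg (by omega)]
  | n + 2 =>
    rw [if_neg (hin2 n j), if_neg (by rintro ⟨hb, -⟩; exact hbul2 n j hb),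
      Sfun_hi, Sfun_hi]
lemma iter_eq {jt jb : ℕ} (hE : T.entry (0, 0) = 1) (ha1e : CA T 1 = 1)
    (hbjt : 1 ≤ CB T jt) (hjb2 : 2 ≤ jb) (hjtb : jt < jb)
    (hjt2 : 2 ≤ jt)
    (hdom : ∀ m, 1 ≤ m → m < jb → CB T m < CA T m)
    (hnoteet : ∀ m, 1 ≤ m → m < jt →
      ¬ (appearsRow [l1, l2] T.entry 1 m ∧ appearsRow [l1, l2] T.entry 2 m ∧
          CA T m = CB T m + 1))
    (hjt_r1 : appearsRow [l1, l2] T.entry 1 jt)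
    (hjt_r2 : appearsRow [l1, l2] T.entry 2 jt)
    (hjt_cnt : CA T jt = CB T jt + 1)
    (hjb_row1 : ¬ appearsRow [l1, l2] T.entry 1 jb)
    (hjb_row2 : appearsRow [l1, l2] T.entry 2 jb)
    (hbal : CA T jb = CB T jb) :
    ∀ v, 1 ≤ v → v ≤ q →
      iterSub [l1, l2] q 1 T.entry (v - 1) = Sfun T.entry jt jb (CA T) (CB T) v := by
  intro v
  induction v with
  | zero => omega
  | succ w ih =>
    intro _ hwq
    rcases Nat.eq_zero_or_pos w with rfl | hw
    · -- base case v = 1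
      funext c
      obtain ⟨i, j⟩ := c
      show (if (i, j) = ((0 : ℕ), (0 : ℕ)) ∧ T.entry (i, j) = 1 then 0 else T.entry (i, j))
          = Sfun T.entry jt jb (CA T) (CB T) 1 (i, j)
      match i with
      | 0 =>
        rw [Sfun_row0, min_eq_left (by omega : 1 ≤ jb - 1), ha1e]
        rcases Nat.eq_zero_or_pos j with rfl | hj
        · rw [if_pos ⟨rfl, hE⟩, if_neg (by omega), if_pos rfl, if_pos (by omega)]
        · rw [if_neg (by simp; omega), if_neg (by omega), if_neg (by omega)]
      | 1 =>
        rw [Sfun_row1, if_pos (Or.inl (by omega : 1 < jt)), if_neg (by simp)]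
      | n + 2 =>
        rw [Sfun_hi, if_neg (by simp)]
    · obtain ⟨u, rfl⟩ : ∃ u, w = u + 1 := ⟨w - 1, by omega⟩
      have hiter : iterSub [l1, l2] q 1 T.entry (u + 1 + 1 - 1)
          = substep [l1, l2] (cyc q 1 (u + 1)) (iterSub [l1, l2] q 1 T.entry u) := rfl
      have hcyc : cyc q 1 (u + 1) = u + 2 := by
        show (1 - 1 + (u + 1)) % q + 1 = u + 2
        rw [(show 1 - 1 + (u + 1) = u + 1 by omega), Nat.mod_eq_of_lt (by omega)]
      have hih := ih (by omega) (by omega)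
      simp only [Nat.add_sub_cancel] at hih
      rw [hiter, hcyc, hih]
      exact step_eq (by omega) (by omega) hbjt hjb2 hjtb hjt2 hdom hnoteet
        hjt_r1 hjt_r2 hjt_cnt hjb_row1 hjb_row2 hbal
lemma Srow0_mem {jt jb : ℕ} (hjb2 : 2 ≤ jb) (hjbq : jb ≤ q) (ha1e : CA T 1 = 1)
    {u : ℕ} (hu : 2 ≤ u) :
    (∃ j, j < l1 ∧ Sfun T.entry jt jb (CA T) (CB T) q (0, j) = u)
      ↔ (u = jb ∨ appearsRow [l1, l2] T.entry 1 u) := by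
  have hminq : min q (jb - 1) = jb - 1 := by omega
  have hKge : 1 ≤ CA T (jb - 1) := by
    have := aMono (T := T) (show 1 ≤ jb - 1 by omega); omega
  have hKle : CA T (jb - 1) ≤ l1 := aLen _
  have hqjb : ¬ q < jb := by omega
  constructor
  · rintro ⟨j, hj, hval⟩
    rw [Sfun_row0, hminq] at hval
    rcases Nat.lt_trichotomy (j + 1) (CA T (jb - 1)) with h1 | h1 | h1
    · rw [if_pos h1] at hval
      exact Or.inr (mkApp1 (by omega) hval)
    · rw [if_neg (by omega), if_pos h1, if_neg hqjb] at hval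
      exact Or.inl hval.symm
    · rw [if_neg (by omega), if_neg (by omega)] at hval
      exact Or.inr (mkApp1 hj hval)
  · rintro (heq | happ)
    · refine ⟨CA T (jb - 1) - 1, by omega, ?_⟩
      rw [Sfun_row0, hminq, if_neg (by omega), if_pos (by omega), if_neg hqjb]
      exact heq.symm
    · obtain ⟨-, j0, hsh, hval⟩ := happ
      have hj0 : j0 < l1 := by rw [shape_iff] at hsh; omega
      have hval' : T.entry (0, j0) = u := hval
      have hae := (aEq (T := T) (v := u) (by omega) hj0).mp hval'
      by_cases hcase : j0 < CA T (jb - 1)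
      · have hj01 : 1 ≤ j0 := by
          have := aMono (T := T) (show 1 ≤ u - 1 by omega)
          omega
        refine ⟨j0 - 1, by omega, ?_⟩
        rw [Sfun_row0, hminq, if_pos (by omega), (show j0 - 1 + 1 = j0 by omega)]
        exact hval'
      · refine ⟨j0, hj0, ?_⟩
        rw [Sfun_row0, hminq, if_neg (by omega), if_neg (by omega)]
        exact hval'

lemma Srow1_mem {jt jb : ℕ} (hjb2 : 2 ≤ jb) (hjbq : jb ≤ q) (hjtb : jt < jb)
    (hjt2 : 2 ≤ jt) (hbjt : 1 ≤ CB T jt)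
    (hjt_r2 : appearsRow [l1, l2] T.entry 2 jt)
    {u : ℕ} (hu : 2 ≤ u) (huq : u ≤ q) :
    (∃ j, j < l2 ∧ Sfun T.entry jt jb (CA T) (CB T) q (1, j) = u)
      ↔ (appearsRow [l1, l2] T.entry 2 u ∧ u ≠ jt) := by
  have hqjt : ¬ q < jt := by omega
  have hjte : jt - 1 + 1 = jt := by omega
  have hCBjt : CB T jt = CB T (jt - 1) + 1 := by
    have := bSucc_app (T := T) (v := jt - 1) (by rw [hjte]; exact hjt_r2)
    rw [hjte] at this; exact this
  have hBjtq : CB T jt ≤ CB T q := bMono (by omega)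
  have hBql : CB T q ≤ l2 := bLen _
  constructor
  · rintro ⟨j, hj, hval⟩
    rw [Sfun_row1] at hval
    by_cases hc1 : j + 1 < CB T jt
    · rw [if_pos (Or.inr hc1)] at hval
      refine ⟨mkApp2 hj hval, ?_⟩
      rintro rfl
      have := (bEq (T := T) (v := u) (by omega) hj).mp hval
      omega
    · rcases Nat.lt_trichotomy (j + 1) (CB T q) with h2 | h2 | h2
      · rw [if_neg (by omega), if_pos h2] at hval
        refine ⟨mkApp2 (by omega) hval, ?_⟩
        rintro rfl
        have := (bEq (T := T) (v := u) (by omega) (by omega : j + 1 < l2)).mp hval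
        omega
      · rw [if_neg (by omega), if_neg (by omega), if_pos h2] at hval
        omega
      · rw [if_neg (by omega), if_neg (by omega), if_neg (by omega)] at hval
        refine ⟨mkApp2 hj hval, ?_⟩
        rintro rfl
        have := (bEq (T := T) (v := u) (by omega) hj).mp hval
        omega
  · rintro ⟨happ, hne⟩
    obtain ⟨-, j0, hsh, hval⟩ := happ
    have hj0 : j0 < l2 := by rw [shape_iff] at hsh; omega
    have hval' : T.entry (1, j0) = u := hval
    have hbe := (bEq (T := T) (v := u) (by omega) hj0).mp hval'
    rcases Nat.lt_or_ge u jt with hcase | hcase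
    · have : CB T u ≤ CB T (jt - 1) := bMono (by omega)
      exact ⟨j0, hj0, by rw [Sfun_row1, if_pos (Or.inr (by omega))]; exact hval'⟩
    · have hjge : CB T jt ≤ CB T (u - 1) := bMono (by omega)
      have hj01 : 1 ≤ j0 := by omega
      have hBuq : CB T u ≤ CB T q := bMono huq
      refine ⟨j0 - 1, by omega, ?_⟩
      rw [Sfun_row1, if_neg (by omega), if_pos (by omega),
        (show j0 - 1 + 1 = j0 by omega)]
      exact hval'

lemma Szero {jt jb : ℕ} (hjb2 : 2 ≤ jb) (hjbq : jb ≤ q) (hjtb : jt < jb)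
    (hjt2 : 2 ≤ jt) (hbjt : 1 ≤ CB T jt) :
    ∀ i j : ℕ, inShape [l1, l2] (i, j) →
      (Sfun T.entry jt jb (CA T) (CB T) q (i, j) = 0 ↔ (i = 1 ∧ j + 1 = CB T q)) := by
  have hminq : min q (jb - 1) = jb - 1 := by omega
  have hKle : CA T (jb - 1) ≤ l1 := aLen _
  have hqjb : ¬ q < jb := by omega
  have hBjtq : CB T jt ≤ CB T q := bMono (by omega)
  have hBql : CB T q ≤ l2 := bLen _
  intro i j hsh
  match i with
  | 0 =>
    rw [shape_iff] at hsh
    rw [Sfun_row0, hminq]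
    rcases Nat.lt_trichotomy (j + 1) (CA T (jb - 1)) with h1 | h1 | h1
    · rw [if_pos h1]
      have := T.entry_pos ((0 : ℕ), j + 1) (shape_of (l2 := l2) (i := 0) (L := l1) rfl (by omega))
      constructor <;> intro h <;> omega
    · rw [if_neg (by omega), if_pos h1, if_neg hqjb]
      constructor <;> intro h <;> omega
    · rw [if_neg (by omega), if_neg (by omega)]
      have := T.entry_pos ((0 : ℕ), j) (shape_of (l2 := l2) (i := 0) (L := l1) rfl (by omega))
      constructor <;> intro h <;> omega
  | 1 =>
    rw [shape_iff] at hsh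
    rw [Sfun_row1]
    by_cases hc1 : j + 1 < CB T jt
    · rw [if_pos (Or.inr hc1)]
      have := T.entry_pos ((1 : ℕ), j) (shape_of (l1 := l1) (i := 1) (L := l2) rfl (by omega))
      constructor <;> intro h <;> omega
    · rcases Nat.lt_trichotomy (j + 1) (CB T q) with h2 | h2 | h2
      · rw [if_neg (by omega), if_pos h2]
        have := T.entry_pos ((1 : ℕ), j + 1) (shape_of (l1 := l1) (i := 1) (L := l2) rfl (by omega))
        constructor <;> intro h <;> omega
      · rw [if_neg (by omega), if_neg (by omega), if_pos h2]
        constructor <;> intro h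
        · exact ⟨rfl, by omega⟩
        · rfl
      · rw [if_neg (by omega), if_neg (by omega), if_neg (by omega)]
        have := T.entry_pos ((1 : ℕ), j) (shape_of (l1 := l1) (i := 1) (L := l2) rfl (by omega))
        constructor <;> intro h <;> omega
  | n + 2 =>
    rw [shape_iff] at hsh
    omega

lemma Sle {jt jb : ℕ} (hjb2 : 2 ≤ jb) (hjbq : jb ≤ q) (hjtb : jt < jb)
    (hjt2 : 2 ≤ jt) (hbjt : 1 ≤ CB T jt) :
    ∀ i j : ℕ, inShape [l1, l2] (i, j) →
      Sfun T.entry jt jb (CA T) (CB T) q (i, j) ≤ q := by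
  have hminq : min q (jb - 1) = jb - 1 := by omega
  have hKle : CA T (jb - 1) ≤ l1 := aLen _
  have hqjb : ¬ q < jb := by omega
  have hBjtq : CB T jt ≤ CB T q := bMono (by omega)
  have hBql : CB T q ≤ l2 := bLen _
  intro i j hsh
  match i with
  | 0 =>
    rw [shape_iff] at hsh
    rw [Sfun_row0, hminq]
    rcases Nat.lt_trichotomy (j + 1) (CA T (jb - 1)) with h1 | h1 | h1
    · rw [if_pos h1]
      exact T.entry_le _ (shape_of (l2 := l2) (i := 0) (L := l1) rfl (by omega))
    · rw [if_neg (by omega), if_pos h1, if_neg hqjb]; omega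
    · rw [if_neg (by omega), if_neg (by omega)]
      exact T.entry_le _ (shape_of (l2 := l2) (i := 0) (L := l1) rfl (by omega))
  | 1 =>
    rw [shape_iff] at hsh
    rw [Sfun_row1]
    by_cases hc1 : j + 1 < CB T jt
    · rw [if_pos (Or.inr hc1)]
      exact T.entry_le _ (shape_of (l1 := l1) (i := 1) (L := l2) rfl (by omega))
    · rcases Nat.lt_trichotomy (j + 1) (CB T q) with h2 | h2 | h2
      · rw [if_neg (by omega), if_pos h2]
        exact T.entry_le _ (shape_of (l1 := l1) (i := 1) (L := l2) rfl (by omega))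
      · rw [if_neg (by omega), if_neg (by omega), if_pos h2]; omega
      · rw [if_neg (by omega), if_neg (by omega), if_neg (by omega)]
        exact T.entry_le _ (shape_of (l1 := l1) (i := 1) (L := l2) rfl (by omega))
  | n + 2 =>
    rw [shape_iff] at hsh
    omega

lemma Sone {jt jb : ℕ} (hjb2 : 2 ≤ jb) (hjbq : jb ≤ q) (hjtb : jt < jb)
    (hjt2 : 2 ≤ jt) (hbjt : 1 ≤ CB T jt) (ha1e : CA T 1 = 1) :
    ∀ i j : ℕ, inShape [l1, l2] (i, j) →
      Sfun T.entry jt jb (CA T) (CB T) q (i, j) ≠ 1 := by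
  have hminq : min q (jb - 1) = jb - 1 := by omega
  have hKge : 1 ≤ CA T (jb - 1) := by
    have := aMono (T := T) (show 1 ≤ jb - 1 by omega); omega
  have hKle : CA T (jb - 1) ≤ l1 := aLen _
  have hqjb : ¬ q < jb := by omega
  have hBjtq : CB T jt ≤ CB T q := bMono (by omega)
  have hBql : CB T q ≤ l2 := bLen _
  have hCB1 : CB T 1 = 0 := by
    have h0 : CB T 0 = 0 := cnt_zero _ _ _
    have h1 : CB T 1 ≤ CB T 0 + 1 := bSucc (T := T) 0
    by_contra hc
    have hb1 : CB T 1 = 1 := by omega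
    have hval10 : T.entry (1, 0) = 1 := (bEq (T := T) (v := 1) (by omega) (show 0 < l2 by
      have := bLen (T := T) 1; omega)).mpr ⟨by simp [h0], by omega⟩
    have hc0' : T.entry (0, 0) < T.entry (1, 0) :=
      T.col_strict 0 0 (shape_of (l1 := l1) (i := 1) (L := l2) rfl (show 0 < l2 by
        have := bLen (T := T) 1; omega))
    have he0 := T.entry_pos ((0 : ℕ), 0) (shape_of (l2 := l2) (i := 0) (L := l1) rfl (show 0 < l1 by
      have := aLen (T := T) 1
      have := aMono (T := T) (show 1 ≤ jb - 1 by omega)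
      omega))
    omega
  intro i j hsh
  match i with
  | 0 =>
    rw [shape_iff] at hsh
    rw [Sfun_row0, hminq]
    rcases Nat.lt_trichotomy (j + 1) (CA T (jb - 1)) with h1 | h1 | h1
    · rw [if_pos h1]
      intro h
      have := (aEq (T := T) (v := 1) (by omega) (by omega : j + 1 < l1)).mp h
      omega
    · rw [if_neg (by omega), if_pos h1, if_neg hqjb]; omega
    · rw [if_neg (by omega), if_neg (by omega)]
      intro h
      have := (aEq (T := T) (v := 1) (by omega) (by omega : j < l1)).mp h
      omega
  | 1 =>
    rw [shape_iff] at hsh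
    rw [Sfun_row1]
    by_cases hc1 : j + 1 < CB T jt
    · rw [if_pos (Or.inr hc1)]
      intro h
      have := (bEq (T := T) (v := 1) (by omega) (by omega : j < l2)).mp h
      omega
    · rcases Nat.lt_trichotomy (j + 1) (CB T q) with h2 | h2 | h2
      · rw [if_neg (by omega), if_pos h2]
        intro h
        have := (bEq (T := T) (v := 1) (by omega) (by omega : j + 1 < l2)).mp h
        omega
      · rw [if_neg (by omega), if_neg (by omega), if_pos h2]; omega
      · rw [if_neg (by omega), if_neg (by omega), if_neg (by omega)]
        intro h
        have := (bEq (T := T) (v := 1) (by omega) (by omega : j < l2)).mp h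
        omega
  | n + 2 =>
    rw [shape_iff] at hsh
    omega

lemma KPval {jt jb : ℕ}
    (hIt : iterSub [l1, l2] q 1 T.entry (q - 1) = Sfun T.entry jt jb (CA T) (CB T) q)
    (hone : ∀ c : Cell, inShape [l1, l2] c → Sfun T.entry jt jb (CA T) (CB T) q c ≠ 1) :
    ∀ c : Cell, kpromote [l1, l2] q T.entry c
      = if inShape [l1, l2] c then
          (if Sfun T.entry jt jb (CA T) (CB T) q c = 0 then q
           else Sfun T.entry jt jb (CA T) (CB T) q c - 1)
        else 0 := by
  intro c
  unfold kpromote gromote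
  rw [hIt]
  by_cases hsh : inShape [l1, l2] c
  · rw [if_pos hsh, if_pos hsh]
    by_cases hz : Sfun T.entry jt jb (CA T) (CB T) q c = 0
    · have hG : (if inShape [l1, l2] c ∧ Sfun T.entry jt jb (CA T) (CB T) q c = 0 then 1
          else Sfun T.entry jt jb (CA T) (CB T) q c) = 1 := if_pos ⟨hsh, hz⟩
      rw [hG, if_pos rfl, if_pos hz]
    · have hG : (if inShape [l1, l2] c ∧ Sfun T.entry jt jb (CA T) (CB T) q c = 0 then 1
          else Sfun T.entry jt jb (CA T) (CB T) q c)
          = Sfun T.entry jt jb (CA T) (CB T) q c :=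
        if_neg (by rintro ⟨-, h⟩; exact hz h)
      rw [hG, if_neg (hone c hsh), if_neg hz]
  · rw [if_neg hsh, if_neg hsh]
lemma mem_rowSetW {lam : List ℕ} {f : Cell → ℕ} {v r : ℕ} :
    r ∈ rowSetW lam f v ↔ appearsRow lam f r v := Iff.rfl

lemma row_opts {f : Cell → ℕ} {r v : ℕ} (h : appearsRow [l1, l2] f r v) :
    r = 1 ∨ r = 2 := by
  obtain ⟨hr1, j, hsh, -⟩ := h
  rw [shape_iff] at hsh
  omega

lemma mkAppG1 {g : Cell → ℕ} {m k : ℕ} (hk : k < l1) (hval : g (0, k) = m) :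
    appearsRow [l1, l2] g 1 m :=
  ⟨by omega, k, by simpa using shape_of (l2 := l2) (i := 0) (L := l1) rfl hk,
    by simpa using hval⟩

lemma mkAppG2 {g : Cell → ℕ} {m k : ℕ} (hk : k < l2) (hval : g (1, k) = m) :
    appearsRow [l1, l2] g 2 m :=
  ⟨by omega, k, by simpa using shape_of (l1 := l1) (i := 1) (L := l2) rfl hk,
    by simpa using hval⟩

lemma appExtract1 {g : Cell → ℕ} {m : ℕ} (h : appearsRow [l1, l2] g 1 m) :
    ∃ j, j < l1 ∧ g (0, j) = m := by
  obtain ⟨-, j, hsh, hval⟩ := h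
  rw [shape_iff] at hsh
  exact ⟨j, by omega, hval⟩

lemma appExtract2 {g : Cell → ℕ} {m : ℕ} (h : appearsRow [l1, l2] g 2 m) :
    ∃ j, j < l2 ∧ g (1, j) = m := by
  obtain ⟨-, j, hsh, hval⟩ := h
  rw [shape_iff] at hsh
  exact ⟨j, by omega, hval⟩

end TwoRowAux


/-- two-row K-promotion, case of a first balance point `j_b` preceded by
a first teetering point `j_t`: the new lattice word changes `w_{j_t}` from `{1,2}` to
`{1}`, changes `w_{j_b}` from `{2}` to `{1,2}`, deletes the first letter, and appends
`{2}`. -/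
theorem two_row_Kpromotion_balance_with_teeter
    (l1 l2 q : ℕ) (hll : l2 ≤ l1) (T : IncTab [l1, l2] q)
    (hw1 : rowSetW [l1, l2] T.entry 1 ≠ (∅ : Set ℕ))
    (jb jt : ℕ) (hjb1 : 1 ≤ jb) (hjbq : jb ≤ q)
    (hbal : isBalance [l1, l2] T.entry jb)
    (hfirstb : ∀ m, 1 ≤ m → m < jb → ¬ isBalance [l1, l2] T.entry m)
    (hjt1 : 1 ≤ jt) (hjtb : jt < jb)
    (hteet : isTeeter [l1, l2] T.entry jt)
    (hfirstt : ∀ m, 1 ≤ m → m < jt → ¬ isTeeter [l1, l2] T.entry m) :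
    rowSetW [l1, l2] T.entry jt = ({1, 2} : Set ℕ) ∧
    rowSetW [l1, l2] T.entry jb = ({2} : Set ℕ) ∧
    (∀ m, 1 ≤ m → m < q →
      rowSetW [l1, l2] (kpromote [l1, l2] q T.entry) m =
        (if m + 1 = jt then ({1} : Set ℕ)
         else if m + 1 = jb then ({1, 2} : Set ℕ)
         else rowSetW [l1, l2] T.entry (m + 1))) ∧
    rowSetW [l1, l2] (kpromote [l1, l2] q T.entry) q = ({2} : Set ℕ) := by
  obtain ⟨hjt_r1, hjt_r2, hjt_cnt0⟩ := hteet
  have hjt_cnt : TwoRowAux.CA T jt = TwoRowAux.CB T jt + 1 := hjt_cnt0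
  have hbalC : TwoRowAux.CA T jb = TwoRowAux.CB T jb := hbal
  have hE : T.entry (0, 0) = 1 := TwoRowAux.entry00 hll hw1
  have hsh00 : inShape [l1, l2] ((0 : ℕ), (0 : ℕ)) := by
    by_contra h
    have := T.zero_outside _ h
    omega
  have hl1 : 0 < l1 := by rw [TwoRowAux.shape_iff] at hsh00; omega
  have hCA0 : TwoRowAux.CA T 0 = 0 := TwoRowAux.cnt_zero _ _ _
  have hCB0 : TwoRowAux.CB T 0 = 0 := TwoRowAux.cnt_zero _ _ _
  have ha1e : TwoRowAux.CA T 1 = 1 := by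
    have h1 : TwoRowAux.CA T 1 ≤ TwoRowAux.CA T 0 + 1 := TwoRowAux.aSucc (T := T) 0
    have h2 := (TwoRowAux.aLe (T := T) (v := 1) (j := 0) hl1).mp (by omega)
    omega
  have hbjt1 : 1 ≤ TwoRowAux.CB T jt := by
    have := (TwoRowAux.bApp (T := T) hjt1).mp hjt_r2
    omega
  have hjt2 : 2 ≤ jt := by
    by_contra h
    have hjteq : jt = 1 := by omega
    rw [hjteq] at hjt_cnt hbjt1
    have h1 : TwoRowAux.CA T 1 ≤ TwoRowAux.CA T 0 + 1 := TwoRowAux.aSucc (T := T) 0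
    omega
  have hjb2 : 2 ≤ jb := by omega
  have hdomC : ∀ m, 1 ≤ m → m < jb → TwoRowAux.CB T m < TwoRowAux.CA T m := by
    intro m h1 h2
    have hle : TwoRowAux.CB T m ≤ TwoRowAux.CA T m := TwoRowAux.b_le_a (T := T) hll m
    rcases Nat.lt_or_ge (TwoRowAux.CB T m) (TwoRowAux.CA T m) with h | h
    · exact h
    · exact absurd ((by omega : TwoRowAux.CA T m = TwoRowAux.CB T m)) (hfirstb m h1 h2)
  have hnoteetC : ∀ m, 1 ≤ m → m < jt →
      ¬ (appearsRow [l1, l2] T.entry 1 m ∧ appearsRow [l1, l2] T.entry 2 m ∧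
          TwoRowAux.CA T m = TwoRowAux.CB T m + 1) := by
    intro m h1 h2 h
    exact hfirstt m h1 h2 ⟨h.1, h.2.1, h.2.2⟩
  have hjbe : jb - 1 + 1 = jb := by omega
  have hjb_row1 : ¬ appearsRow [l1, l2] T.entry 1 jb := by
    intro h
    have hA := (TwoRowAux.aApp (T := T) (by omega : 1 ≤ jb)).mp h
    have hB := TwoRowAux.bSucc (T := T) (jb - 1)
    rw [hjbe] at hB
    have hd := hdomC (jb - 1) (by omega) (by omega)
    omega
  have hjb_row2 : appearsRow [l1, l2] T.entry 2 jb := by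
    by_contra h
    have hB := TwoRowAux.bSucc_not (T := T) (v := jb - 1) (by rw [hjbe]; exact h)
    have hA := TwoRowAux.aSucc_not (T := T) (v := jb - 1) (by rw [hjbe]; exact hjb_row1)
    rw [hjbe] at hB hA
    have hd := hdomC (jb - 1) (by omega) (by omega)
    omega
  have hIter := TwoRowAux.iter_eq (T := T) hE ha1e hbjt1 hjb2 hjtb hjt2 hdomC hnoteetC
    hjt_r1 hjt_r2 hjt_cnt hjb_row1 hjb_row2 hbalC q (by omega) le_rfl
  have honeF := TwoRowAux.Sone (T := T) (jt := jt) hjb2 hjbq hjtb hjt2 hbjt1 ha1e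
  have hKP := TwoRowAux.KPval (T := T) hIter (fun c hc => by
    obtain ⟨i, j⟩ := c
    exact honeF i j hc)
  have hzero := TwoRowAux.Szero (T := T) (jt := jt) hjb2 hjbq hjtb hjt2 hbjt1
  have hSle := TwoRowAux.Sle (T := T) (jt := jt) hjb2 hjbq hjtb hjt2 hbjt1
  have hCBq1 : 1 ≤ TwoRowAux.CB T q := le_trans hbjt1 (TwoRowAux.bMono (by omega))
  have hCBql : TwoRowAux.CB T q ≤ l2 := TwoRowAux.bLen _
  have hKProw1 : ∀ m, 1 ≤ m → m < q →
      (appearsRow [l1, l2] (kpromote [l1, l2] q T.entry) 1 m ↔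
        (m + 1 = jb ∨ appearsRow [l1, l2] T.entry 1 (m + 1))) := by
    intro m hm1 hmq
    constructor
    · intro h
      obtain ⟨j, hj, hval⟩ := TwoRowAux.appExtract1 h
      rw [hKP (0, j),
        if_pos (TwoRowAux.shape_of (l2 := l2) (i := 0) (L := l1) rfl hj)] at hval
      have hz : ¬ TwoRowAux.Sfun T.entry jt jb (TwoRowAux.CA T) (TwoRowAux.CB T) q (0, j)
          = 0 := by
        rw [hzero 0 j (TwoRowAux.shape_of (l2 := l2) (i := 0) (L := l1) rfl hj)]
        omega
      rw [if_neg hz] at hval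
      exact (TwoRowAux.Srow0_mem (T := T) (jt := jt) hjb2 hjbq ha1e
        (by omega : 2 ≤ m + 1)).mp ⟨j, hj, by omega⟩
    · intro h
      obtain ⟨j, hj, hS⟩ := (TwoRowAux.Srow0_mem (T := T) (jt := jt) hjb2 hjbq ha1e
        (by omega : 2 ≤ m + 1)).mpr h
      refine TwoRowAux.mkAppG1 hj ?_
      rw [hKP (0, j), if_pos (TwoRowAux.shape_of (l2 := l2) (i := 0) (L := l1) rfl hj),
        if_neg (by omega)]
      omega
  have hKProw2 : ∀ m, 1 ≤ m → m < q →
      (appearsRow [l1, l2] (kpromote [l1, l2] q T.entry) 2 m ↔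
        (appearsRow [l1, l2] T.entry 2 (m + 1) ∧ m + 1 ≠ jt)) := by
    intro m hm1 hmq
    constructor
    · intro h
      obtain ⟨j, hj, hval⟩ := TwoRowAux.appExtract2 h
      rw [hKP (1, j),
        if_pos (TwoRowAux.shape_of (l1 := l1) (i := 1) (L := l2) rfl hj)] at hval
      by_cases hz : TwoRowAux.Sfun T.entry jt jb (TwoRowAux.CA T) (TwoRowAux.CB T) q (1, j) = 0
      · rw [if_pos hz] at hval; omega
      · rw [if_neg hz] at hval
        exact (TwoRowAux.Srow1_mem (T := T) hjb2 hjbq hjtb hjt2 hbjt1 hjt_r2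
          (by omega : 2 ≤ m + 1) (by omega)).mp ⟨j, hj, by omega⟩
    · intro h
      obtain ⟨j, hj, hS⟩ := (TwoRowAux.Srow1_mem (T := T) hjb2 hjbq hjtb hjt2 hbjt1 hjt_r2
        (by omega : 2 ≤ m + 1) (by omega)).mpr h
      refine TwoRowAux.mkAppG2 hj ?_
      rw [hKP (1, j), if_pos (TwoRowAux.shape_of (l1 := l1) (i := 1) (L := l2) rfl hj),
        if_neg (by omega)]
      omega
  refine ⟨?_, ?_, ?_, ?_⟩
  · ext r
    rw [TwoRowAux.mem_rowSetW]
    simp only [Set.mem_insert_iff, Set.mem_singleton_iff]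
    constructor
    · intro h; exact TwoRowAux.row_opts h
    · rintro (rfl | rfl)
      · exact hjt_r1
      · exact hjt_r2
  · ext r
    rw [TwoRowAux.mem_rowSetW]
    simp only [Set.mem_singleton_iff]
    constructor
    · intro h
      rcases TwoRowAux.row_opts h with rfl | rfl
      · exact absurd h hjb_row1
      · rfl
    · rintro rfl; exact hjb_row2
  · intro m hm1 hmq
    by_cases hmt : m + 1 = jt
    · rw [if_pos hmt]
      ext r
      rw [TwoRowAux.mem_rowSetW]
      simp only [Set.mem_singleton_iff]
      constructor
      · intro h
        rcases TwoRowAux.row_opts h with rfl | rfl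
        · rfl
        · exact absurd hmt ((hKProw2 m hm1 hmq).mp h).2
      · rintro rfl
        exact (hKProw1 m hm1 hmq).mpr (Or.inr (by rw [hmt]; exact hjt_r1))
    · by_cases hmb : m + 1 = jb
      · rw [if_neg hmt, if_pos hmb]
        ext r
        rw [TwoRowAux.mem_rowSetW]
        simp only [Set.mem_insert_iff, Set.mem_singleton_iff]
        constructor
        · intro h; exact TwoRowAux.row_opts h
        · rintro (rfl | rfl)
          · exact (hKProw1 m hm1 hmq).mpr (Or.inl hmb)
          · exact (hKProw2 m hm1 hmq).mpr ⟨by rw [hmb]; exact hjb_row2, by omega⟩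
      · rw [if_neg hmt, if_neg hmb]
        ext r
        rw [TwoRowAux.mem_rowSetW, TwoRowAux.mem_rowSetW]
        constructor
        · intro h
          rcases TwoRowAux.row_opts h with rfl | rfl
          · rcases (hKProw1 m hm1 hmq).mp h with h' | h'
            · exact absurd h' hmb
            · exact h'
          · exact ((hKProw2 m hm1 hmq).mp h).1
        · intro h
          rcases TwoRowAux.row_opts h with rfl | rfl
          · exact (hKProw1 m hm1 hmq).mpr (Or.inr h)
          · exact (hKProw2 m hm1 hmq).mpr ⟨h, hmt⟩
  · ext r
    rw [TwoRowAux.mem_rowSetW]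
    simp only [Set.mem_singleton_iff]
    constructor
    · intro h
      rcases TwoRowAux.row_opts h with rfl | rfl
      · exfalso
        obtain ⟨j, hj, hval⟩ := TwoRowAux.appExtract1 h
        rw [hKP (0, j),
          if_pos (TwoRowAux.shape_of (l2 := l2) (i := 0) (L := l1) rfl hj)] at hval
        have hz : ¬ TwoRowAux.Sfun T.entry jt jb (TwoRowAux.CA T) (TwoRowAux.CB T) q (0, j)
            = 0 := by
          rw [hzero 0 j (TwoRowAux.shape_of (l2 := l2) (i := 0) (L := l1) rfl hj)]
          omega
        rw [if_neg hz] at hval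
        have := hSle 0 j (TwoRowAux.shape_of (l2 := l2) (i := 0) (L := l1) rfl hj)
        omega
      · rfl
    · rintro rfl
      refine TwoRowAux.mkAppG2 (show TwoRowAux.CB T q - 1 < l2 by omega) ?_
      rw [hKP (1, TwoRowAux.CB T q - 1),
        if_pos (TwoRowAux.shape_of (l1 := l1) (i := 1) (L := l2) rfl (by omega)),
        if_pos (by rw [hzero 1 (TwoRowAux.CB T q - 1)
          (TwoRowAux.shape_of (l1 := l1) (i := 1) (L := l2) rfl (by omega))]; omega)]
end
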